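/- arXiv:2503.01023 — 6 statements merged into one kernel-verified Lean document; each statement's English description precedes it below -/
import Mathlib

section
/- For every integer n ≥ 2, the number A(n) of n-noncrossing trees satisfies A(n) = Σ_{j=2}^{n} A_1(n+2−j)·A(j−1), where A_1(m) is the number of m-noncrossing trees in which vertex 1 has degree 1; moreover A(1) = 1. -/
/-- The noncrossing condition for a graph on the vertex set `ZMod n`
(vertex `j ∈ {1,…,n}` of the paper corresponds to `j - 1 : ZMod n`):
no two edges `{a,b}` and `{c,d}` satisfy `a < c < b < d`. -/
def Noncrossing {n : ℕ} (G : SimpleGraph (ZMod n)) : Prop :=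
  ∀ a b c d : ZMod n, G.Adj a b → G.Adj c d →
    ¬(a.val < c.val ∧ c.val < b.val ∧ b.val < d.val)

/-- An `n`-noncrossing tree: a tree on `n` vertices, drawn on the circle, with no crossing edges. -/
def IsNCTree {n : ℕ} (G : SimpleGraph (ZMod n)) : Prop :=
  G.IsTree ∧ Noncrossing G

/-- `A n` is the number of `n`-noncrossing trees. -/
noncomputable def A (n : ℕ) : ℕ :=
  Nat.card {G : SimpleGraph (ZMod n) // IsNCTree G}

/-- `A₁ n` is the number of `n`-noncrossing trees where vertex `1`
(i.e. `0 : ZMod n`) has degree `1`. -/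
noncomputable def A₁ (n : ℕ) : ℕ :=
  Nat.card {G : SimpleGraph (ZMod n) // IsNCTree G ∧ (G.neighborSet 0).ncard = 1}


set_option linter.unusedSectionVars false
set_option linter.unusedVariables false

namespace NCT

def Up {n : ℕ} (t : ℕ) (a : ZMod n) : Prop := a = 0 ∨ t ≤ a.val

def SplitAt {n : ℕ} (G : SimpleGraph (ZMod n)) (t : ℕ) : Prop :=
  (∀ a b : ZMod n, G.Adj a b → (a.val < t ∧ b.val < t) ∨ (Up t a ∧ Up t b)) ∧
  (∃! w : ZMod n, G.Adj 0 w ∧ t ≤ w.val)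

def lo (n t : ℕ) (x : ZMod t) : ZMod n := (x.val : ZMod n)
def upm (n t m : ℕ) (x : ZMod m) : ZMod n :=
  if x = 0 then 0 else ((x.val + t - 1 : ℕ) : ZMod n)
def dlo {n : ℕ} (t : ℕ) (a : ZMod n) : ZMod t := (a.val : ZMod t)
def dup {n : ℕ} (t m : ℕ) (a : ZMod n) : ZMod m := ((a.val + 1 - t : ℕ) : ZMod m)

section maps
lemma val_pos_of_ne_zero {k : ℕ} [NeZero k] {x : ZMod k} (hx : x ≠ 0) : 1 ≤ x.val := by
  rcases Nat.eq_zero_or_pos x.val with h | h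
  · exact absurd ((ZMod.val_eq_zero x).mp h) hx
  · exact h

variable {n t m : ℕ} [NeZero n] [NeZero t] [NeZero m]
  (ht : 1 ≤ t) (hm : 2 ≤ m) (htm : t + m = n + 1)

include hm htm in
lemma t_le : t ≤ n := by omega

include hm htm in
lemma t_lt : t < n := by omega

lemma val_lo (htn : t ≤ n) (x : ZMod t) : (lo n t x).val = x.val :=
  ZMod.val_cast_of_lt (lt_of_lt_of_le x.val_lt htn)

lemma lo_val_lt (htn : t ≤ n) (x : ZMod t) : (lo n t x).val < t := by
  rw [val_lo htn]; exact x.val_lt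

lemma dlo_lo (htn : t ≤ n) (x : ZMod t) : dlo t (lo n t x) = x := by
  rw [dlo, val_lo htn, ZMod.natCast_val, ZMod.cast_id]

lemma lo_dlo (htn : t ≤ n) {a : ZMod n} (h : a.val < t) : lo n t (dlo t a) = a := by
  rw [lo, dlo, ZMod.val_cast_of_lt h, ZMod.natCast_val, ZMod.cast_id]

lemma val_dlo {a : ZMod n} (h : a.val < t) : (dlo t a : ZMod t).val = a.val :=
  ZMod.val_cast_of_lt h

lemma lo_inj (htn : t ≤ n) : Function.Injective (lo n t) := by
  intro x y h
  have := congrArg ZMod.val h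
  rw [val_lo htn, val_lo htn] at this
  exact ZMod.val_injective _ this

include ht hm htm in
lemma val_upm {x : ZMod m} (hx : x ≠ 0) : (upm n t m x).val = x.val + t - 1 := by
  rw [upm, if_neg hx]
  refine ZMod.val_cast_of_lt ?_
  have h1 : 1 ≤ x.val := val_pos_of_ne_zero hx
  have := x.val_lt
  omega

lemma upm_zero : upm n t m (0 : ZMod m) = 0 := by rw [upm, if_pos rfl]

include ht hm htm in
lemma upm_up (x : ZMod m) : Up t (upm n t m x) := by
  by_cases hx : x = 0
  · left; rw [hx, upm_zero]
  · right
    rw [val_upm ht hm htm hx]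
    have h1 : 1 ≤ x.val := val_pos_of_ne_zero hx
    omega

include ht hm htm in
lemma dup_upm (x : ZMod m) : dup t m (upm n t m x) = x := by
  by_cases hx : x = 0
  · rw [hx, upm_zero, dup, ZMod.val_zero]
    have : 0 + 1 - t = 0 := by omega
    rw [this, Nat.cast_zero]
  · rw [dup, val_upm ht hm htm hx]
    have h1 := val_pos_of_ne_zero hx
    have : x.val + t - 1 + 1 - t = x.val := by omega
    rw [this, ZMod.natCast_val, ZMod.cast_id]

lemma dup_zero (ht : 1 ≤ t) : dup t m (0 : ZMod n) = 0 := by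
  rw [dup, ZMod.val_zero]
  have : 0 + 1 - t = 0 := by omega
  rw [this, Nat.cast_zero]

include ht hm htm in
lemma val_dup {a : ZMod n} (h : t ≤ a.val) : (dup t m a : ZMod m).val = a.val + 1 - t := by
  rw [dup]
  refine ZMod.val_cast_of_lt ?_
  have := a.val_lt
  omega

include ht hm htm in
lemma upm_dup {a : ZMod n} (h : Up t a) : upm n t m (dup t m a) = a := by
  rcases h with h | h
  · rw [h, dup_zero ht, upm_zero]
  · have hd : (dup t m a : ZMod m).val = a.val + 1 - t := val_dup ht hm htm h
    have hne : (dup t m a : ZMod m) ≠ 0 := by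
      intro h0
      rw [h0, ZMod.val_zero] at hd
      omega
    rw [upm, if_neg hne, hd]
    have : a.val + 1 - t + t - 1 = a.val := by omega
    rw [this, ZMod.natCast_val, ZMod.cast_id]

include ht hm htm in
lemma upm_inj : Function.Injective (upm n t m) := by
  intro x y h
  have := congrArg (dup t m) h
  rwa [dup_upm ht hm htm, dup_upm ht hm htm] at this

end maps


section glue
variable {n t m : ℕ}

def glue (n t m : ℕ) (T₁ : SimpleGraph (ZMod t)) (T₂ : SimpleGraph (ZMod m)) :
    SimpleGraph (ZMod n) where
  Adj a b := (a.val < t ∧ b.val < t ∧ T₁.Adj (dlo t a) (dlo t b)) ∨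
             (Up t a ∧ Up t b ∧ T₂.Adj (dup t m a) (dup t m b))
  symm := by
    constructor
    rintro a b (⟨h1, h2, h3⟩ | ⟨h1, h2, h3⟩)
    · exact Or.inl ⟨h2, h1, h3.symm⟩
    · exact Or.inr ⟨h2, h1, h3.symm⟩
  loopless := by
    constructor
    rintro a (⟨h1, h2, h3⟩ | ⟨h1, h2, h3⟩)
    · exact T₁.irrefl h3
    · exact T₂.irrefl h3

def restr₁ (t : ℕ) (G : SimpleGraph (ZMod n)) : SimpleGraph (ZMod t) where
  Adj x y := G.Adj (lo n t x) (lo n t y)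
  symm := ⟨fun x y h => h.symm⟩
  loopless := ⟨fun x h => G.irrefl h⟩

def restr₂ (t m : ℕ) (G : SimpleGraph (ZMod n)) : SimpleGraph (ZMod m) where
  Adj x y := G.Adj (upm n t m x) (upm n t m y)
  symm := ⟨fun x y h => h.symm⟩
  loopless := ⟨fun x h => G.irrefl h⟩

variable [NeZero n] [NeZero t] [NeZero m]
  {T₁ : SimpleGraph (ZMod t)} {T₂ : SimpleGraph (ZMod m)}

lemma glue_adj_lo (ht : 1 ≤ t) (hm : 2 ≤ m) (htm : t + m = n + 1) (x y : ZMod t) :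
    (glue n t m T₁ T₂).Adj (lo n t x) (lo n t y) ↔ T₁.Adj x y := by
  have htn : t ≤ n := t_le hm htm
  constructor
  · rintro (⟨h1, h2, h3⟩ | ⟨h1, h2, h3⟩)
    · rwa [dlo_lo htn, dlo_lo htn] at h3
    · -- upper case: both lo-images must be 0
      exfalso
      have hx : lo n t x = 0 := by
        rcases h1 with h | h
        · exact h
        · exact absurd h (by have := lo_val_lt htn x; omega)
      have hy : lo n t y = 0 := by
        rcases h2 with h | h
        · exact h
        · exact absurd h (by have := lo_val_lt htn y; omega)
      rw [hx, hy] at h3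
      exact T₂.irrefl h3
  · intro h
    exact Or.inl ⟨lo_val_lt htn x, lo_val_lt htn y, by rwa [dlo_lo htn, dlo_lo htn]⟩

lemma glue_adj_upm (ht : 1 ≤ t) (hm : 2 ≤ m) (htm : t + m = n + 1) (x y : ZMod m) :
    (glue n t m T₁ T₂).Adj (upm n t m x) (upm n t m y) ↔ T₂.Adj x y := by
  constructor
  · rintro (⟨h1, h2, h3⟩ | ⟨h1, h2, h3⟩)
    · -- lower case: both upm-images have val < t, so both are 0
      exfalso
      have hx : x = 0 := by
        by_contra hx
        rw [val_upm ht hm htm hx] at h1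
        have := val_pos_of_ne_zero hx
        omega
      have hy : y = 0 := by
        by_contra hy
        rw [val_upm ht hm htm hy] at h2
        have := val_pos_of_ne_zero hy
        omega
      subst hx; subst hy
      rw [upm_zero] at h3
      exact T₁.irrefl h3
    · rwa [dup_upm ht hm htm, dup_upm ht hm htm] at h3
  · intro h
    exact Or.inr ⟨upm_up ht hm htm x, upm_up ht hm htm y,
      by rwa [dup_upm ht hm htm, dup_upm ht hm htm]⟩

lemma restr₁_glue (ht : 1 ≤ t) (hm : 2 ≤ m) (htm : t + m = n + 1) :
    restr₁ t (glue n t m T₁ T₂) = T₁ := by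
  ext x y
  exact glue_adj_lo ht hm htm x y

lemma restr₂_glue (ht : 1 ≤ t) (hm : 2 ≤ m) (htm : t + m = n + 1) :
    restr₂ t m (glue n t m T₁ T₂) = T₂ := by
  ext x y
  exact glue_adj_upm ht hm htm x y

lemma glue_restr {G : SimpleGraph (ZMod n)} (ht : 1 ≤ t) (hm : 2 ≤ m) (htm : t + m = n + 1)
    (hs : ∀ a b : ZMod n, G.Adj a b → (a.val < t ∧ b.val < t) ∨ (Up t a ∧ Up t b)) :
    glue n t m (restr₁ t G) (restr₂ t m G) = G := by
  have htn : t ≤ n := t_le hm htm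
  ext a b
  constructor
  · rintro (⟨h1, h2, h3⟩ | ⟨h1, h2, h3⟩)
    · have h3' : G.Adj (lo n t (dlo t a)) (lo n t (dlo t b)) := h3
      rwa [lo_dlo htn h1, lo_dlo htn h2] at h3'
    · have h3' : G.Adj (upm n t m (dup t m a)) (upm n t m (dup t m b)) := h3
      rwa [upm_dup ht hm htm h1, upm_dup ht hm htm h2] at h3'
  · intro h
    rcases hs a b h with ⟨h1, h2⟩ | ⟨h1, h2⟩
    · refine Or.inl ⟨h1, h2, ?_⟩
      show G.Adj (lo n t (dlo t a)) (lo n t (dlo t b))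
      rwa [lo_dlo htn h1, lo_dlo htn h2]
    · refine Or.inr ⟨h1, h2, ?_⟩
      show G.Adj (upm n t m (dup t m a)) (upm n t m (dup t m b))
      rwa [upm_dup ht hm htm h1, upm_dup ht hm htm h2]

end glue

lemma reach_map {V W : Type*} {G : SimpleGraph V} {H : SimpleGraph W} (f : V → W)
    (hf : ∀ a b : V, G.Adj a b → f a = f b ∨ H.Adj (f a) (f b)) {x y : V}
    (h : G.Reachable x y) : H.Reachable (f x) (f y) := by
  obtain ⟨p⟩ := h
  induction p with
  | nil => exact SimpleGraph.Reachable.refl _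
  | @cons a b c ha p ih =>
    rcases hf _ _ ha with h' | h'
    · exact h' ▸ ih
    · exact (SimpleGraph.Adj.reachable h').trans ih

section glue2
variable {n t m : ℕ} [NeZero n] [NeZero t] [NeZero m]
  {T₁ : SimpleGraph (ZMod t)} {T₂ : SimpleGraph (ZMod m)}

/-- collapse map to the lower part -/
noncomputable def pi1 (t : ℕ) (a : ZMod n) : ZMod t :=
  if a.val < t then dlo t a else 0

/-- collapse map to the upper part -/
noncomputable def pi2 (t m : ℕ) (a : ZMod n) : ZMod m :=
  if t ≤ a.val then dup t m a else 0

lemma dlo_zero (t : ℕ) [NeZero t] : dlo t (0 : ZMod n) = 0 := by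
  rw [dlo, ZMod.val_zero, Nat.cast_zero]

lemma pi1_lo (ht : 1 ≤ t) (hm : 2 ≤ m) (htm : t + m = n + 1) (x : ZMod t) :
    pi1 t (lo n t x) = x := by
  rw [pi1, if_pos (lo_val_lt (t_le hm htm) x), dlo_lo (t_le hm htm)]

lemma pi1_up {a : ZMod n} (ht : 1 ≤ t) (h : Up t a) : pi1 t a = 0 := by
  rcases h with h | h
  · rw [pi1, h]
    split
    · exact dlo_zero t
    · rfl
  · rw [pi1, if_neg (by omega)]

lemma pi2_lower {a : ZMod n} (ht : 1 ≤ t) (h : a.val < t) : pi2 t m a = 0 := by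
  rw [pi2, if_neg (by omega)]

lemma pi2_up {a : ZMod n} (ht : 1 ≤ t) (h : Up t a) : pi2 t m a = dup t m a := by
  rcases h with h | h
  · subst h
    rw [pi2, dup_zero ht]
    split <;> rfl
  · rw [pi2, if_pos h]

lemma pi2_upm (ht : 1 ≤ t) (hm : 2 ≤ m) (htm : t + m = n + 1) (x : ZMod m) :
    pi2 t m (upm n t m x) = x := by
  rw [pi2_up ht (upm_up ht hm htm x), dup_upm ht hm htm]

lemma hf_pi1 (ht : 1 ≤ t) :
    ∀ a b : ZMod n, (glue n t m T₁ T₂).Adj a b →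
      pi1 t a = pi1 t b ∨ T₁.Adj (pi1 t a) (pi1 t b) := by
  rintro a b (⟨h1, h2, h3⟩ | ⟨h1, h2, h3⟩)
  · right
    rwa [pi1, if_pos h1, pi1, if_pos h2]
  · left
    rw [pi1_up ht h1, pi1_up ht h2]

lemma hf_pi2 (ht : 1 ≤ t) :
    ∀ a b : ZMod n, (glue n t m T₁ T₂).Adj a b →
      pi2 t m a = pi2 t m b ∨ T₂.Adj (pi2 t m a) (pi2 t m b) := by
  rintro a b (⟨h1, h2, h3⟩ | ⟨h1, h2, h3⟩)
  · left
    rw [pi2_lower ht h1, pi2_lower ht h2]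
  · right
    rwa [pi2_up ht h1, pi2_up ht h2]

lemma lo_zero (htn : t ≤ n) : lo n t (0 : ZMod t) = 0 := by
  rw [lo, ZMod.val_zero, Nat.cast_zero]

lemma glue_connected (ht : 1 ≤ t) (hm : 2 ≤ m) (htm : t + m = n + 1)
    (h1 : T₁.Connected) (h2 : T₂.Connected) : (glue n t m T₁ T₂).Connected := by
  have htn : t ≤ n := t_le hm htm
  have key : ∀ a : ZMod n, (glue n t m T₁ T₂).Reachable a 0 := by
    intro a
    by_cases h : a.val < t
    · have := reach_map (H := glue n t m T₁ T₂) (lo n t)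
        (fun x y hxy => Or.inr ((glue_adj_lo ht hm htm x y).mpr hxy))
        (h1.preconnected (dlo t a) 0)
      rwa [lo_dlo htn h, lo_zero htn] at this
    · have := reach_map (H := glue n t m T₁ T₂) (upm n t m)
        (fun x y hxy => Or.inr ((glue_adj_upm ht hm htm x y).mpr hxy))
        (h2.preconnected (dup t m a) 0)
      rwa [upm_dup ht hm htm (Or.inr (by omega)), upm_zero] at this
  constructor
  intro a b
  exact (key a).trans (key b).symm

lemma restr_connected₁ (ht : 1 ≤ t) (hm : 2 ≤ m) (htm : t + m = n + 1)
    (h : (glue n t m T₁ T₂).Connected) : T₁.Connected := by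
  constructor
  intro x y
  have := reach_map (pi1 t) (hf_pi1 ht) (h.preconnected (lo n t x) (lo n t y))
  rwa [pi1_lo ht hm htm, pi1_lo ht hm htm] at this

lemma restr_connected₂ (ht : 1 ≤ t) (hm : 2 ≤ m) (htm : t + m = n + 1)
    (h : (glue n t m T₁ T₂).Connected) : T₂.Connected := by
  constructor
  intro x y
  have := reach_map (pi2 t m) (hf_pi2 ht) (h.preconnected (upm n t m x) (upm n t m y))
  rwa [pi2_upm ht hm htm, pi2_upm ht hm htm] at this

end glue2

section glue3
variable {n t m : ℕ} [NeZero n] [NeZero t] [NeZero m]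
  {T₁ : SimpleGraph (ZMod t)} {T₂ : SimpleGraph (ZMod m)}

/-- `lo` as a graph homomorphism `T₁ →g glue T₁ T₂`. -/
def loHom (ht : 1 ≤ t) (hm : 2 ≤ m) (htm : t + m = n + 1) :
    T₁ →g glue n t m T₁ T₂ where
  toFun := lo n t
  map_rel' := fun h => (glue_adj_lo ht hm htm _ _).mpr h

def upmHom (ht : 1 ≤ t) (hm : 2 ≤ m) (htm : t + m = n + 1) :
    T₂ →g glue n t m T₁ T₂ where
  toFun := upm n t m
  map_rel' := fun h => (glue_adj_upm ht hm htm _ _).mpr h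

lemma restr_acyclic₁ (ht : 1 ≤ t) (hm : 2 ≤ m) (htm : t + m = n + 1)
    (h : (glue n t m T₁ T₂).IsAcyclic) : T₁.IsAcyclic := by
  intro v c hc
  exact h ((c.map (loHom ht hm htm)))
    (hc.map (f := loHom ht hm htm) (lo_inj (t_le hm htm)))

lemma restr_acyclic₂ (ht : 1 ≤ t) (hm : 2 ≤ m) (htm : t + m = n + 1)
    (h : (glue n t m T₁ T₂).IsAcyclic) : T₂.IsAcyclic := by
  intro v c hc
  exact h ((c.map (upmHom ht hm htm)))
    (hc.map (f := upmHom ht hm htm) (upm_inj ht hm htm))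

lemma dlo_inj_on (htn : t ≤ n) {a b : ZMod n} (ha : a.val < t) (hb : b.val < t)
    (h : dlo t a = dlo t b) : a = b := by
  have := congrArg (lo n t) h
  rwa [lo_dlo htn ha, lo_dlo htn hb] at this

lemma dup_inj_on (ht : 1 ≤ t) (hm : 2 ≤ m) (htm : t + m = n + 1) {a b : ZMod n}
    (ha : Up t a) (hb : Up t b) (h : dup t m a = dup t m b) : a = b := by
  have := congrArg (upm n t m) h
  rwa [upm_dup ht hm htm ha, upm_dup ht hm htm hb] at this

lemma glue_acyclic (ht : 1 ≤ t) (hm : 2 ≤ m) (htm : t + m = n + 1)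
    (hT₁ : T₁.IsAcyclic) (hT₂ : T₂.IsAcyclic) : (glue n t m T₁ T₂).IsAcyclic := by
  have htn : t ≤ n := t_le hm htm
  rw [SimpleGraph.isAcyclic_iff_forall_adj_isBridge]
  intro v w hadj
  rw [SimpleGraph.isBridge_iff]
  intro hreach
  rcases hadj with ⟨h1, h2, h3⟩ | ⟨h1, h2, h3⟩
  · -- lower edge
    have hb := (SimpleGraph.isAcyclic_iff_forall_adj_isBridge.mp hT₁ h3)
    apply hb
    have := reach_map (G := (glue n t m T₁ T₂) \ SimpleGraph.fromEdgeSet {s(v, w)})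
      (H := T₁ \ SimpleGraph.fromEdgeSet {s(dlo t v, dlo t w)}) (pi1 t) ?_ hreach
    · rwa [pi1, if_pos h1, pi1, if_pos h2] at this
    · rintro a b hab
      rw [SimpleGraph.sdiff_adj, SimpleGraph.fromEdgeSet_adj] at hab
      obtain ⟨hab, hne⟩ := hab
      have hne' : a ≠ b := hab.ne
      rcases hab with ⟨g1, g2, g3⟩ | ⟨g1, g2, g3⟩
      · right
        rw [SimpleGraph.sdiff_adj, SimpleGraph.fromEdgeSet_adj]
        rw [pi1, if_pos g1, pi1, if_pos g2]
        refine ⟨g3, ?_⟩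
        rintro ⟨hmem, -⟩
        apply hne
        rw [Set.mem_singleton_iff] at hmem
        rw [Sym2.eq_iff] at hmem
        refine ⟨?_, hne'⟩
        rw [Set.mem_singleton_iff, Sym2.eq_iff]
        rcases hmem with ⟨e1, e2⟩ | ⟨e1, e2⟩
        · exact Or.inl ⟨dlo_inj_on htn g1 h1 e1, dlo_inj_on htn g2 h2 e2⟩
        · exact Or.inr ⟨dlo_inj_on htn g1 h2 e1, dlo_inj_on htn g2 h1 e2⟩
      · left
        rw [pi1_up ht g1, pi1_up ht g2]
  · -- upper edge
    have hb := (SimpleGraph.isAcyclic_iff_forall_adj_isBridge.mp hT₂ h3)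
    apply hb
    have := reach_map (G := (glue n t m T₁ T₂) \ SimpleGraph.fromEdgeSet {s(v, w)})
      (H := T₂ \ SimpleGraph.fromEdgeSet {s(dup t m v, dup t m w)}) (pi2 t m) ?_ hreach
    · rwa [pi2_up ht h1, pi2_up ht h2] at this
    · rintro a b hab
      rw [SimpleGraph.sdiff_adj, SimpleGraph.fromEdgeSet_adj] at hab
      obtain ⟨hab, hne⟩ := hab
      have hne' : a ≠ b := hab.ne
      rcases hab with ⟨g1, g2, g3⟩ | ⟨g1, g2, g3⟩
      · left
        rw [pi2_lower ht g1, pi2_lower ht g2]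
      · right
        rw [SimpleGraph.sdiff_adj, SimpleGraph.fromEdgeSet_adj]
        rw [pi2_up ht g1, pi2_up ht g2]
        refine ⟨g3, ?_⟩
        rintro ⟨hmem, -⟩
        apply hne
        rw [Set.mem_singleton_iff] at hmem
        rw [Sym2.eq_iff] at hmem
        refine ⟨?_, hne'⟩
        rw [Set.mem_singleton_iff, Sym2.eq_iff]
        rcases hmem with ⟨e1, e2⟩ | ⟨e1, e2⟩
        · exact Or.inl ⟨dup_inj_on ht hm htm g1 h1 e1, dup_inj_on ht hm htm g2 h2 e2⟩
        · exact Or.inr ⟨dup_inj_on ht hm htm g1 h2 e1, dup_inj_on ht hm htm g2 h1 e2⟩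

lemma glue_isTree_iff (ht : 1 ≤ t) (hm : 2 ≤ m) (htm : t + m = n + 1) :
    (glue n t m T₁ T₂).IsTree ↔ T₁.IsTree ∧ T₂.IsTree := by
  constructor
  · intro h
    exact ⟨⟨restr_connected₁ ht hm htm h.isConnected, restr_acyclic₁ ht hm htm h.IsAcyclic⟩,
      ⟨restr_connected₂ ht hm htm h.isConnected, restr_acyclic₂ ht hm htm h.IsAcyclic⟩⟩
  · rintro ⟨h1, h2⟩
    exact ⟨glue_connected ht hm htm h1.isConnected h2.isConnected,
      glue_acyclic ht hm htm h1.IsAcyclic h2.IsAcyclic⟩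

end glue3

section glue4
variable {n t m : ℕ} [NeZero n] [NeZero t] [NeZero m]
  {T₁ : SimpleGraph (ZMod t)} {T₂ : SimpleGraph (ZMod m)}

lemma dup_val_mono (ht : 1 ≤ t) (hm : 2 ≤ m) (htm : t + m = n + 1) {x y : ZMod n}
    (hx : Up t x) (hy : Up t y) (hxy : x.val < y.val) :
    (dup t m x : ZMod m).val < (dup t m y : ZMod m).val := by
  have hy' : t ≤ y.val := by
    rcases hy with h | h
    · subst h; rw [ZMod.val_zero] at hxy; omega
    · exact h
  rw [val_dup ht hm htm hy']
  rcases hx with h | h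
  · subst h
    rw [dup_zero ht, ZMod.val_zero]
    omega
  · rw [val_dup ht hm htm h]
    omega

lemma upm_val_mono (ht : 1 ≤ t) (hm : 2 ≤ m) (htm : t + m = n + 1) {x y : ZMod m}
    (hxy : x.val < y.val) : (upm n t m x).val < (upm n t m y).val := by
  have hy0 : y ≠ 0 := by
    intro h; subst h; rw [ZMod.val_zero] at hxy; omega
  rw [val_upm ht hm htm hy0]
  by_cases hx0 : x = 0
  · subst hx0
    rw [upm_zero, ZMod.val_zero]
    have := val_pos_of_ne_zero hy0
    omega
  · rw [val_upm ht hm htm hx0]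
    have := val_pos_of_ne_zero hx0
    omega

lemma glue_noncrossing (ht : 1 ≤ t) (hm : 2 ≤ m) (htm : t + m = n + 1)
    (h1 : Noncrossing T₁) (h2 : Noncrossing T₂) : Noncrossing (glue n t m T₁ T₂) := by
  have htn : t ≤ n := t_le hm htm
  rintro a b c d hab hcd ⟨p1, p2, p3⟩
  rcases hab with ⟨a1, a2, a3⟩ | ⟨a1, a2, a3⟩ <;> rcases hcd with ⟨c1, c2, c3⟩ | ⟨c1, c2, c3⟩
  · -- lower, lower
    exact h1 _ _ _ _ a3 c3
      ⟨by rwa [val_dlo a1, val_dlo c1], by rwa [val_dlo c1, val_dlo a2],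
       by rwa [val_dlo a2, val_dlo c2]⟩
  · -- lower, upper : c strictly between a and b, c.val < b.val < t forces c = 0
    have hc0 : c = 0 := by
      rcases c1 with h | h
      · exact h
      · omega
    subst hc0
    rw [ZMod.val_zero] at p1
    omega
  · -- upper, lower : b.val < d.val < t forces b = 0
    have hb0 : b = 0 := by
      rcases a2 with h | h
      · exact h
      · omega
    subst hb0
    rw [ZMod.val_zero] at p2
    omega
  · -- upper, upper
    exact h2 _ _ _ _ a3 c3
      ⟨dup_val_mono ht hm htm a1 c1 p1, dup_val_mono ht hm htm c1 a2 p2,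
       dup_val_mono ht hm htm a2 c2 p3⟩

lemma restr_noncrossing₁ (ht : 1 ≤ t) (hm : 2 ≤ m) (htm : t + m = n + 1)
    {G : SimpleGraph (ZMod n)} (h : Noncrossing G) : Noncrossing (restr₁ t G) := by
  have htn : t ≤ n := t_le hm htm
  rintro a b c d hab hcd ⟨p1, p2, p3⟩
  refine h (lo n t a) (lo n t b) (lo n t c) (lo n t d) hab hcd ?_
  rw [val_lo htn, val_lo htn, val_lo htn, val_lo htn]
  exact ⟨p1, p2, p3⟩

lemma restr_noncrossing₂ (ht : 1 ≤ t) (hm : 2 ≤ m) (htm : t + m = n + 1)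
    {G : SimpleGraph (ZMod n)} (h : Noncrossing G) : Noncrossing (restr₂ t m G) := by
  rintro a b c d hab hcd ⟨p1, p2, p3⟩
  exact h (upm n t m a) (upm n t m b) (upm n t m c) (upm n t m d) hab hcd
    ⟨upm_val_mono ht hm htm p1, upm_val_mono ht hm htm p2, upm_val_mono ht hm htm p3⟩

lemma ncard_one_iff {α : Type*} (s : Set α) : s.ncard = 1 ↔ ∃! a, a ∈ s := by
  rw [Set.ncard_eq_one]
  constructor
  · rintro ⟨a, rfl⟩
    exact ⟨a, rfl, fun b hb => hb⟩
  · rintro ⟨a, ha, hu⟩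
    exact ⟨a, Set.eq_singleton_iff_unique_mem.mpr ⟨ha, hu⟩⟩

lemma glue_adj_zero_upm (ht : 1 ≤ t) (hm : 2 ≤ m) (htm : t + m = n + 1) {y : ZMod m}
    (hy : T₂.Adj 0 y) : (glue n t m T₁ T₂).Adj 0 (upm n t m y) ∧ t ≤ (upm n t m y).val := by
  have hy0 : y ≠ 0 := fun h => T₂.irrefl (v := 0) (h ▸ hy)
  constructor
  · refine Or.inr ⟨Or.inl rfl, upm_up ht hm htm y, ?_⟩
    rwa [dup_zero ht, dup_upm ht hm htm]
  · rw [val_upm ht hm htm hy0]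
    have := val_pos_of_ne_zero hy0
    omega

lemma glue_deg_iff (ht : 1 ≤ t) (hm : 2 ≤ m) (htm : t + m = n + 1) :
    (∃! w : ZMod n, (glue n t m T₁ T₂).Adj 0 w ∧ t ≤ w.val) ↔ (∃! y : ZMod m, T₂.Adj 0 y) := by
  constructor
  · rintro ⟨w, ⟨hw, hwt⟩, hu⟩
    have hw2 : T₂.Adj 0 (dup t m w) := by
      rcases hw with ⟨h1, h2, h3⟩ | ⟨h1, h2, h3⟩
      · rw [ZMod.val_zero] at h1; omega
      · rwa [dup_zero ht] at h3
    refine ⟨dup t m w, hw2, ?_⟩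
    intro y hy
    obtain ⟨hadj, hval⟩ := glue_adj_zero_upm (T₁ := T₁) ht hm htm hy
    have := hu (upm n t m y) ⟨hadj, hval⟩
    rw [← this, dup_upm ht hm htm]
  · rintro ⟨y, hy, hu⟩
    obtain ⟨hadj, hval⟩ := glue_adj_zero_upm (T₁ := T₁) ht hm htm hy
    refine ⟨upm n t m y, ⟨hadj, hval⟩, ?_⟩
    rintro w ⟨hw, hwt⟩
    have hw2 : T₂.Adj 0 (dup t m w) := by
      rcases hw with ⟨h1, h2, h3⟩ | ⟨h1, h2, h3⟩
      · rw [ZMod.val_zero] at h1; omega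
      · rwa [dup_zero ht] at h3
    have := hu (dup t m w) hw2
    rw [← this, upm_dup ht hm htm (Or.inr hwt)]

lemma glue_splitAt (ht : 1 ≤ t) (hm : 2 ≤ m) (htm : t + m = n + 1) :
    SplitAt (glue n t m T₁ T₂) t ↔ (T₂.neighborSet 0).ncard = 1 := by
  rw [SplitAt, ncard_one_iff]
  have hiff := glue_deg_iff (T₁ := T₁) (T₂ := T₂) ht hm htm
  constructor
  · rintro ⟨-, h⟩
    exact hiff.mp h
  · intro h
    refine ⟨?_, hiff.mpr h⟩
    rintro a b (⟨h1, h2, -⟩ | ⟨h1, h2, -⟩)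
    · exact Or.inl ⟨h1, h2⟩
    · exact Or.inr ⟨h1, h2⟩

end glue4

section equivPart
variable {n t m : ℕ} [NeZero n] [NeZero t] [NeZero m]

lemma forward_props (ht : 1 ≤ t) (hm : 2 ≤ m) (htm : t + m = n + 1)
    {G : SimpleGraph (ZMod n)} (hG : IsNCTree G) (hs : SplitAt G t) :
    (IsNCTree (restr₂ t m G) ∧ ((restr₂ t m G).neighborSet 0).ncard = 1) ∧
      IsNCTree (restr₁ t G) := by
  have hglue : glue n t m (restr₁ t G) (restr₂ t m G) = G := glue_restr ht hm htm hs.1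
  have htree : (glue n t m (restr₁ t G) (restr₂ t m G)).IsTree := by rw [hglue]; exact hG.1
  obtain ⟨h1, h2⟩ := (glue_isTree_iff ht hm htm).mp htree
  have hsg : SplitAt (glue n t m (restr₁ t G) (restr₂ t m G)) t := by rw [hglue]; exact hs
  exact ⟨⟨⟨h2, restr_noncrossing₂ ht hm htm hG.2⟩, (glue_splitAt ht hm htm).mp hsg⟩,
    ⟨h1, restr_noncrossing₁ ht hm htm hG.2⟩⟩

lemma backward_props (ht : 1 ≤ t) (hm : 2 ≤ m) (htm : t + m = n + 1)
    {T₁ : SimpleGraph (ZMod t)} {T₂ : SimpleGraph (ZMod m)}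
    (h2 : IsNCTree T₂ ∧ (T₂.neighborSet 0).ncard = 1) (h1 : IsNCTree T₁) :
    IsNCTree (glue n t m T₁ T₂) ∧ SplitAt (glue n t m T₁ T₂) t :=
  ⟨⟨(glue_isTree_iff ht hm htm).mpr ⟨h1.1, h2.1.1⟩,
    glue_noncrossing ht hm htm h1.2 h2.1.2⟩,
   (glue_splitAt ht hm htm).mpr h2.2⟩

noncomputable def splitEquiv (ht : 1 ≤ t) (hm : 2 ≤ m) (htm : t + m = n + 1) :
    {G : SimpleGraph (ZMod n) // IsNCTree G ∧ SplitAt G t} ≃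
    ({T : SimpleGraph (ZMod m) // IsNCTree T ∧ (T.neighborSet 0).ncard = 1} ×
     {T : SimpleGraph (ZMod t) // IsNCTree T}) where
  toFun := fun G => ⟨⟨restr₂ t m G.1, (forward_props ht hm htm G.2.1 G.2.2).1⟩,
    ⟨restr₁ t G.1, (forward_props ht hm htm G.2.1 G.2.2).2⟩⟩
  invFun := fun P => ⟨glue n t m P.2.1 P.1.1, backward_props ht hm htm P.1.2 P.2.2⟩
  left_inv := by
    rintro ⟨G, hG, hs⟩
    exact Subtype.ext (glue_restr ht hm htm hs.1)
  right_inv := by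
    rintro ⟨⟨T₂, h2⟩, ⟨T₁, h1⟩⟩
    refine Prod.ext ?_ ?_
    · exact Subtype.ext (restr₂_glue ht hm htm)
    · exact Subtype.ext (restr₁_glue ht hm htm)

lemma card_split (ht : 1 ≤ t) (hm : 2 ≤ m) (htm : t + m = n + 1) :
    Nat.card {G : SimpleGraph (ZMod n) // IsNCTree G ∧ SplitAt G t} = A₁ m * A t := by
  rw [Nat.card_congr (splitEquiv ht hm htm), Nat.card_prod, A₁, A]

end equivPart

section existsUnique
variable {n : ℕ} [NeZero n]

lemma splitAt_lt_aux {G : SimpleGraph (ZMod n)} (hconn : G.Connected)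
    {t t' : ℕ} (ht1 : 1 ≤ t) (htt' : t < t') (ht'n : t' ≤ n - 1)
    (hs : SplitAt G t) (hs' : SplitAt G t') : False := by
  classical
  have hn1 : 1 ≤ n := Nat.one_le_iff_ne_zero.mpr (NeZero.ne n)
  have htn : t < n := by omega
  set x₀ : ZMod n := ((t : ℕ) : ZMod n) with hx₀
  have hx₀val : x₀.val = t := ZMod.val_cast_of_lt htn
  set M : Set (ZMod n) := {v : ZMod n | t ≤ v.val ∧ v.val < t'} with hM
  have hx₀M : x₀ ∈ M := by constructor <;> omega
  have h0M : (0 : ZMod n) ∉ M := by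
    intro h
    rw [hM, Set.mem_setOf_eq, ZMod.val_zero] at h
    omega
  obtain ⟨p⟩ := hconn.preconnected x₀ 0
  obtain ⟨d, hd, hdM, hdM'⟩ := p.exists_boundary_dart M hx₀M h0M
  have hadj : G.Adj d.fst d.snd := d.adj
  obtain ⟨hd1, hd2⟩ := hdM
  -- from SplitAt t : Up t d.snd
  have hup : Up t d.snd := by
    rcases hs.1 _ _ hadj with ⟨h1, -⟩ | ⟨-, h2⟩
    · omega
    · exact h2
  -- from SplitAt t' : d.snd.val < t'
  have hlow : d.snd.val < t' := by
    rcases hs'.1 _ _ hadj with ⟨-, h2⟩ | ⟨h1, -⟩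
    · exact h2
    · rcases h1 with h | h
      · rw [h, ZMod.val_zero] at hd1; omega
      · omega
  have hsnd0 : d.snd = 0 := by
    rcases hup with h | h
    · exact h
    · exact absurd ⟨h, hlow⟩ hdM'
  -- so d.fst is a neighbor of 0 with t ≤ val < t'
  have hadj0 : G.Adj 0 d.fst := by
    rw [← hsnd0]; exact hadj.symm
  obtain ⟨w', ⟨hw'adj, hw'val⟩, -⟩ := hs'.2
  obtain ⟨w, hw, hwu⟩ := hs.2
  have e1 : d.fst = w := hwu d.fst ⟨hadj0, by omega⟩
  have e2 : w' = w := hwu w' ⟨hw'adj, by omega⟩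
  rw [← e2] at e1
  have : d.fst.val = w'.val := by rw [e1]
  omega

lemma splitAt_unique {G : SimpleGraph (ZMod n)} (hconn : G.Connected)
    {t t' : ℕ} (ht1 : 1 ≤ t) (htn : t ≤ n - 1) (ht'1 : 1 ≤ t') (ht'n : t' ≤ n - 1)
    (hs : SplitAt G t) (hs' : SplitAt G t') : t = t' := by
  rcases lt_trichotomy t t' with h | h | h
  · exact absurd (splitAt_lt_aux hconn ht1 h ht'n hs hs') (fun f => f.elim)
  · exact h
  · exact absurd (splitAt_lt_aux hconn ht'1 h htn hs' hs) (fun f => f.elim)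

end existsUnique

section existence
variable {n : ℕ} [NeZero n]

lemma splitAt_exists {G : SimpleGraph (ZMod n)} (hn : 2 ≤ n) (hG : IsNCTree G) :
    ∃ t : ℕ, 1 ≤ t ∧ t ≤ n - 1 ∧ SplitAt G t := by
  classical
  have hnc := hG.2
  have hconn := hG.1.isConnected
  -- vertex 0 has a neighbor
  have h0 : ∃ v : ZMod n, G.Adj 0 v := by
    have hv1ne : ((1 : ℕ) : ZMod n) ≠ 0 := by
      intro h
      have := congrArg ZMod.val h
      rw [ZMod.val_cast_of_lt (by omega), ZMod.val_zero] at this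
      omega
    obtain ⟨p⟩ := hconn.preconnected 0 ((1 : ℕ) : ZMod n)
    have hnil : ¬ p.Nil := SimpleGraph.Walk.not_nil_of_ne (fun h => hv1ne h.symm)
    exact ⟨_, p.adj_snd hnil⟩
  -- maximal neighbor k
  set s : Finset (ZMod n) := Finset.univ.filter (fun v => G.Adj 0 v) with hsdef
  have hsne : s.Nonempty := by
    obtain ⟨v, hv⟩ := h0
    exact ⟨v, by simp [hsdef, hv]⟩
  obtain ⟨k, hks, hk_max⟩ := Finset.exists_max_image s ZMod.val hsne
  have hk_adj : G.Adj 0 k := by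
    rw [hsdef] at hks
    simpa using hks
  have hk_max' : ∀ v : ZMod n, G.Adj 0 v → v.val ≤ k.val := by
    intro v hv
    exact hk_max v (by simp [hsdef, hv])
  set H : SimpleGraph (ZMod n) := G \ SimpleGraph.fromEdgeSet {s(0, k)} with hHdef
  have hbridge : ¬H.Reachable 0 k :=
    (SimpleGraph.isBridge_iff.mp
      (SimpleGraph.isAcyclic_iff_forall_adj_isBridge.mp hG.1.IsAcyclic hk_adj))
  have hHG : ∀ {a b : ZMod n}, H.Adj a b → G.Adj a b := by
    intro a b h
    exact ((SimpleGraph.sdiff_adj _ _ _ _).mp h).1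
  set S : Set (ZMod n) := {v : ZMod n | H.Reachable v k} with hSdef
  have hkS : k ∈ S := by rw [hSdef]; exact SimpleGraph.Reachable.refl k
  have h0S : (0 : ZMod n) ∉ S := fun h => hbridge h
  have hk0 : k ≠ 0 := fun h => h0S (h ▸ hkS)
  -- dichotomy
  have dichotomy : ∀ v : ZMod n, v ∈ S ∨ H.Reachable v 0 := by
    have aux : ∀ (v w : ZMod n) (p : G.Walk v w), (w ∈ S ∨ H.Reachable w 0) →
        (v ∈ S ∨ H.Reachable v 0) := by
      intro v w p
      induction p with
      | nil => exact id
      | @cons a b c hadj p ih =>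
        intro hc
        have hb := ih hc
        by_cases he : s(a, b) = s(0, k)
        · rw [Sym2.eq_iff] at he
          rcases he with ⟨ha, hb'⟩ | ⟨ha, hb'⟩
          · subst ha
            exact Or.inr (SimpleGraph.Reachable.refl 0)
          · subst ha
            exact Or.inl hkS
        · have hH : H.Adj a b := by
            rw [hHdef, SimpleGraph.sdiff_adj, SimpleGraph.fromEdgeSet_adj]
            exact ⟨hadj, by simp [he]⟩
          rcases hb with h | h
          · exact Or.inl (hH.reachable.trans h)
          · exact Or.inr (hH.reachable.trans h)
    intro v
    obtain ⟨p⟩ := hconn.preconnected v 0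
    exact aux v 0 p (Or.inr (SimpleGraph.Reachable.refl 0))
  -- support lemmas
  have hsupp0 : ∀ {x : ZMod n} (p : H.Walk x 0), ∀ w ∈ p.support, w ∉ S := by
    intro x p w hw hwS
    exact hbridge ((p.dropUntil w hw).reachable.symm.trans hwS)
  have hsuppK : ∀ {x : ZMod n} (p : H.Walk x k), ∀ w ∈ p.support, w ∈ S := by
    intro x p w hw
    exact (p.dropUntil w hw).reachable
  -- Claim A
  have claimA : ∀ v : ZMod n, k.val < v.val → v ∈ S := by
    intro v hv
    by_contra hvS
    obtain ⟨p⟩ := (dichotomy v).resolve_left hvS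
    obtain ⟨d, hd, h1, h2⟩ := p.exists_boundary_dart {w : ZMod n | k.val < w.val} hv
      (by rw [Set.mem_setOf_eq, ZMod.val_zero]; omega)
    have hyS : d.snd ∉ S := hsupp0 p _ (p.dart_snd_mem_support_of_mem_darts hd)
    have hyk : d.snd ≠ k := fun h => hyS (h ▸ hkS)
    have hyval : d.snd.val < k.val := by
      rw [Set.mem_setOf_eq] at h2
      rcases Nat.lt_or_ge d.snd.val k.val with h | h
      · exact h
      · have : d.snd.val = k.val := by omega
        exact absurd (ZMod.val_injective n this) hyk
    have hGadj : G.Adj d.fst d.snd := hHG d.adj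
    by_cases hy0 : d.snd = 0
    · rw [hy0] at hGadj
      have := hk_max' d.fst hGadj.symm
      rw [Set.mem_setOf_eq] at h1
      omega
    · have hypos : 1 ≤ d.snd.val := val_pos_of_ne_zero hy0
      rw [Set.mem_setOf_eq] at h1
      exact hnc 0 k d.snd d.fst hk_adj hGadj.symm
        ⟨by rw [ZMod.val_zero]; omega, hyval, h1⟩
  -- Claim B
  have claimB : ∀ a v : ZMod n, a ∈ S → a.val < v.val → v.val < k.val → v ∈ S := by
    intro a v haS hav hvk
    by_contra hvS
    have ha0 : a ≠ 0 := fun h => h0S (h ▸ haS)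
    have hapos : 1 ≤ a.val := val_pos_of_ne_zero ha0
    obtain ⟨pb⟩ := (dichotomy v).resolve_left hvS
    have hreachak : H.Reachable a k := haS
    obtain ⟨pa⟩ := hreachak
    obtain ⟨d, hd, h1, h2⟩ := pb.exists_boundary_dart
      {w : ZMod n | a.val < w.val ∧ w.val < k.val} ⟨hav, hvk⟩
      (by rw [Set.mem_setOf_eq, ZMod.val_zero]; omega)
    rw [Set.mem_setOf_eq] at h1 h2
    have hyS : d.snd ∉ S := hsupp0 pb _ (pb.dart_snd_mem_support_of_mem_darts hd)
    have hxS : d.fst ∉ S := hsupp0 pb _ (pb.dart_fst_mem_support_of_mem_darts hd)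
    have hyk' : d.snd.val ≤ k.val := by
      by_contra h
      exact hyS (claimA d.snd (by omega))
    have hyk : d.snd ≠ k := fun h => hyS (h ▸ hkS)
    have hy_lt_k : d.snd.val < k.val := by
      rcases Nat.lt_or_ge d.snd.val k.val with h | h
      · exact h
      · have : d.snd.val = k.val := by omega
        exact absurd (ZMod.val_injective n this) hyk
    have hya : d.snd ≠ a := fun h => hyS (h ▸ haS)
    have hy_lt_a : d.snd.val < a.val := by
      rcases Nat.lt_or_ge d.snd.val a.val with h | h
      · exact h
      · have : a.val < d.snd.val ∨ a.val = d.snd.val := by omega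
        rcases this with h' | h'
        · exact absurd ⟨h', hy_lt_k⟩ h2
        · exact absurd (ZMod.val_injective n h'.symm) hya
    -- boundary dart on pa
    obtain ⟨d2, hd2, g1, g2⟩ := pa.exists_boundary_dart
      {w : ZMod n | d.snd.val < w.val ∧ w.val < d.fst.val} ⟨hy_lt_a, h1.1⟩
      (by rw [Set.mem_setOf_eq]; omega)
    rw [Set.mem_setOf_eq] at g1 g2
    have huS : d2.fst ∈ S := hsuppK pa _ (pa.dart_fst_mem_support_of_mem_darts hd2)
    have hwS : d2.snd ∈ S := hsuppK pa _ (pa.dart_snd_mem_support_of_mem_darts hd2)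
    have hwx : d2.snd ≠ d.fst := fun h => hxS (h ▸ hwS)
    have hwy : d2.snd ≠ d.snd := fun h => hyS (h ▸ hwS)
    have hGyx : G.Adj d.snd d.fst := (hHG d.adj).symm
    have hGuw : G.Adj d2.fst d2.snd := hHG d2.adj
    rcases Nat.lt_or_ge d2.snd.val d.snd.val with hc | hc
    · -- d2.snd.val < d.snd.val < d2.fst.val < d.fst.val
      exact hnc d2.snd d2.fst d.snd d.fst hGuw.symm hGyx ⟨hc, g1.1, g1.2⟩
    · have hc' : d.fst.val < d2.snd.val := by
        rcases Nat.lt_or_ge d.fst.val d2.snd.val with h | h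
        · exact h
        · have h3 : d2.snd.val < d.fst.val ∨ d2.snd.val = d.fst.val := by omega
          rcases h3 with h' | h'
          · have h4 : d2.snd.val = d.snd.val ∨ d.snd.val < d2.snd.val := by omega
            rcases h4 with h5 | h5
            · exact absurd (ZMod.val_injective n h5) hwy
            · exact absurd ⟨h5, h'⟩ g2
          · exact absurd (ZMod.val_injective n h') hwx
      -- d.snd.val < d2.fst.val < d.fst.val < d2.snd.val
      exact hnc d.snd d.fst d2.fst d2.snd hGyx hGuw ⟨g1.1, g1.2, hc'⟩
  -- define t as the minimum value over S
  have hTne : (ZMod.val '' S).Nonempty := ⟨k.val, k, hkS, rfl⟩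
  set t : ℕ := sInf (ZMod.val '' S) with htdef
  obtain ⟨a, haS, hat⟩ := Nat.sInf_mem hTne
  have hle : ∀ v ∈ S, t ≤ v.val := fun v hv => Nat.sInf_le ⟨v, hv, rfl⟩
  have ha0 : a ≠ 0 := fun h => h0S (h ▸ haS)
  have ht1 : 1 ≤ t := by
    have := val_pos_of_ne_zero ha0
    omega
  have htk : t ≤ k.val := hle k hkS
  have hkval : k.val < n := k.val_lt
  have htn : t ≤ n - 1 := by omega
  have memS_iff : ∀ v : ZMod n, v ∈ S ↔ t ≤ v.val := by
    intro v
    constructor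
    · exact hle v
    · intro hv
      rcases lt_trichotomy v.val k.val with h | h | h
      · rcases Nat.lt_or_ge a.val v.val with h' | h'
        · exact claimB a v haS h' h
        · have : v.val = a.val := by omega
          rw [ZMod.val_injective n this]
          exact haS
      · rw [ZMod.val_injective n h]
        exact hkS
      · exact claimA v h
  refine ⟨t, ht1, htn, ?_, ?_⟩
  · -- edge classification
    intro x y hxy
    by_cases he : s(x, y) = s(0, k)
    · rw [Sym2.eq_iff] at he
      rcases he with ⟨hx0, hyk⟩ | ⟨hxk, hy0⟩
      · exact Or.inr ⟨Or.inl hx0, Or.inr (hyk ▸ hle k hkS)⟩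
      · exact Or.inr ⟨Or.inr (hxk ▸ hle k hkS), Or.inl hy0⟩
    · have hH : H.Adj x y := by
        rw [hHdef, SimpleGraph.sdiff_adj, SimpleGraph.fromEdgeSet_adj]
        exact ⟨hxy, by simp [he]⟩
      by_cases hx : x ∈ S
      · have hy : y ∈ S := hH.symm.reachable.trans hx
        exact Or.inr ⟨Or.inr (hle x hx), Or.inr (hle y hy)⟩
      · have hy : y ∉ S := fun hy => hx (hH.reachable.trans hy)
        rw [memS_iff] at hx hy
        exact Or.inl ⟨by omega, by omega⟩
  · -- unique neighbor of 0 with val ≥ t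
    refine ⟨k, ⟨hk_adj, htk⟩, ?_⟩
    intro w ⟨hwadj, hwval⟩
    by_contra hwk
    have he : s(0, w) ≠ s(0, k) := by
      intro h
      rw [Sym2.eq_iff] at h
      rcases h with ⟨-, h⟩ | ⟨h, -⟩
      · exact hwk h
      · exact hk0 h.symm
    have hH : H.Adj 0 w := by
      rw [hHdef, SimpleGraph.sdiff_adj, SimpleGraph.fromEdgeSet_adj]
      exact ⟨hwadj, by simp [he]⟩
    have hwS : w ∈ S := (memS_iff w).mpr hwval
    exact h0S (hH.reachable.trans hwS)

end existence

section assembly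

lemma nat_card_sigma {ι : Type*} [Fintype ι] (f : ι → Type*) [∀ i, Finite (f i)] :
    Nat.card (Σ i, f i) = ∑ i, Nat.card (f i) := by
  classical
  letI : ∀ i, Fintype (f i) := fun i => Fintype.ofFinite _
  simp only [Nat.card_eq_fintype_card]
  exact Fintype.card_sigma

variable {n : ℕ}

noncomputable def sigmaEquiv [NeZero n] (hn : 2 ≤ n) :
    {G : SimpleGraph (ZMod n) // IsNCTree G} ≃
    Σ t : (Finset.Icc 1 (n - 1) : Finset ℕ),
      {G : SimpleGraph (ZMod n) // IsNCTree G ∧ SplitAt G t.1} where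
  toFun := fun G =>
    ⟨⟨(splitAt_exists hn G.2).choose,
      Finset.mem_Icc.mpr ⟨(splitAt_exists hn G.2).choose_spec.1,
        (splitAt_exists hn G.2).choose_spec.2.1⟩⟩,
     ⟨G.1, G.2, (splitAt_exists hn G.2).choose_spec.2.2⟩⟩
  invFun := fun P => ⟨P.2.1, P.2.2.1⟩
  left_inv := by
    rintro ⟨G, hG⟩
    rfl
  right_inv := by
    rintro ⟨⟨t, htmem⟩, ⟨G, hG, hs⟩⟩
    rw [Finset.mem_Icc] at htmem
    have hspec := (splitAt_exists hn hG).choose_spec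
    have heq : (splitAt_exists hn hG).choose = t :=
      splitAt_unique hG.1.isConnected hspec.1 hspec.2.1 htmem.1 htmem.2 hspec.2.2 hs
    subst heq
    rfl

lemma A_sum (hn : 2 ≤ n) : A n = ∑ t ∈ Finset.Icc 1 (n - 1), A₁ (n + 1 - t) * A t := by
  haveI : NeZero n := ⟨by omega⟩
  rw [A, Nat.card_congr (sigmaEquiv hn), nat_card_sigma,
    ← Finset.sum_coe_sort (Finset.Icc 1 (n - 1)) (fun t => A₁ (n + 1 - t) * A t)]
  apply Finset.sum_congr rfl
  intro t _
  obtain ⟨t, htmem⟩ := t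
  rw [Finset.mem_Icc] at htmem
  haveI : NeZero t := ⟨by omega⟩
  haveI : NeZero (n + 1 - t) := ⟨by omega⟩
  exact card_split (t := t) (m := n + 1 - t) (by omega) (by omega) (by omega)

lemma A_one : A 1 = 1 := by
  have hbot : ∀ G : SimpleGraph (ZMod 1), G = ⊥ := by
    intro G
    ext a b
    simp only [SimpleGraph.bot_adj, iff_false]
    intro h
    exact G.irrefl (v := a) (by rwa [Subsingleton.elim b a] at h)
  have htree : IsNCTree (⊥ : SimpleGraph (ZMod 1)) := by
    refine ⟨⟨⟨fun a b => ?_⟩, SimpleGraph.isAcyclic_bot⟩, ?_⟩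
    · rw [Subsingleton.elim a b]
    · rintro a b c d h - -
      exact h.elim
  haveI : Unique {G : SimpleGraph (ZMod 1) // IsNCTree G} :=
    { default := ⟨⊥, htree⟩
      uniq := fun G => Subtype.ext (hbot G.1) }
  rw [A]
  exact Nat.card_unique

end assembly

end NCT

theorem A_recurrence :
    A 1 = 1 ∧
    ∀ n : ℕ, 2 ≤ n → A n = ∑ j ∈ Finset.Icc 2 n, A₁ (n + 2 - j) * A (j - 1) := by
  refine ⟨NCT.A_one, fun n hn => ?_⟩
  rw [NCT.A_sum hn]
  refine Finset.sum_nbij' (fun t => t + 1) (fun j => j - 1) ?_ ?_ ?_ ?_ ?_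
  · intro a ha
    rw [Finset.mem_Icc] at ha ⊢
    omega
  · intro a ha
    rw [Finset.mem_Icc] at ha ⊢
    omega
  · intro a ha
    omega
  · intro a ha
    rw [Finset.mem_Icc] at ha
    omega
  · intro a ha
    rw [Finset.mem_Icc] at ha
    have h1 : n + 2 - (a + 1) = n + 1 - a := by omega
    have h2 : a + 1 - 1 = a := by omega
    rw [h1, h2]
end

section
/- Let 𝓑 be a formal power series over ℚ satisfying X·𝓑(X)³ = 𝓑(X) − 1. Then for every n ≥ 0 the coefficient of X^n in 𝓑 equals (1/(2n+1))·binom(3n, n). -/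
open PowerSeries Nat

lemma fuss_rec (n : ℕ) :
    (2*(n:ℚ)+2)*(2*n+3) * ((Nat.choose (3*(n+1)) (n+1) : ℚ) / (2*(n+1)+1))
      = 3*(3*n+1)*(3*n+2) * ((Nat.choose (3*n) n : ℚ) / (2*n+1)) := by
  have h1 : (Nat.choose (3*n) n : ℚ) = (3*n)! / ((n)! * (2*n)!) := by
    rw [Nat.cast_choose ℚ (by omega), show 3*n-n = 2*n by omega]
  have h2 : (Nat.choose (3*(n+1)) (n+1) : ℚ) = (3*n+3)! / ((n+1)! * (2*n+2)!) := by
    rw [Nat.cast_choose ℚ (by omega), show 3*(n+1) = 3*n+3 by omega,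
      show 3*n+3-(n+1) = 2*n+2 by omega]
  rw [h1, h2,
      show (3*n+3)! = (3*n+3) * ((3*n+2) * ((3*n+1) * (3*n)!)) by
        rw [← Nat.factorial_succ, ← Nat.factorial_succ, ← Nat.factorial_succ],
      show (2*n+2)! = (2*n+2) * ((2*n+1) * (2*n)!) by
        rw [← Nat.factorial_succ, ← Nat.factorial_succ],
      Nat.factorial_succ]
  have f1 : ((3*n)! : ℚ) ≠ 0 := Nat.cast_ne_zero.mpr (3*n).factorial_ne_zero
  have f2 : ((2*n)! : ℚ) ≠ 0 := Nat.cast_ne_zero.mpr (2*n).factorial_ne_zero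
  have f3 : ((n)! : ℚ) ≠ 0 := Nat.cast_ne_zero.mpr n.factorial_ne_zero
  push_cast
  field_simp
  ring

theorem coeff_of_ternary_functional_equation (𝓑 : PowerSeries ℚ)
    (h : PowerSeries.X * 𝓑 ^ 3 = 𝓑 - 1) :
    ∀ n : ℕ, PowerSeries.coeff n 𝓑 = (Nat.choose (3 * n) n : ℚ) / (2 * n + 1) := by
  have hD : (d⁄dX ℚ 𝓑) * (1 - 3*X*𝓑^2) = 𝓑^3 := by
    have h1 := congrArg (d⁄dX ℚ) h
    simp only [Derivation.leibniz, Derivation.leibniz_pow, derivative_X, map_sub,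
      Derivation.map_one_eq_zero, smul_eq_mul, nsmul_eq_mul] at h1
    push_cast at h1
    linear_combination -h1
  have hD2 : (d⁄dX ℚ (d⁄dX ℚ 𝓑)) * (1 - 3*X*𝓑^2)
      = 6*𝓑^2*(d⁄dX ℚ 𝓑) + 6*X*𝓑*(d⁄dX ℚ 𝓑)^2 := by
    have hD3 : d⁄dX ℚ 𝓑 = 𝓑*(𝓑*𝓑) + X*(𝓑*(𝓑*(d⁄dX ℚ 𝓑))) + X*(𝓑*(𝓑*(d⁄dX ℚ 𝓑)))
        + X*(𝓑*(𝓑*(d⁄dX ℚ 𝓑))) := by linear_combination hD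
    have h2 := congrArg (d⁄dX ℚ) hD3
    simp only [map_add, Derivation.leibniz, derivative_X, smul_eq_mul] at h2
    linear_combination h2
  have key : (X*(4-27*X)*(d⁄dX ℚ (d⁄dX ℚ 𝓑)) + 6*(1-9*X)*(d⁄dX ℚ 𝓑) - 6*𝓑)
      * (1-3*X*𝓑^2)^3 = 0 := by
    linear_combination (X*(4-27*X)*(1-3*X*𝓑^2)^2) * hD2
      + (X*(4-27*X)*(6*𝓑^2*(1-3*X*𝓑^2) + 6*X*𝓑*(2*𝓑^3 + ((d⁄dX ℚ 𝓑)*(1-3*X*𝓑^2) - 𝓑^3)))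
          + 6*(1-9*X)*(1-3*X*𝓑^2)^2) * hD
      + (6*X*𝓑^4 - 6*𝓑^2 - 6*𝓑) * h
  have hDne : (1 - 3*X*𝓑^2 : ℚ⟦X⟧) ≠ 0 := by
    intro hc
    have := congrArg (constantCoeff) hc
    simp [constantCoeff_X] at this
  have hODE : X*(4-27*X)*(d⁄dX ℚ (d⁄dX ℚ 𝓑)) + 6*(1-9*X)*(d⁄dX ℚ 𝓑) - 6*𝓑 = 0 := by
    rcases mul_eq_zero.mp key with h' | h'
    · exact h'
    · exact absurd ((pow_eq_zero_iff (by norm_num : (3:ℕ) ≠ 0)).mp h') hDne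
  have hE : X*(X*(C 27 * (d⁄dX ℚ (d⁄dX ℚ 𝓑))) + C 54 * (d⁄dX ℚ 𝓑)) + C 6 * 𝓑
      = X*(C 4 * (d⁄dX ℚ (d⁄dX ℚ 𝓑))) + C 6 * (d⁄dX ℚ 𝓑) := by
    simp only [map_ofNat]
    linear_combination -hODE
  have hrec : ∀ n : ℕ, (2*(n:ℚ)+2)*(2*n+3) * coeff (n+1) 𝓑
      = 3*(3*n+1)*(3*n+2) * coeff n 𝓑 := by
    intro n
    match n with
    | 0 =>
      have e := congrArg (coeff 0) hE
      simp only [map_add, coeff_zero_X_mul, coeff_C_mul, coeff_derivative,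
        zero_add, add_zero] at e
      push_cast at e ⊢
      linear_combination -e
    | 1 =>
      have e := congrArg (coeff 1) hE
      simp only [map_add, coeff_succ_X_mul, coeff_zero_X_mul, coeff_C_mul,
        coeff_derivative, zero_add, add_zero] at e
      push_cast at e ⊢
      linear_combination -e
    | (n+2) =>
      have e := congrArg (coeff (n+2)) hE
      simp only [map_add, coeff_succ_X_mul, coeff_C_mul, coeff_derivative,
        show n+1+1 = n+2 from rfl, show n+1+1+1 = n+3 from rfl,
        show n+2+1 = n+3 from rfl] at e
      push_cast at e ⊢
      linear_combination -e
  have ha0 : coeff 0 𝓑 = 1 := by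
    have := congrArg (constantCoeff) h
    simp [constantCoeff_X] at this
    rw [coeff_zero_eq_constantCoeff]
    linarith [this]
  intro n
  induction n with
  | zero => simpa using ha0
  | succ n ih =>
    have h1 := hrec n
    rw [ih] at h1
    have h2 := fuss_rec n
    have hne : (2*(n:ℚ)+2)*(2*n+3) ≠ 0 := by positivity
    have := mul_left_cancel₀ hne (h1.trans h2.symm)
    push_cast
    push_cast at this
    linarith [this]
end

section
/- Let G be an n-noncrossing tree and suppose the rotation ρ^j (sending each vertex v to v+j mod n), for some 0 < j < n, maps the edge set of G to itself. Then n is even and j = n/2; moreover G contains exactly one edge whose endpoints are antipodal, i.e., exactly one edge of the form {a, a + n/2 (mod n)}, and this edge is fixed by the rotation. -/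
set_option linter.unusedSectionVars false



/-- Rotation by `j`: the image of a graph on `ZMod n` under the vertex map `v ↦ v + j`. -/
def rotate {n : ℕ} (j : ZMod n) (G : SimpleGraph (ZMod n)) : SimpleGraph (ZMod n) :=
  G.map (Equiv.addRight j).toEmbedding



/-- A permutation of prime order: cardinality is congruent to number of fixed points mod p. -/
private lemma card_modEq_fixed {α : Type*} [Fintype α] [DecidableEq α]
    (σ : Equiv.Perm α) {p : ℕ} (hp : p.Prime) (hσ : σ ^ p = 1) :
    Fintype.card α ≡ Fintype.card {x : α // σ x = x} [MOD p] := by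
  have hord : orderOf σ ∣ p := orderOf_dvd_of_pow_eq_one hσ
  have hcyc : ∀ r ∈ σ.cycleType, r = p := by
    intro r hr
    have h2 := Equiv.Perm.two_le_of_mem_cycleType hr
    have hd : r ∣ p := dvd_trans (Multiset.dvd_lcm hr)
      (by rw [Equiv.Perm.lcm_cycleType]; exact hord)
    rcases hp.eq_one_or_self_of_dvd r hd with h | h
    · omega
    · exact h
  have hsup : p ∣ σ.support.card := by
    rw [← Equiv.Perm.sum_cycleType]
    exact Multiset.dvd_sum (fun x hx => (hcyc x hx) ▸ dvd_refl p)
  have hfix : Fintype.card {x : α // σ x = x} = (Finset.univ.filter (fun x => σ x = x)).card :=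
    Fintype.card_subtype _
  have hcompl : (Finset.univ.filter (fun x => σ x = x)).card + σ.support.card
      = Fintype.card α := by
    have h1 : σ.support = Finset.univ.filter (fun x => ¬ σ x = x) := by
      ext x; simp [Equiv.Perm.mem_support]
    rw [h1]
    exact Finset.card_filter_add_card_filter_not _
  rw [hfix]
  calc Fintype.card α = (Finset.univ.filter (fun x => σ x = x)).card + σ.support.card :=
        hcompl.symm
    _ ≡ (Finset.univ.filter (fun x => σ x = x)).card + 0 [MOD p] :=
        Nat.ModEq.add_left _ ((Nat.modEq_zero_iff_dvd).mpr hsup)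
    _ = (Finset.univ.filter (fun x => σ x = x)).card := by omega


private def rotPerm {n : ℕ} (k : ZMod n) : Equiv.Perm (Sym2 (ZMod n)) where
  toFun := Sym2.map (· + k)
  invFun := Sym2.map (· + (-k))
  left_inv e := by
    induction e using Sym2.ind with
    | _ a b => simp [Sym2.map_pair_eq]
  right_inv e := by
    induction e using Sym2.ind with
    | _ a b => simp [Sym2.map_pair_eq]

private lemma rotPerm_apply {n : ℕ} (k : ZMod n) (e : Sym2 (ZMod n)) :
    rotPerm k e = Sym2.map (· + k) e := rfl

private lemma rotPerm_pow_apply {n : ℕ} (k : ZMod n) (t : ℕ) (e : Sym2 (ZMod n)) :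
    ((rotPerm k) ^ t) e = Sym2.map (· + t • k) e := by
  induction t with
  | zero =>
    induction e using Sym2.ind with
    | _ a b => simp [Sym2.map_pair_eq]
  | succ t ih =>
    rw [pow_succ', Equiv.Perm.mul_apply, rotPerm_apply, ih, Sym2.map_map]
    induction e using Sym2.ind with
    | _ a b =>
      simp only [Sym2.map_pair_eq, Function.comp_apply]
      rw [succ_nsmul, add_assoc, add_assoc]

private lemma map_add_fixed_iff {n : ℕ} {k : ZMod n} (hk : k ≠ 0) (e : Sym2 (ZMod n)) :
    Sym2.map (· + k) e = e ↔ (k + k = 0 ∧ ∃ a, e = s(a, a + k)) := by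
  induction e using Sym2.ind with
  | _ a b =>
    rw [Sym2.map_pair_eq, Sym2.eq_iff]
    constructor
    · rintro (⟨h1, h2⟩ | ⟨h1, h2⟩)
      · exact absurd (by rwa [add_eq_left] at h1) hk
      · refine ⟨?_, a, by rw [h1]⟩
        have : a + k + k = a := by rw [h1, h2]
        rwa [add_assoc, add_eq_left] at this
    · rintro ⟨hkk, a', he⟩
      rw [Sym2.eq_iff] at he
      rcases he with ⟨rfl, rfl⟩ | ⟨h1, h2⟩
      · exact Or.inr ⟨rfl, by rw [add_assoc, hkk, add_zero]⟩
      · refine Or.inr ⟨?_, ?_⟩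
        · rw [h1, h2, add_assoc, hkk, add_zero]
        · rw [h2, ← h1]

private lemma order_two_val {n : ℕ} [NeZero n] {k : ZMod n} (hk : k ≠ 0) (h2 : k + k = 0) :
    k.val + k.val = n := by
  have h0 : (k + k).val = 0 := by rw [h2, ZMod.val_zero]
  rw [ZMod.val_add] at h0
  have h1 : k.val < n := ZMod.val_lt k
  have h3 : k.val ≠ 0 := fun hh => hk ((ZMod.val_eq_zero k).mp hh)
  have hdvd : n ∣ k.val + k.val := Nat.dvd_of_mod_eq_zero h0
  exact Nat.eq_of_dvd_of_lt_two_mul (by omega) hdvd (by omega)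

section
variable {n : ℕ} [NeZero n] {G : SimpleGraph (ZMod n)}

private lemma val_add_half_lt {a : ZMod n} (heven : Even n) (ha : a.val < n / 2) :
    (a + ((n / 2 : ℕ) : ZMod n)).val = a.val + n / 2 := by
  have hn : 0 < n := Nat.pos_of_ne_zero (NeZero.ne n)
  have hvh : (((n / 2 : ℕ)) : ZMod n).val = n / 2 := ZMod.val_natCast_of_lt (by omega)
  rw [ZMod.val_add, hvh]
  exact Nat.mod_eq_of_lt (by obtain ⟨c, hc⟩ := heven; omega)

private lemma val_add_half_ge {a : ZMod n} (heven : Even n) (ha : n / 2 ≤ a.val) :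
    (a + ((n / 2 : ℕ) : ZMod n)).val = a.val - n / 2 := by
  have hn : 0 < n := Nat.pos_of_ne_zero (NeZero.ne n)
  have hlt : a.val < n := ZMod.val_lt a
  have hvh : (((n / 2 : ℕ)) : ZMod n).val = n / 2 := ZMod.val_natCast_of_lt (by omega)
  obtain ⟨c, hc⟩ := heven
  rw [ZMod.val_add, hvh, Nat.mod_eq_sub_mod (by omega), Nat.mod_eq_of_lt (by omega)]
  omega

private lemma half_add_half (heven : Even n) :
    ((n / 2 : ℕ) : ZMod n) + ((n / 2 : ℕ) : ZMod n) = 0 := by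
  obtain ⟨c, hc⟩ := heven
  rw [← Nat.cast_add, show n / 2 + n / 2 = n by omega, ZMod.natCast_self]

/-- normalize an antipodal edge to a representative with val < n/2 -/
private lemma antipodal_normalize (heven : Even n) (a : ZMod n) :
    ∃ a' : ZMod n, a'.val < n / 2 ∧
      s(a', a' + ((n / 2 : ℕ) : ZMod n)) = s(a, a + ((n / 2 : ℕ) : ZMod n)) := by
  have hn : 0 < n := Nat.pos_of_ne_zero (NeZero.ne n)
  set h : ZMod n := ((n / 2 : ℕ) : ZMod n) with hh
  by_cases hc : a.val < n / 2
  · exact ⟨a, hc, rfl⟩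
  · push_neg at hc
    refine ⟨a + h, ?_, ?_⟩
    · rw [val_add_half_ge heven hc]
      have := ZMod.val_lt a
      obtain ⟨c, hcc⟩ := heven; omega
    · rw [add_assoc, half_add_half heven, add_zero]
      exact Sym2.eq_swap

private lemma cross_aux (heven : Even n) (hNC : Noncrossing G) {a c : ZMod n}
    (hadj1 : G.Adj a (a + ((n / 2 : ℕ) : ZMod n)))
    (hadj2 : G.Adj c (c + ((n / 2 : ℕ) : ZMod n)))
    (ha : a.val < n / 2) (hc : c.val < n / 2) (hlt : a.val < c.val) : False := by
  refine hNC a _ c _ hadj1 hadj2 ⟨hlt, ?_, ?_⟩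
  · rw [val_add_half_lt heven ha]; omega
  · rw [val_add_half_lt heven ha, val_add_half_lt heven hc]; omega

private lemma antipodal_unique (heven : Even n) (hNC : Noncrossing G)
    {e1 e2 : Sym2 (ZMod n)} (h1 : e1 ∈ G.edgeSet) (h2 : e2 ∈ G.edgeSet)
    (ha : ∃ a, e1 = s(a, a + ((n / 2 : ℕ) : ZMod n)))
    (hb : ∃ a, e2 = s(a, a + ((n / 2 : ℕ) : ZMod n))) : e1 = e2 := by
  obtain ⟨a, rfl⟩ := ha
  obtain ⟨c, rfl⟩ := hb
  obtain ⟨a', ha', hae⟩ := antipodal_normalize heven a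
  obtain ⟨c', hc', hce⟩ := antipodal_normalize heven c
  rw [← hae] at h1 ⊢
  rw [← hce] at h2 ⊢
  have hadj1 := (SimpleGraph.mem_edgeSet G).mp h1
  have hadj2 := (SimpleGraph.mem_edgeSet G).mp h2
  rcases lt_trichotomy a'.val c'.val with h | h | h
  · exact absurd (cross_aux heven hNC hadj1 hadj2 ha' hc' h) (by simp)
  · have : a' = c' := by
      have := ZMod.natCast_rightInverse (n := n)
      calc a' = ((a'.val : ℕ) : ZMod n) := (this a').symm
        _ = ((c'.val : ℕ) : ZMod n) := by rw [h]
        _ = c' := this c'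
    rw [this]
  · exact absurd (cross_aux heven hNC hadj2 hadj1 hc' ha' h) (by simp)

end


theorem rotation_symmetry_of_ncTree {n : ℕ} (hn : 1 ≤ n)
    (G : SimpleGraph (ZMod n)) (hG : IsNCTree G)
    (j : ℕ) (hj0 : 0 < j) (hjn : j < n)
    (hinv : rotate (j : ZMod n) G = G) :
    Even n ∧ j = n / 2 ∧
      (∃! e : Sym2 (ZMod n), e ∈ G.edgeSet ∧
          ∃ a : ZMod n, e = s(a, a + ((n / 2 : ℕ) : ZMod n))) ∧
      (∀ e ∈ G.edgeSet, (∃ a : ZMod n, e = s(a, a + ((n / 2 : ℕ) : ZMod n))) →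
        Sym2.map (· + (j : ZMod n)) e = e) := by
  classical
  haveI : NeZero n := ⟨by omega⟩
  haveI : Fintype ↑G.edgeSet := Fintype.ofFinite _
  set J : ZMod n := ((j : ℕ) : ZMod n) with hJdef
  have hJval : J.val = j := ZMod.val_natCast_of_lt hjn
  have hJ0 : J ≠ 0 := fun h => by
    have : J.val = 0 := by rw [h, ZMod.val_zero]
    omega
  -- invariance of adjacency under rotation by J
  have hadj : ∀ a b : ZMod n, G.Adj (a + J) (b + J) ↔ G.Adj a b := by
    intro a b
    constructor
    · intro h
      rw [← hinv] at h
      obtain ⟨a', b', h', ha, hb⟩ := (SimpleGraph.map_adj _ _ _ _).mp h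
      simp only [Equiv.coe_toEmbedding, Equiv.coe_addRight] at ha hb
      rwa [add_left_injective J ha, add_left_injective J hb] at h'
    · intro h
      rw [← hinv]
      exact (SimpleGraph.map_adj _ _ _ _).mpr ⟨a, b, h, rfl, rfl⟩
  have hadjt : ∀ (t : ℕ) (a b : ZMod n), G.Adj (a + t • J) (b + t • J) ↔ G.Adj a b := by
    intro t
    induction t with
    | zero => intro a b; simp
    | succ t ih =>
      intro a b
      rw [succ_nsmul, ← add_assoc, ← add_assoc, hadj, ih]
  -- edge count
  have hcard : Fintype.card ↑G.edgeSet = n - 1 := by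
    have h1 := hG.1.card_edgeFinset
    rw [ZMod.card] at h1
    have h2 : G.edgeFinset.card = Fintype.card ↑G.edgeSet := Set.toFinset_card _
    omega
  -- the order of J
  set m : ℕ := addOrderOf J with hmdef
  have hmn : m ∣ n := addOrderOf_dvd_of_nsmul_eq_zero (by
    show n • J = 0
    rw [nsmul_eq_mul, ZMod.natCast_self, zero_mul])
  have hm0 : m ≠ 0 := fun h => by rw [h] at hmn; omega
  have hm1 : m ≠ 1 := fun h => by
    have := addOrderOf_nsmul_eq_zero J
    rw [← hmdef, h, one_nsmul] at this
    exact hJ0 this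
  have hm2 : 2 ≤ m := by omega
  -- generic setup for a multiple k = t • J of J
  have hsetup : ∀ t : ℕ, ∃ hmem : (∀ e : Sym2 (ZMod n), e ∈ G.edgeSet ↔ rotPerm (t • J) e ∈ G.edgeSet),
      True := by
    intro t
    refine ⟨fun e => ?_, trivial⟩
    induction e using Sym2.ind with
    | _ a b =>
      rw [rotPerm_apply, Sym2.map_pair_eq, SimpleGraph.mem_edgeSet, SimpleGraph.mem_edgeSet]
      exact (hadjt t a b).symm
  rcases Nat.even_or_odd m with hme | hmo
  · -- m even: the key case
    set k : ZMod n := (m / 2) • J with hkdef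
    have hkk : k + k = 0 := by
      rw [← two_nsmul, hkdef, ← mul_nsmul]
      have : 2 * (m / 2) = m := by obtain ⟨c, hc⟩ := hme; omega
      rw [mul_comm, this]
      exact addOrderOf_nsmul_eq_zero J
    have hk0 : k ≠ 0 := by
      intro h
      have hd : m ∣ m / 2 := addOrderOf_dvd_of_nsmul_eq_zero h
      have : m / 2 ≠ 0 := by omega
      have := Nat.le_of_dvd (by omega) hd
      omega
    have hkval := order_two_val hk0 hkk
    have hkvlt : k.val < n := ZMod.val_lt k
    have heven : Even n := ⟨k.val, by omega⟩
    have hkh : k = ((n / 2 : ℕ) : ZMod n) := by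
      have : n / 2 = k.val := by omega
      rw [this]
      exact (ZMod.natCast_rightInverse k).symm
    -- the involution on edges
    obtain ⟨hmem, -⟩ := hsetup (m / 2)
    rw [← hkdef] at hmem
    set σ : Equiv.Perm ↑G.edgeSet := (rotPerm k).subtypePerm (fun e => (hmem e).symm) with hσdef
    have hσ2 : σ ^ 2 = 1 := by
      ext x
      rw [hσdef, Equiv.Perm.subtypePerm_pow]
      simp only [Equiv.Perm.subtypePerm_apply, Equiv.Perm.one_apply]
      rw [rotPerm_pow_apply]
      have h2k : (2 : ℕ) • k = 0 := by rw [two_nsmul, hkk]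
      rw [h2k]
      induction (x : Sym2 (ZMod n)) using Sym2.ind with
      | _ a b => simp [Sym2.map_pair_eq]
    have hmod := card_modEq_fixed σ Nat.prime_two hσ2
    rw [hcard] at hmod
    -- number of fixed points is odd, hence positive
    have hfpos : Fintype.card {x : ↑G.edgeSet // σ x = x} ≠ 0 := by
      intro h
      rw [h] at hmod
      have : (n - 1) % 2 = 0 % 2 := hmod
      obtain ⟨c, hc⟩ := heven
      omega
    have hne : Nonempty {x : ↑G.edgeSet // σ x = x} :=
      Fintype.card_pos_iff.mp (Nat.pos_of_ne_zero hfpos)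
    obtain ⟨⟨⟨e0, he0⟩, hfix⟩⟩ := hne
    have hfix' : Sym2.map (· + k) e0 = e0 := by
      have := hfix
      rw [hσdef, Equiv.Perm.subtypePerm_apply, Subtype.ext_iff] at this
      exact this
    obtain ⟨-, a0, ha0⟩ := (map_add_fixed_iff hk0 e0).mp hfix'
    have he0ant : ∃ a, e0 = s(a, a + ((n / 2 : ℕ) : ZMod n)) := ⟨a0, by rw [ha0, hkh]⟩
    -- rotation by J fixes e0
    have hJe0mem : Sym2.map (· + J) e0 ∈ G.edgeSet := by
      rw [ha0, Sym2.map_pair_eq, SimpleGraph.mem_edgeSet]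
      have := (hadj a0 (a0 + k)).mpr ((SimpleGraph.mem_edgeSet G).mp (ha0 ▸ he0))
      exact this
    have hJe0ant : ∃ a, Sym2.map (· + J) e0 = s(a, a + ((n / 2 : ℕ) : ZMod n)) := by
      refine ⟨a0 + J, ?_⟩
      rw [ha0, Sym2.map_pair_eq, hkh]
      congr 1
      ring_nf
    have hJfix : Sym2.map (· + J) e0 = e0 :=
      antipodal_unique heven hG.2 hJe0mem he0 hJe0ant he0ant
    obtain ⟨hJJ, -⟩ := (map_add_fixed_iff hJ0 e0).mp hJfix
    have hJval2 := order_two_val hJ0 hJJ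
    have hjhalf : j = n / 2 := by
      have e1 : J.val + J.val = n := hJval2
      have e2 : J.val = j := hJval
      omega
    refine ⟨heven, hjhalf, ⟨e0, ⟨he0, he0ant⟩, ?_⟩, ?_⟩
    · rintro e' ⟨he', ha'⟩
      exact antipodal_unique heven hG.2 he' he0 ha' he0ant
    · rintro e he ⟨a, rfl⟩
      have hJh : J = ((n / 2 : ℕ) : ZMod n) := by rw [hJdef, hjhalf]
      rw [Sym2.map_pair_eq, hJh, add_assoc, half_add_half heven, add_zero]
      exact Sym2.eq_swap
  · -- m odd: contradiction
    exfalso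
    set p : ℕ := m.minFac with hpdef
    have hp : p.Prime := Nat.minFac_prime hm1
    have hpm : p ∣ m := Nat.minFac_dvd m
    have hpodd : p ≠ 2 := by
      intro h
      have h2 : (2 : ℕ) ∣ m := h ▸ hpm
      rw [Nat.odd_iff] at hmo
      omega
    set k : ZMod n := (m / p) • J with hkdef
    have hpk : p • k = 0 := by
      rw [hkdef, ← mul_nsmul, Nat.div_mul_cancel hpm]
      exact addOrderOf_nsmul_eq_zero J
    have hk0 : k ≠ 0 := by
      intro h
      have hd : m ∣ m / p := addOrderOf_dvd_of_nsmul_eq_zero h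
      have hplem : p ≤ m := Nat.le_of_dvd (by omega) hpm
      have hmp : 1 ≤ m / p := (Nat.one_le_div_iff hp.pos).mpr hplem
      have hlt : m / p < m := Nat.div_lt_self (by omega) hp.one_lt
      have := Nat.le_of_dvd (by omega) hd
      omega
    obtain ⟨hmem, -⟩ := hsetup (m / p)
    rw [← hkdef] at hmem
    set σ : Equiv.Perm ↑G.edgeSet := (rotPerm k).subtypePerm (fun e => (hmem e).symm) with hσdef
    have hσp : σ ^ p = 1 := by
      ext x
      rw [hσdef, Equiv.Perm.subtypePerm_pow]
      simp only [Equiv.Perm.subtypePerm_apply, Equiv.Perm.one_apply]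
      rw [rotPerm_pow_apply, hpk]
      induction (x : Sym2 (ZMod n)) using Sym2.ind with
      | _ a b => simp [Sym2.map_pair_eq]
    have hnofix : IsEmpty {x : ↑G.edgeSet // σ x = x} := by
      refine ⟨fun ⟨⟨e, he⟩, hfix⟩ => ?_⟩
      have hfix' : Sym2.map (· + k) e = e := by
        rw [hσdef, Equiv.Perm.subtypePerm_apply, Subtype.ext_iff] at hfix
        exact hfix
      obtain ⟨hkk, -⟩ := (map_add_fixed_iff hk0 e).mp hfix'
      have hd2 : addOrderOf k ∣ 2 := addOrderOf_dvd_of_nsmul_eq_zero (by rw [two_nsmul]; exact hkk)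
      have hdp : addOrderOf k ∣ p := addOrderOf_dvd_of_nsmul_eq_zero hpk
      have hdne1 : addOrderOf k ≠ 1 := by
        intro h
        have := addOrderOf_nsmul_eq_zero k
        rw [h, one_nsmul] at this
        exact hk0 this
      have hdne0 : addOrderOf k ≠ 0 := fun h => by rw [h] at hd2; omega
      have hdle : addOrderOf k ≤ 2 := Nat.le_of_dvd (by omega) hd2
      have hd2' : addOrderOf k = 2 := by omega
      rw [hd2'] at hdp
      rcases hp.eq_one_or_self_of_dvd 2 hdp with h | h <;> omega
    have hfz : Fintype.card {x : ↑G.edgeSet // σ x = x} = 0 := Fintype.card_eq_zero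
    have hmod := card_modEq_fixed σ hp hσp
    rw [hcard, hfz] at hmod
    have hdvd1 : p ∣ n - 1 := (Nat.modEq_zero_iff_dvd).mp hmod
    have hdvdn : p ∣ n := hpm.trans hmn
    have : p ∣ n - (n - 1) := Nat.dvd_sub hdvdn hdvd1
    rw [show n - (n - 1) = 1 by omega] at this
    have := Nat.le_of_dvd (by omega) this
    have := hp.one_lt
    omega
end

section
/- For every odd integer n ≥ 1, the rotation action of ℤ/nℤ on the set of n-noncrossing trees is free, i.e., no n-noncrossing tree is invariant under a nontrivial rotation, so every orbit has exactly n elements; in particular n divides A(n). -/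
/-! ### Basic properties of `rotate` -/

lemma rotate_adj {n : ℕ} (j : ZMod n) (G : SimpleGraph (ZMod n)) (x y : ZMod n) :
    (rotate j G).Adj x y ↔ G.Adj (x - j) (y - j) := by
  simp only [rotate, SimpleGraph.map_adj, Equiv.coe_toEmbedding, Equiv.coe_addRight]
  constructor
  · rintro ⟨-, a, b, h, rfl, rfl⟩; simpa using h
  · intro h; exact ⟨fun hxy => h.ne (by rw [hxy]), x - j, y - j, h, by ring, by ring⟩

lemma rotate_zero {n : ℕ} (G : SimpleGraph (ZMod n)) : rotate 0 G = G := by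
  ext x y; rw [rotate_adj]; simp

lemma rotate_rotate {n : ℕ} (a b : ZMod n) (G : SimpleGraph (ZMod n)) :
    rotate a (rotate b G) = rotate (b + a) G := by
  unfold rotate
  rw [SimpleGraph.map_map]
  congr 1
  ext x
  simp [add_assoc]

/-! ### The cyclic crossing relation -/

section Cross
variable {n : ℕ} [NeZero n]

lemma val_sub_of_le {x y : ZMod n} (h : y.val ≤ x.val) : (x - y).val = x.val - y.val := by
  have hx : ((x.val : ℕ) : ZMod n) = x := ZMod.natCast_rightInverse x
  have hy : ((y.val : ℕ) : ZMod n) = y := ZMod.natCast_rightInverse y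
  have : x - y = ((x.val - y.val : ℕ) : ZMod n) := by
    rw [Nat.cast_sub h, hx, hy]
  rw [this, ZMod.val_cast_of_lt]
  exact lt_of_le_of_lt (Nat.sub_le _ _) (ZMod.val_lt x)

/-- Cyclic crossing pattern: starting at `a` and going around the circle,
we meet `c`, then `b`, then `d`. -/
def Cross (a b c d : ZMod n) : Prop :=
  0 < (c - a).val ∧ (c - a).val < (b - a).val ∧ (b - a).val < (d - a).val

omit [NeZero n] in
lemma cross_shift {a b c d : ZMod n} (j : ZMod n) (h : Cross a b c d) :
    Cross (a + j) (b + j) (c + j) (d + j) := by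
  unfold Cross at *
  simpa only [add_sub_add_right_eq_sub] using h

lemma cross_of_lt {a b c d : ZMod n} (h1 : a.val < c.val) (h2 : c.val < b.val)
    (h3 : b.val < d.val) : Cross a b c d := by
  refine ⟨?_, ?_, ?_⟩
  · rw [val_sub_of_le h1.le]; omega
  · rw [val_sub_of_le h1.le, val_sub_of_le (h1.trans h2).le]; omega
  · rw [val_sub_of_le (h1.trans h2).le, val_sub_of_le ((h1.trans h2).trans h3).le]; omega

lemma cross_cases {a b c d : ZMod n} (h : Cross a b c d) :
    (a.val < c.val ∧ c.val < b.val ∧ b.val < d.val) ∨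
    (c.val < b.val ∧ b.val < d.val ∧ d.val < a.val) ∨
    (b.val < d.val ∧ d.val < a.val ∧ a.val < c.val) ∨
    (d.val < a.val ∧ a.val < c.val ∧ c.val < b.val) := by
  obtain ⟨h0, h1, h2⟩ := h
  have hc : c.val = (a.val + (c - a).val) % n := by
    conv_lhs => rw [show c = a + (c - a) by ring]
    rw [ZMod.val_add]
  have hb : b.val = (a.val + (b - a).val) % n := by
    conv_lhs => rw [show b = a + (b - a) by ring]
    rw [ZMod.val_add]
  have hd : d.val = (a.val + (d - a).val) % n := by
    conv_lhs => rw [show d = a + (d - a) by ring]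
    rw [ZMod.val_add]
  have hA : a.val < n := ZMod.val_lt a
  have hz : (d - a).val < n := ZMod.val_lt _
  have key : ∀ w : ℕ, w < n →
      (a.val + w) % n = a.val + w ∧ a.val + w < n ∨
      (a.val + w) % n = a.val + w - n ∧ n ≤ a.val + w := by
    intro w hw
    rcases lt_or_ge (a.val + w) n with hlt | hge
    · exact Or.inl ⟨Nat.mod_eq_of_lt hlt, hlt⟩
    · refine Or.inr ⟨?_, hge⟩
      rw [Nat.mod_eq_sub_mod hge, Nat.mod_eq_of_lt (by omega)]
  have kc := key ((c - a).val) (by omega)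
  have kb := key ((b - a).val) (by omega)
  have kd := key ((d - a).val) hz
  rcases kc with ⟨ec, _⟩ | ⟨ec, _⟩ <;> rcases kb with ⟨eb, _⟩ | ⟨eb, _⟩ <;>
    rcases kd with ⟨ed, _⟩ | ⟨ed, _⟩ <;> omega

lemma noncrossing_rotate {G : SimpleGraph (ZMod n)} (hG : Noncrossing G) (j : ZMod n) :
    Noncrossing (rotate j G) := by
  intro a b c d hab hcd h
  rw [rotate_adj] at hab hcd
  have hcr : Cross a b c d := cross_of_lt h.1 h.2.1 h.2.2
  have hcr' : Cross (a - j) (b - j) (c - j) (d - j) := by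
    simpa [sub_eq_add_neg] using cross_shift (-j) hcr
  rcases cross_cases hcr' with h' | h' | h' | h'
  · exact hG _ _ _ _ hab hcd h'
  · exact hG _ _ _ _ hcd hab.symm ⟨h'.1, h'.2⟩
  · exact hG _ _ _ _ hab.symm hcd.symm ⟨h'.1, h'.2⟩
  · exact hG _ _ _ _ hcd.symm hab ⟨h'.1, h'.2⟩

end Cross

/-! ### Rotation preserves noncrossing trees -/

lemma isTree_rotate {n : ℕ} {G : SimpleGraph (ZMod n)} (h : G.IsTree) (j : ZMod n) :
    (rotate j G).IsTree := by
  have e : G ≃g rotate j G := SimpleGraph.Iso.map (Equiv.addRight j) G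
  constructor
  · exact e.connected_iff.mp h.isConnected
  · intro v p hp
    exact h.IsAcyclic (p.map e.symm.toHom) (hp.map e.symm.toEquiv.injective)

lemma isNCTree_rotate {n : ℕ} [NeZero n] {G : SimpleGraph (ZMod n)} (h : IsNCTree G)
    (j : ZMod n) : IsNCTree (rotate j G) :=
  ⟨isTree_rotate h.1 j, noncrossing_rotate h.2 j⟩

/-! ### The stabilizer subgroup and the action on edges -/

/-- The additive subgroup of rotations stabilizing `G`. -/
def rotStab {n : ℕ} (G : SimpleGraph (ZMod n)) : AddSubgroup (ZMod n) where
  carrier := {v | rotate v G = G}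
  zero_mem' := rotate_zero G
  add_mem' {a b} ha hb := by
    show rotate (a + b) G = G
    rw [← rotate_rotate, ha, hb]
  neg_mem' {a} ha := by
    show rotate (-a) G = G
    conv_lhs => rw [← ha]
    rw [rotate_rotate, add_neg_cancel, rotate_zero]

lemma edge_map_mem {n : ℕ} {G : SimpleGraph (ZMod n)} {v : ZMod n} (hv : rotate v G = G)
    {e : Sym2 (ZMod n)} (he : e ∈ G.edgeSet) : e.map (· + v) ∈ G.edgeSet := by
  rw [← hv]
  induction e with
  | h x y =>
    rw [SimpleGraph.mem_edgeSet] at he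
    simp only [Sym2.map_pair_eq, SimpleGraph.mem_edgeSet, rotate, SimpleGraph.map_adj,
      Equiv.coe_toEmbedding, Equiv.coe_addRight]
    exact ⟨fun hne => he.ne (add_right_cancel hne), x, y, he, rfl, rfl⟩

instance edgeAction {n : ℕ} (G : SimpleGraph (ZMod n)) :
    AddAction (rotStab G) G.edgeSet where
  vadd k e := ⟨e.1.map (· + (k : ZMod n)), edge_map_mem k.2 e.2⟩
  zero_vadd e := by
    apply Subtype.ext
    show Sym2.map _ _ = _
    simp
  add_vadd a b e := by
    apply Subtype.ext
    show Sym2.map _ _ = Sym2.map _ (Sym2.map _ _)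
    rw [Sym2.map_map]
    congr 1
    funext x
    show x + ((a : ZMod n) + b) = x + (b : ZMod n) + a
    ring

/-- For a free additive action, the group cardinality divides that of the set. -/
lemma nat_card_dvd_of_free {α β : Type*} [AddGroup α] [AddAction α β]
    (h : ∀ b : β, AddAction.stabilizer α b = ⊥) : Nat.card α ∣ Nat.card β := by
  let e := AddAction.selfEquivSigmaOrbitsQuotientStabilizer α β
  have e2 : β ≃ (AddAction.orbitRel.Quotient α β) × α :=
    (e.trans (Equiv.sigmaCongrRight fun ω => by
      rw [h ω.out]; exact QuotientAddGroup.quotientBot.toEquiv)).trans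
      (Equiv.sigmaEquivProd _ _)
  rw [Nat.card_congr e2, Nat.card_prod]
  exact dvd_mul_left _ _

lemma zmod_two_smul_eq_zero {n : ℕ} (hodd : Odd n) {k : ZMod n} (h : k + k = 0) : k = 0 := by
  have h2 : IsUnit (2 : ZMod n) := by
    rw [show ((2 : ZMod n)) = ((2 : ℕ) : ZMod n) by norm_cast, ZMod.isUnit_iff_coprime]
    exact Nat.coprime_two_left.mpr hodd
  have h0 : (2 : ZMod n) * k = 0 := by rw [two_mul]; exact h
  exact (IsUnit.mul_right_eq_zero h2).mp h0

lemma edge_stab_free {n : ℕ} (hodd : Odd n) (G : SimpleGraph (ZMod n)) (e : G.edgeSet) :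
    AddAction.stabilizer (rotStab G) e = ⊥ := by
  rw [AddSubgroup.eq_bot_iff_forall]
  intro k hk
  rw [AddAction.mem_stabilizer_iff] at hk
  replace hk : Sym2.map (· + (k : ZMod n)) e.1 = e.1 := congrArg Subtype.val hk
  have he : e.1 ∈ G.edgeSet := e.2
  apply Subtype.ext
  show (k : ZMod n) = 0
  obtain ⟨⟨x, y⟩, hxy⟩ := Quot.exists_rep e.1
  have hxy' : e.1 = s(x, y) := hxy.symm
  rw [hxy'] at hk he
  rw [SimpleGraph.mem_edgeSet] at he
  rw [Sym2.map_pair_eq, Sym2.eq_iff] at hk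
  rcases hk with ⟨h1, _⟩ | ⟨h1, h2⟩
  · exact add_eq_left.mp h1
  · have hsum : (k : ZMod n) + (k : ZMod n) = 0 := by
      have : x + (k : ZMod n) + ((k : ZMod n)) = x := by rw [h1, h2]
      linear_combination this
    exact zmod_two_smul_eq_zero hodd hsum

/-! ### The key freeness lemma -/

lemma rotate_eq_self_eq_zero {n : ℕ} (hn : 1 ≤ n) (hodd : Odd n) {G : SimpleGraph (ZMod n)}
    (hG : G.IsTree) {j : ZMod n} (h : rotate j G = G) : j = 0 := by
  haveI : NeZero n := ⟨by omega⟩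
  classical
  haveI : Fintype G.edgeSet := Fintype.ofFinite _
  have hcard : Nat.card G.edgeSet = n - 1 := by
    have h1 : G.edgeFinset.card + 1 = n := by
      have := hG.card_edgeFinset
      rwa [ZMod.card] at this
    have h2 : G.edgeFinset.card = Fintype.card G.edgeSet := by
      simp [SimpleGraph.edgeFinset, Set.toFinset_card]
    rw [Nat.card_eq_fintype_card]
    omega
  have d1 : Nat.card (rotStab G) ∣ n - 1 := by
    rw [← hcard]
    exact nat_card_dvd_of_free (edge_stab_free hodd G)
  have d2 : Nat.card (rotStab G) ∣ n := by
    have hd := AddSubgroup.card_addSubgroup_dvd_card (rotStab G)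
    rwa [Nat.card_zmod] at hd
  have done1 : Nat.card (rotStab G) ∣ 1 := by
    have hsub := Nat.dvd_sub d2 d1
    rwa [show n - (n - 1) = 1 by omega] at hsub
  have hbot : rotStab G = ⊥ := AddSubgroup.card_eq_one.mp (Nat.dvd_one.mp done1)
  have hj : j ∈ rotStab G := h
  rw [hbot] at hj
  exact hj

/-! ### The action on noncrossing trees -/

instance ncAction {n : ℕ} [NeZero n] :
    AddAction (ZMod n) {G : SimpleGraph (ZMod n) // IsNCTree G} where
  vadd j G := ⟨rotate j G.1, isNCTree_rotate G.2 j⟩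
  zero_vadd G := Subtype.ext (rotate_zero _)
  add_vadd a b G := by
    apply Subtype.ext
    show rotate (a + b) _ = rotate a (rotate b _)
    rw [rotate_rotate, add_comm]

theorem odd_rotation_action_free {n : ℕ} (hn : 1 ≤ n) (hodd : Odd n) :
    (∀ G : SimpleGraph (ZMod n), IsNCTree G →
      ∀ j : ZMod n, rotate j G = G → j = 0) ∧
    (∀ G : SimpleGraph (ZMod n), IsNCTree G →
      Nat.card {H : SimpleGraph (ZMod n) // ∃ j : ZMod n, rotate j G = H} = n) ∧
    n ∣ A n := by
  haveI : NeZero n := ⟨by omega⟩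
  have part1 : ∀ G : SimpleGraph (ZMod n), IsNCTree G →
      ∀ j : ZMod n, rotate j G = G → j = 0 :=
    fun G hG j h => rotate_eq_self_eq_zero hn hodd hG.1 h
  refine ⟨part1, ?_, ?_⟩
  · intro G hG
    have hbij : Function.Bijective
        (fun j : ZMod n => (⟨rotate j G, j, rfl⟩ : {H // ∃ j : ZMod n, rotate j G = H})) := by
      constructor
      · intro j k hjk
        have hr : rotate j G = rotate k G := congrArg Subtype.val hjk
        have h0 : rotate (j + -k) G = G := by
          rw [← rotate_rotate, hr, rotate_rotate, add_neg_cancel, rotate_zero]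
        have := part1 G hG _ h0
        linear_combination this
      · rintro ⟨H, j, hj⟩
        exact ⟨j, Subtype.ext hj⟩
    rw [← Nat.card_congr (Equiv.ofBijective _ hbij), Nat.card_zmod]
  · have free : ∀ S : {G : SimpleGraph (ZMod n) // IsNCTree G},
        AddAction.stabilizer (ZMod n) S = ⊥ := by
      intro S
      rw [AddSubgroup.eq_bot_iff_forall]
      intro k hk
      rw [AddAction.mem_stabilizer_iff] at hk
      exact part1 S.1 S.2 k (congrArg Subtype.val hk)
    have hdvd := nat_card_dvd_of_free free
    rwa [Nat.card_zmod] at hdvd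
end

section
/- For all integers n ≥ 2 and 2 ≤ j ≤ n, the number of n-noncrossing trees in which vertex 1 has degree 1 and {1, j} is an edge equals A(j−1)·A(n+1−j). -/
set_option linter.unusedSectionVars false


open SimpleGraph Function

section Counting

variable {V : Type*} [Fintype V]

lemma reach_sdiff_of_reach {G : SimpleGraph V} {v x : V}
    (h : (G \ SimpleGraph.fromEdgeSet {s(v, x)}).Reachable v x) {c d : V}
    (w : G.Walk c d) : (G \ SimpleGraph.fromEdgeSet {s(v, x)}).Reachable c d := by
  induction w with
  | nil => exact Reachable.refl _
  | @cons u m d hadj p ih =>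
    refine Reachable.trans ?_ ih
    by_cases hce : s(u, m) = s(v, x)
    · rw [Sym2.eq_iff] at hce
      rcases hce with ⟨rfl, rfl⟩ | ⟨rfl, rfl⟩
      · exact h
      · exact h.symm
    · refine Adj.reachable ?_
      rw [SimpleGraph.sdiff_adj]
      refine ⟨hadj, ?_⟩
      rw [SimpleGraph.fromEdgeSet_adj]
      rintro ⟨hmem, -⟩
      exact hce hmem

lemma card_le_of_connected :
    ∀ (k : ℕ) (G : SimpleGraph V), G.edgeSet.ncard = k → G.Connected →
      Fintype.card V ≤ k + 1 ∧ (Fintype.card V = k + 1 → G.IsTree) := by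
  intro k
  induction k using Nat.strong_induction_on with
  | _ k IH =>
  intro G hk hG
  by_cases hac : G.IsAcyclic
  · have htree : G.IsTree := ⟨hG, hac⟩
    classical
    haveI : Fintype G.edgeSet := Fintype.ofFinite _
    have hcard := htree.card_edgeFinset
    have hfc : G.edgeFinset.card = k := by
      rw [← hk, SimpleGraph.edgeFinset, ← Set.ncard_eq_toFinset_card']
    rw [hfc] at hcard
    exact ⟨le_of_eq hcard.symm, fun _ => htree⟩
  · simp only [SimpleGraph.IsAcyclic, not_forall, not_not] at hac
    obtain ⟨v, c, hc⟩ := hac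
    cases c with
    | nil => exact absurd hc (SimpleGraph.Walk.IsCycle.not_of_nil)
    | @cons _ m _ hadj p =>
      have hem : s(v, m) ∈ (SimpleGraph.Walk.cons hadj p).edges := by
        simp [SimpleGraph.Walk.edges_cons]
      have hnb : ¬ G.IsBridge s(v, m) := fun hb =>
        (hb.notMem_edges_of_isCycle hc) hem
      have hre : (G \ SimpleGraph.fromEdgeSet {s(v, m)}).Reachable v m := by
        by_contra h'
        exact hnb (SimpleGraph.isBridge_iff.mpr h')
      set G' := G \ SimpleGraph.fromEdgeSet {s(v, m)} with hG'def
      have hconn' : G'.Connected := by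
        haveI := hG.nonempty
        exact ⟨fun c d => reach_sdiff_of_reach hre (hG.preconnected c d).some⟩
      have he : s(v, m) ∈ G.edgeSet := hadj
      have hES : G'.edgeSet = G.edgeSet \ {s(v, m)} := by
        rw [hG'def, SimpleGraph.edgeSet_sdiff, SimpleGraph.edgeSet_fromEdgeSet,
          SimpleGraph.edgeSet_sdiff_sdiff_isDiag]
      have hk1 : 1 ≤ k := by
        rw [← hk]
        exact (Set.ncard_pos (Set.toFinite _)).mpr ⟨_, he⟩
      have hk' : G'.edgeSet.ncard = k - 1 := by
        rw [hES, Set.ncard_diff_singleton_of_mem he, hk]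
      have h1 := (IH (k - 1) (by omega) G' hk' hconn').1
      exact ⟨by omega, fun hcv => absurd h1 (by omega)⟩

lemma isTree_of_connected_of_ncard (G : SimpleGraph V) (h : G.Connected)
    (hcard : G.edgeSet.ncard + 1 = Fintype.card V) : G.IsTree :=
  (card_le_of_connected G.edgeSet.ncard G rfl h).2 (by omega)

end Counting

namespace NCGlue

/-- embedding of the left block: value `k` goes to value `k+1`. -/
def e1 (a n : ℕ) (k : ZMod a) : ZMod n := ((k.val + 1 : ℕ) : ZMod n)

/-- embedding of the right block: value `k` goes to value `k+a`. -/
def e2 (a b n : ℕ) (k : ZMod b) : ZMod n := ((k.val + a : ℕ) : ZMod n)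

variable {a b n : ℕ}

section Basic

variable (ha : 1 ≤ a) (hb : 1 ≤ b) (hn : n = a + b)
include ha hb hn

lemma val_e1 (k : ZMod a) : (e1 a n k).val = k.val + 1 := by
  haveI : NeZero a := ⟨by omega⟩
  have hk := ZMod.val_lt k
  exact ZMod.val_cast_of_lt (by omega)

lemma val_e2 (k : ZMod b) : (e2 a b n k).val = k.val + a := by
  haveI : NeZero b := ⟨by omega⟩
  have hk := ZMod.val_lt k
  exact ZMod.val_cast_of_lt (by omega)

lemma e1_bounds (k : ZMod a) : 1 ≤ (e1 a n k).val ∧ (e1 a n k).val ≤ a := by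
  haveI : NeZero a := ⟨by omega⟩
  have hk := ZMod.val_lt k
  rw [val_e1 ha hb hn]
  omega

lemma e2_bounds (k : ZMod b) : a ≤ (e2 a b n k).val := by
  rw [val_e2 ha hb hn]
  omega

lemma val_xa : ((a : ℕ) : ZMod n).val = a := ZMod.val_cast_of_lt (by omega)

lemma nz : NeZero n := ⟨by omega⟩

lemma val_inj {u v : ZMod n} (h : u.val = v.val) : u = v := by
  haveI := nz ha hb hn
  exact ZMod.val_injective n h

lemma e1_inj : Function.Injective (e1 a n) := by
  intro x y h
  haveI : NeZero a := ⟨by omega⟩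
  apply ZMod.val_injective a
  have := congrArg ZMod.val h
  rw [val_e1 ha hb hn, val_e1 ha hb hn] at this
  omega

lemma e2_inj : Function.Injective (e2 a b n) := by
  intro x y h
  haveI : NeZero b := ⟨by omega⟩
  apply ZMod.val_injective b
  have := congrArg ZMod.val h
  rw [val_e2 ha hb hn, val_e2 ha hb hn] at this
  omega

lemma mem_range_e1 {v : ZMod n} (h1 : 1 ≤ v.val) (h2 : v.val ≤ a) :
    ∃ x, e1 a n x = v := by
  haveI : NeZero a := ⟨by omega⟩
  haveI := nz ha hb hn
  refine ⟨((v.val - 1 : ℕ) : ZMod a), ?_⟩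
  apply val_inj ha hb hn
  rw [val_e1 ha hb hn, ZMod.val_cast_of_lt (by omega)]
  omega

lemma mem_range_e2 {v : ZMod n} (h1 : a ≤ v.val) : ∃ x, e2 a b n x = v := by
  haveI : NeZero b := ⟨by omega⟩
  haveI := nz ha hb hn
  have hv : v.val < n := ZMod.val_lt v
  refine ⟨((v.val - a : ℕ) : ZMod b), ?_⟩
  apply val_inj ha hb hn
  rw [val_e2 ha hb hn, ZMod.val_cast_of_lt (by omega)]
  omega

lemma e1_top : e1 a n (((a - 1 : ℕ) : ZMod a)) = ((a : ℕ) : ZMod n) := by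
  haveI : NeZero a := ⟨by omega⟩
  apply val_inj ha hb hn
  rw [val_e1 ha hb hn, val_xa ha hb hn, ZMod.val_cast_of_lt (by omega)]
  omega

lemma e2_bot : e2 a b n (0 : ZMod b) = ((a : ℕ) : ZMod n) := by
  haveI : NeZero b := ⟨by omega⟩
  apply val_inj ha hb hn
  rw [val_e2 ha hb hn, val_xa ha hb hn, ZMod.val_zero]
  omega

lemma zero_ne_xa : (0 : ZMod n) ≠ ((a : ℕ) : ZMod n) := by
  haveI := nz ha hb hn
  intro h
  have := congrArg ZMod.val h
  rw [ZMod.val_zero, val_xa ha hb hn] at this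
  omega

end Basic

lemma mem_map_edgeSet {α β : Type*} (f : α → β) (G : SimpleGraph α) {u v : β} :
    s(u, v) ∈ Sym2.map f '' G.edgeSet ↔ ∃ x y, G.Adj x y ∧ f x = u ∧ f y = v := by
  constructor
  · rintro ⟨p, hp, hm⟩
    induction p with
    | _ x y =>
      rw [Sym2.map_pair_eq, Sym2.eq_iff] at hm
      rw [SimpleGraph.mem_edgeSet] at hp
      rcases hm with ⟨h1, h2⟩ | ⟨h1, h2⟩
      · exact ⟨x, y, hp, h1, h2⟩
      · exact ⟨y, x, hp.symm, h2, h1⟩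
  · rintro ⟨x, y, hxy, rfl, rfl⟩
    exact ⟨s(x, y), hxy, Sym2.map_pair_eq f x y⟩

/-- The glued edge set. -/
def glueSet (a b n : ℕ) (G₁ : SimpleGraph (ZMod a)) (G₂ : SimpleGraph (ZMod b)) :
    Set (Sym2 (ZMod n)) :=
  (Sym2.map (e1 a n) '' G₁.edgeSet) ∪ (Sym2.map (e2 a b n) '' G₂.edgeSet) ∪
    {s((0 : ZMod n), ((a : ℕ) : ZMod n))}

/-- The glued graph. -/
def glue (a b n : ℕ) (G₁ : SimpleGraph (ZMod a)) (G₂ : SimpleGraph (ZMod b)) :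
    SimpleGraph (ZMod n) :=
  SimpleGraph.fromEdgeSet (glueSet a b n G₁ G₂)

lemma glue_adj_cases {G₁ : SimpleGraph (ZMod a)} {G₂ : SimpleGraph (ZMod b)}
    {u v : ZMod n} (h : (glue a b n G₁ G₂).Adj u v) :
    (∃ x y, G₁.Adj x y ∧ e1 a n x = u ∧ e1 a n y = v) ∨
    (∃ x y, G₂.Adj x y ∧ e2 a b n x = u ∧ e2 a b n y = v) ∨
    (u = 0 ∧ v = ((a : ℕ) : ZMod n)) ∨ (v = 0 ∧ u = ((a : ℕ) : ZMod n)) := by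
  rw [glue, SimpleGraph.fromEdgeSet_adj] at h
  obtain ⟨hmem, hne⟩ := h
  rcases hmem with (h1 | h2) | h3
  · exact Or.inl ((mem_map_edgeSet _ _).mp h1)
  · exact Or.inr (Or.inl ((mem_map_edgeSet _ _).mp h2))
  · rw [Set.mem_singleton_iff, Sym2.eq_iff] at h3
    rcases h3 with ⟨rfl, rfl⟩ | ⟨rfl, rfl⟩
    · exact Or.inr (Or.inr (Or.inl ⟨rfl, rfl⟩))
    · exact Or.inr (Or.inr (Or.inr ⟨rfl, rfl⟩))

/-- The key structural property of the relevant graphs : every edge either lies in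
the left block, or in the right block, or is the special edge. -/
def Good (a n : ℕ) (G : SimpleGraph (ZMod n)) : Prop :=
  ∀ u v : ZMod n, G.Adj u v →
    (1 ≤ u.val ∧ u.val ≤ a ∧ 1 ≤ v.val ∧ v.val ≤ a) ∨
    (a ≤ u.val ∧ a ≤ v.val) ∨
    (u = 0 ∧ v = ((a : ℕ) : ZMod n)) ∨ (v = 0 ∧ u = ((a : ℕ) : ZMod n))

section WithHyps

variable (ha : 1 ≤ a) (hb : 1 ≤ b) (hn : n = a + b)
include ha hb hn

lemma glue_good (G₁ : SimpleGraph (ZMod a)) (G₂ : SimpleGraph (ZMod b)) :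
    Good a n (glue a b n G₁ G₂) := by
  intro u v h
  rcases glue_adj_cases h with ⟨x, y, hxy, rfl, rfl⟩ | ⟨x, y, hxy, rfl, rfl⟩ | h | h
  · exact Or.inl ⟨(e1_bounds ha hb hn x).1, (e1_bounds ha hb hn x).2,
      (e1_bounds ha hb hn y).1, (e1_bounds ha hb hn y).2⟩
  · exact Or.inr (Or.inl ⟨e2_bounds ha hb hn x, e2_bounds ha hb hn y⟩)
  · exact Or.inr (Or.inr (Or.inl h))
  · exact Or.inr (Or.inr (Or.inr h))

lemma good_of_nc {G : SimpleGraph (ZMod n)} (hNC : Noncrossing G)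
    (hadj0 : G.Adj 0 ((a : ℕ) : ZMod n))
    (hdeg1 : ∀ w, G.Adj 0 w → w = ((a : ℕ) : ZMod n)) : Good a n G := by
  haveI := nz ha hb hn
  have h0 : (0 : ZMod n).val = 0 := ZMod.val_zero
  have hxa := val_xa ha hb hn
  have key : ∀ u v : ZMod n, G.Adj u v → 1 ≤ u.val → u.val < v.val →
      (v.val ≤ a ∨ a ≤ u.val) := by
    intro u v huv hu1 hlt
    by_contra hcon
    push_neg at hcon
    exact hNC 0 _ u v hadj0 huv (by omega)
  intro u v h
  by_cases hu : u = 0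
  · subst hu
    exact Or.inr (Or.inr (Or.inl ⟨rfl, hdeg1 _ h⟩))
  by_cases hv : v = 0
  · subst hv
    exact Or.inr (Or.inr (Or.inr ⟨rfl, hdeg1 _ h.symm⟩))
  have hu1 : 1 ≤ u.val := by
    rcases Nat.eq_zero_or_pos u.val with h0' | h0'
    · exact absurd ((ZMod.val_eq_zero u).mp h0') hu
    · exact h0'
  have hv1 : 1 ≤ v.val := by
    rcases Nat.eq_zero_or_pos v.val with h0' | h0'
    · exact absurd ((ZMod.val_eq_zero v).mp h0') hv
    · exact h0'
  rcases lt_trichotomy u.val v.val with hlt | heq | hgt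
  · rcases key u v h hu1 hlt with h' | h'
    · exact Or.inl ⟨hu1, by omega, hv1, h'⟩
    · have : a ≤ v.val := by omega
      exact Or.inr (Or.inl ⟨h', this⟩)
  · exact absurd (val_inj ha hb hn heq) h.ne
  · rcases key v u h.symm hv1 hgt with h' | h'
    · exact Or.inl ⟨hu1, h', hv1, by omega⟩
    · exact Or.inr (Or.inl ⟨by omega, h'⟩)

lemma cross1 {G : SimpleGraph (ZMod n)} (hG : Good a n G) :
    ∀ {z y : ZMod n} (w : G.Walk z y), ¬(1 ≤ z.val ∧ z.val ≤ a) →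
      (1 ≤ y.val ∧ y.val ≤ a) → ((a : ℕ) : ZMod n) ∈ w.support := by
  haveI := nz ha hb hn
  have hxa := val_xa ha hb hn
  intro z y w
  induction w with
  | nil => intro h1 h2; exact absurd h2 h1
  | @cons z m y hadj p ih =>
    intro h1 h2
    rw [SimpleGraph.Walk.support_cons, List.mem_cons]
    by_cases hm : 1 ≤ m.val ∧ m.val ≤ a
    · have hma : m = ((a : ℕ) : ZMod n) := by
        rcases hG _ _ hadj with hL | hR | ⟨hz0, hma⟩ | ⟨hm0, hza⟩
        · exact absurd ⟨hL.1, hL.2.1⟩ h1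
        · exact val_inj ha hb hn (by omega)
        · exact hma
        · have := congrArg ZMod.val hm0
          rw [ZMod.val_zero] at this
          omega
      exact Or.inr (hma ▸ p.start_mem_support)
    · exact Or.inr (ih hm h2)

lemma cross2 {G : SimpleGraph (ZMod n)} (hG : Good a n G) :
    ∀ {z y : ZMod n} (w : G.Walk z y), ¬(a ≤ z.val) → a ≤ y.val →
      ((a : ℕ) : ZMod n) ∈ w.support := by
  haveI := nz ha hb hn
  have hxa := val_xa ha hb hn
  intro z y w
  induction w with
  | nil => intro h1 h2; exact absurd h2 h1
  | @cons z m y hadj p ih =>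
    intro h1 h2
    rw [SimpleGraph.Walk.support_cons, List.mem_cons]
    by_cases hm : a ≤ m.val
    · have hma : m = ((a : ℕ) : ZMod n) := by
        rcases hG _ _ hadj with hL | hR | ⟨hz0, hma⟩ | ⟨hm0, hza⟩
        · exact val_inj ha hb hn (by omega)
        · exact absurd hR.1 h1
        · exact hma
        · have hza' := congrArg ZMod.val hza
          rw [hxa] at hza'
          omega
      exact Or.inr (hma ▸ p.start_mem_support)
    · exact Or.inr (ih hm h2)

lemma splice1 {G : SimpleGraph (ZMod n)} (hG : Good a n G) :
    ∀ (k : ℕ) {u v : ZMod n} (w : G.Walk u v) (x y : ZMod a), u = e1 a n x →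
      v = e1 a n y → w.length ≤ k → (G.comap (e1 a n)).Reachable x y := by
  haveI := nz ha hb hn
  have hxa := val_xa ha hb hn
  have h0 : (0 : ZMod n).val = 0 := ZMod.val_zero
  intro k
  induction k with
  | zero =>
    intro u v w x y hu hv hw
    have h' := SimpleGraph.Walk.eq_of_length_eq_zero (Nat.le_zero.mp hw)
    have hxy : x = y := e1_inj ha hb hn (by rw [← hu, ← hv]; exact h')
    subst hxy
    exact Reachable.refl _
  | succ k IH =>
    intro u v w x y hu hv hw
    cases w with
    | nil =>
      have hxy : x = y := e1_inj ha hb hn (hu.symm.trans hv)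
      subst hxy
      exact Reachable.refl _
    | @cons _ m _ hadj p =>
      subst hu hv
      rw [SimpleGraph.Walk.length_cons] at hw
      by_cases hm : 1 ≤ m.val ∧ m.val ≤ a
      · obtain ⟨x', rfl⟩ := mem_range_e1 ha hb hn hm.1 hm.2
        have hA : (G.comap (e1 a n)).Adj x x' := hadj
        exact hA.reachable.trans (IH p x' y rfl rfl (by omega))
      · have hx : e1 a n x = ((a : ℕ) : ZMod n) := by
          have hbd := e1_bounds ha hb hn x
          rcases hG _ _ hadj with hL | hR | ⟨hz0, hma⟩ | ⟨hm0, hza⟩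
          · exact absurd ⟨hL.2.2.1, hL.2.2.2⟩ hm
          · exact val_inj ha hb hn (by omega)
          · have := congrArg ZMod.val hz0
            rw [h0] at this
            omega
          · exact hza
        have hsup : ((a : ℕ) : ZMod n) ∈ p.support :=
          cross1 ha hb hn hG p hm (e1_bounds ha hb hn y)
        refine IH (p.dropUntil _ hsup) x y hx.symm rfl ?_
        have h1 := SimpleGraph.Walk.length_dropUntil_le p hsup
        omega

lemma splice2 {G : SimpleGraph (ZMod n)} (hG : Good a n G) :
    ∀ (k : ℕ) {u v : ZMod n} (w : G.Walk u v) (x y : ZMod b), u = e2 a b n x →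
      v = e2 a b n y → w.length ≤ k → (G.comap (e2 a b n)).Reachable x y := by
  haveI := nz ha hb hn
  have hxa := val_xa ha hb hn
  have h0 : (0 : ZMod n).val = 0 := ZMod.val_zero
  intro k
  induction k with
  | zero =>
    intro u v w x y hu hv hw
    have h' := SimpleGraph.Walk.eq_of_length_eq_zero (Nat.le_zero.mp hw)
    have hxy : x = y := e2_inj ha hb hn (by rw [← hu, ← hv]; exact h')
    subst hxy
    exact Reachable.refl _
  | succ k IH =>
    intro u v w x y hu hv hw
    cases w with
    | nil =>
      have hxy : x = y := e2_inj ha hb hn (hu.symm.trans hv)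
      subst hxy
      exact Reachable.refl _
    | @cons _ m _ hadj p =>
      subst hu hv
      rw [SimpleGraph.Walk.length_cons] at hw
      by_cases hm : a ≤ m.val
      · obtain ⟨x', rfl⟩ := mem_range_e2 ha hb hn hm
        have hA : (G.comap (e2 a b n)).Adj x x' := hadj
        exact hA.reachable.trans (IH p x' y rfl rfl (by omega))
      · have hx : e2 a b n x = ((a : ℕ) : ZMod n) := by
          have hbd := e2_bounds ha hb hn x
          rcases hG _ _ hadj with hL | hR | ⟨hz0, hma⟩ | ⟨hm0, hza⟩
          · exact val_inj ha hb hn (by omega)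
          · exact absurd hR.2 hm
          · have := congrArg ZMod.val hz0
            rw [h0] at this
            omega
          · exact hza
        have hsup : ((a : ℕ) : ZMod n) ∈ p.support :=
          cross2 ha hb hn hG p hm (e2_bounds ha hb hn y)
        refine IH (p.dropUntil _ hsup) x y hx.symm rfl ?_
        have h1 := SimpleGraph.Walk.length_dropUntil_le p hsup
        omega

lemma comap1_isNCTree {G : SimpleGraph (ZMod n)} (hT : G.IsTree) (hNC : Noncrossing G)
    (hG : Good a n G) : IsNCTree (G.comap (e1 a n)) := by
  haveI : NeZero a := ⟨by omega⟩
  refine ⟨⟨?_, ?_⟩, ?_⟩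
  · refine ⟨fun x y => ?_⟩
    obtain ⟨w⟩ := hT.isConnected.preconnected (e1 a n x) (e1 a n y)
    exact splice1 ha hb hn hG w.length w x y rfl rfl le_rfl
  · intro x c hc
    have hinj : Function.Injective ⇑(SimpleGraph.Hom.comap (e1 a n) G) :=
      e1_inj ha hb hn
    exact hT.IsAcyclic _ (hc.map hinj)
  · intro x y c d h1 h2 hlt
    have v1 := val_e1 ha hb hn x
    have v2 := val_e1 ha hb hn y
    have v3 := val_e1 ha hb hn c
    have v4 := val_e1 ha hb hn d
    exact hNC _ _ _ _ h1 h2 (by omega)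

lemma comap2_isNCTree {G : SimpleGraph (ZMod n)} (hT : G.IsTree) (hNC : Noncrossing G)
    (hG : Good a n G) : IsNCTree (G.comap (e2 a b n)) := by
  haveI : NeZero b := ⟨by omega⟩
  refine ⟨⟨?_, ?_⟩, ?_⟩
  · refine ⟨fun x y => ?_⟩
    obtain ⟨w⟩ := hT.isConnected.preconnected (e2 a b n x) (e2 a b n y)
    exact splice2 ha hb hn hG w.length w x y rfl rfl le_rfl
  · intro x c hc
    have hinj : Function.Injective ⇑(SimpleGraph.Hom.comap (e2 a b n) G) :=
      e2_inj ha hb hn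
    exact hT.IsAcyclic _ (hc.map hinj)
  · intro x y c d h1 h2 hlt
    have v1 := val_e2 ha hb hn x
    have v2 := val_e2 ha hb hn y
    have v3 := val_e2 ha hb hn c
    have v4 := val_e2 ha hb hn d
    exact hNC _ _ _ _ h1 h2 (by omega)

lemma comap1_glue (G₁ : SimpleGraph (ZMod a)) (G₂ : SimpleGraph (ZMod b)) :
    (glue a b n G₁ G₂).comap (e1 a n) = G₁ := by
  haveI := nz ha hb hn
  haveI : NeZero a := ⟨by omega⟩
  haveI : NeZero b := ⟨by omega⟩
  have h0 : (0 : ZMod n).val = 0 := ZMod.val_zero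
  ext x y
  simp only [SimpleGraph.comap_adj]
  constructor
  · intro h
    have hne : e1 a n x ≠ e1 a n y := h.ne
    rcases glue_adj_cases h with ⟨x', y', hxy, hx, hy⟩ | ⟨x', y', hxy, hx, hy⟩ |
      ⟨h1, h2⟩ | ⟨h1, h2⟩
    · cases e1_inj ha hb hn hx
      cases e1_inj ha hb hn hy
      exact hxy
    · exfalso
      have c1 := congrArg ZMod.val hx
      have c2 := congrArg ZMod.val hy
      rw [val_e2 ha hb hn, val_e1 ha hb hn] at c1 c2
      have b1 := ZMod.val_lt x
      have b2 := ZMod.val_lt y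
      have hx0 : x'.val = 0 := by omega
      have hy0 : y'.val = 0 := by omega
      exact hxy.ne (ZMod.val_injective b (hx0.trans hy0.symm))
    · have := congrArg ZMod.val h1
      rw [val_e1 ha hb hn, h0] at this
      omega
    · have := congrArg ZMod.val h1
      rw [val_e1 ha hb hn, h0] at this
      omega
  · intro h
    rw [glue, SimpleGraph.fromEdgeSet_adj]
    exact ⟨Or.inl (Or.inl ((mem_map_edgeSet _ _).mpr ⟨x, y, h, rfl, rfl⟩)),
      fun hh => h.ne (e1_inj ha hb hn hh)⟩

lemma comap2_glue (G₁ : SimpleGraph (ZMod a)) (G₂ : SimpleGraph (ZMod b)) :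
    (glue a b n G₁ G₂).comap (e2 a b n) = G₂ := by
  haveI := nz ha hb hn
  haveI : NeZero a := ⟨by omega⟩
  haveI : NeZero b := ⟨by omega⟩
  have h0 : (0 : ZMod n).val = 0 := ZMod.val_zero
  have hxa := val_xa ha hb hn
  ext x y
  simp only [SimpleGraph.comap_adj]
  constructor
  · intro h
    rcases glue_adj_cases h with ⟨x', y', hxy, hx, hy⟩ | ⟨x', y', hxy, hx, hy⟩ |
      ⟨h1, h2⟩ | ⟨h1, h2⟩
    · exfalso
      have c1 := congrArg ZMod.val hx
      have c2 := congrArg ZMod.val hy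
      rw [val_e1 ha hb hn, val_e2 ha hb hn] at c1 c2
      have b1 := ZMod.val_lt x'
      have b2 := ZMod.val_lt y'
      have hx0 : x.val = 0 := by omega
      have hy0 : y.val = 0 := by omega
      exact h.ne (congrArg (e2 a b n) (ZMod.val_injective b (hx0.trans hy0.symm)))
    · cases e2_inj ha hb hn hx
      cases e2_inj ha hb hn hy
      exact hxy
    · have := congrArg ZMod.val h1
      rw [val_e2 ha hb hn, h0] at this
      omega
    · have := congrArg ZMod.val h1
      rw [val_e2 ha hb hn, h0] at this
      omega
  · intro h
    rw [glue, SimpleGraph.fromEdgeSet_adj]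
    exact ⟨Or.inl (Or.inr ((mem_map_edgeSet _ _).mpr ⟨x, y, h, rfl, rfl⟩)),
      fun hh => h.ne (e2_inj ha hb hn hh)⟩

lemma glue_eq {G : SimpleGraph (ZMod n)} (hG : Good a n G)
    (hadj0 : G.Adj 0 ((a : ℕ) : ZMod n)) :
    glue a b n (G.comap (e1 a n)) (G.comap (e2 a b n)) = G := by
  ext u v
  rw [glue, SimpleGraph.fromEdgeSet_adj]
  constructor
  · rintro ⟨hmem, hne⟩
    rcases hmem with (h1 | h2) | h3
    · obtain ⟨x, y, hxy, rfl, rfl⟩ := (mem_map_edgeSet _ _).mp h1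
      exact hxy
    · obtain ⟨x, y, hxy, rfl, rfl⟩ := (mem_map_edgeSet _ _).mp h2
      exact hxy
    · rw [Set.mem_singleton_iff, Sym2.eq_iff] at h3
      rcases h3 with ⟨rfl, rfl⟩ | ⟨rfl, rfl⟩
      · exact hadj0
      · exact hadj0.symm
  · intro h
    refine ⟨?_, h.ne⟩
    rcases hG u v h with hL | hR | ⟨rfl, rfl⟩ | ⟨rfl, rfl⟩
    · obtain ⟨x, rfl⟩ := mem_range_e1 ha hb hn hL.1 hL.2.1
      obtain ⟨y, rfl⟩ := mem_range_e1 ha hb hn hL.2.2.1 hL.2.2.2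
      exact Or.inl (Or.inl ((mem_map_edgeSet _ _).mpr ⟨x, y, h, rfl, rfl⟩))
    · obtain ⟨x, rfl⟩ := mem_range_e2 ha hb hn hR.1
      obtain ⟨y, rfl⟩ := mem_range_e2 ha hb hn hR.2
      exact Or.inl (Or.inr ((mem_map_edgeSet _ _).mpr ⟨x, y, h, rfl, rfl⟩))
    · exact Or.inr rfl
    · exact Or.inr (Sym2.eq_swap)

lemma glue_adj_special (G₁ : SimpleGraph (ZMod a)) (G₂ : SimpleGraph (ZMod b)) :
    (glue a b n G₁ G₂).Adj 0 ((a : ℕ) : ZMod n) := by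
  rw [glue, SimpleGraph.fromEdgeSet_adj]
  exact ⟨Or.inr rfl, zero_ne_xa ha hb hn⟩

lemma glue_connected {G₁ : SimpleGraph (ZMod a)} {G₂ : SimpleGraph (ZMod b)}
    (hc1 : G₁.Connected) (hc2 : G₂.Connected) : (glue a b n G₁ G₂).Connected := by
  haveI := nz ha hb hn
  haveI : NeZero a := ⟨by omega⟩
  haveI : NeZero b := ⟨by omega⟩
  have hf1 : ∀ {x y : ZMod a}, G₁.Adj x y → (glue a b n G₁ G₂).Adj (e1 a n x) (e1 a n y) := by
    intro x y h
    rw [glue, SimpleGraph.fromEdgeSet_adj]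
    exact ⟨Or.inl (Or.inl ((mem_map_edgeSet _ _).mpr ⟨x, y, h, rfl, rfl⟩)),
      fun hh => h.ne (e1_inj ha hb hn hh)⟩
  have hf2 : ∀ {x y : ZMod b}, G₂.Adj x y → (glue a b n G₁ G₂).Adj (e2 a b n x) (e2 a b n y) := by
    intro x y h
    rw [glue, SimpleGraph.fromEdgeSet_adj]
    exact ⟨Or.inl (Or.inr ((mem_map_edgeSet _ _).mpr ⟨x, y, h, rfl, rfl⟩)),
      fun hh => h.ne (e2_inj ha hb hn hh)⟩
  have key : ∀ v, (glue a b n G₁ G₂).Reachable v ((a : ℕ) : ZMod n) := by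
    intro v
    rcases Nat.eq_zero_or_pos v.val with h0 | h0
    · rw [(ZMod.val_eq_zero v).mp h0]
      exact (glue_adj_special ha hb hn G₁ G₂).reachable
    · rcases le_or_gt v.val a with hle | hgt
      · obtain ⟨x, rfl⟩ := mem_range_e1 ha hb hn h0 hle
        have hr : (glue a b n G₁ G₂).Reachable (e1 a n x) (e1 a n ((a - 1 : ℕ) : ZMod a)) :=
          Reachable.map (⟨e1 a n, fun h => hf1 h⟩ : G₁ →g glue a b n G₁ G₂)
            (hc1.preconnected x _)
        rw [e1_top ha hb hn] at hr
        exact hr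
      · obtain ⟨x, rfl⟩ := mem_range_e2 ha hb hn hgt.le
        have hr : (glue a b n G₁ G₂).Reachable (e2 a b n x) (e2 a b n (0 : ZMod b)) :=
          Reachable.map (⟨e2 a b n, fun h => hf2 h⟩ : G₂ →g glue a b n G₁ G₂)
            (hc2.preconnected x _)
        rw [e2_bot ha hb hn] at hr
        exact hr
  exact ⟨fun u v => (key u).trans (key v).symm⟩

lemma glue_edgeSet (G₁ : SimpleGraph (ZMod a)) (G₂ : SimpleGraph (ZMod b)) :
    (glue a b n G₁ G₂).edgeSet = glueSet a b n G₁ G₂ := by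
  haveI := nz ha hb hn
  have h0 : (0 : ZMod n).val = 0 := ZMod.val_zero
  have hnd : ∀ e ∈ glueSet a b n G₁ G₂, ¬ e.IsDiag := by
    intro e he
    induction e with
    | _ u v =>
      rw [Sym2.mk_isDiag_iff]
      rcases he with (h1 | h2) | h3
      · obtain ⟨x, y, hxy, rfl, rfl⟩ := (mem_map_edgeSet _ _).mp h1
        exact fun hh => hxy.ne (e1_inj ha hb hn hh)
      · obtain ⟨x, y, hxy, rfl, rfl⟩ := (mem_map_edgeSet _ _).mp h2
        exact fun hh => hxy.ne (e2_inj ha hb hn hh)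
      · rw [Set.mem_singleton_iff, Sym2.eq_iff] at h3
        rcases h3 with ⟨rfl, rfl⟩ | ⟨rfl, rfl⟩
        · exact zero_ne_xa ha hb hn
        · exact (zero_ne_xa ha hb hn).symm
  rw [glue, SimpleGraph.edgeSet_fromEdgeSet]
  ext e
  simp only [Set.mem_diff, Set.mem_setOf_eq, and_iff_left_iff_imp]
  exact fun he => hnd e he

omit ha hb hn in
lemma tree_edge_ncard {m : ℕ} [NeZero m] {G : SimpleGraph (ZMod m)} (hT : G.IsTree) :
    G.edgeSet.ncard = m - 1 := by
  classical
  haveI : Fintype G.edgeSet := Fintype.ofFinite _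
  have h := hT.card_edgeFinset
  rw [ZMod.card] at h
  have h2 : G.edgeFinset.card = G.edgeSet.ncard := by
    rw [SimpleGraph.edgeFinset, ← Set.ncard_eq_toFinset_card']
  omega

lemma glueSet_ncard {G₁ : SimpleGraph (ZMod a)} {G₂ : SimpleGraph (ZMod b)}
    (hT1 : G₁.IsTree) (hT2 : G₂.IsTree) : (glueSet a b n G₁ G₂).ncard = n - 1 := by
  haveI := nz ha hb hn
  haveI : NeZero a := ⟨by omega⟩
  haveI : NeZero b := ⟨by omega⟩
  have h0 : (0 : ZMod n).val = 0 := ZMod.val_zero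
  have h1 : (Sym2.map (e1 a n) '' G₁.edgeSet).ncard = a - 1 := by
    rw [Set.ncard_image_of_injective _ (Sym2.map.injective (e1_inj ha hb hn)),
      tree_edge_ncard hT1]
  have h2 : (Sym2.map (e2 a b n) '' G₂.edgeSet).ncard = b - 1 := by
    rw [Set.ncard_image_of_injective _ (Sym2.map.injective (e2_inj ha hb hn)),
      tree_edge_ncard hT2]
  have hd12 : Disjoint (Sym2.map (e1 a n) '' G₁.edgeSet) (Sym2.map (e2 a b n) '' G₂.edgeSet) := by
    rw [Set.disjoint_left]
    intro e heL heR
    induction e with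
    | _ u v =>
      obtain ⟨x, y, hxy, hx, hy⟩ := (mem_map_edgeSet _ _).mp heL
      obtain ⟨x', y', hxy', hx', hy'⟩ := (mem_map_edgeSet _ _).mp heR
      have c1 := congrArg ZMod.val hx
      have c2 := congrArg ZMod.val hy
      have c3 := congrArg ZMod.val hx'
      have c4 := congrArg ZMod.val hy'
      rw [val_e1 ha hb hn] at c1 c2
      rw [val_e2 ha hb hn] at c3 c4
      have b1 := ZMod.val_lt x
      have b2 := ZMod.val_lt y
      have huv : u = v := val_inj ha hb hn (by omega)
      rw [← hx, ← hy] at huv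
      exact hxy.ne (e1_inj ha hb hn huv)
  have hdS : Disjoint ((Sym2.map (e1 a n) '' G₁.edgeSet) ∪ (Sym2.map (e2 a b n) '' G₂.edgeSet))
      {s((0 : ZMod n), ((a : ℕ) : ZMod n))} := by
    rw [Set.disjoint_right]
    intro e he
    rw [Set.mem_singleton_iff] at he
    subst he
    rintro (hL | hR)
    · obtain ⟨x, y, hxy, hx, hy⟩ := (mem_map_edgeSet _ _).mp hL
      have := congrArg ZMod.val hx
      rw [val_e1 ha hb hn, h0] at this
      omega
    · obtain ⟨x, y, hxy, hx, hy⟩ := (mem_map_edgeSet _ _).mp hR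
      have := congrArg ZMod.val hx
      rw [val_e2 ha hb hn, h0] at this
      omega
  rw [glueSet, Set.ncard_union_eq hdS (Set.toFinite _) (Set.toFinite _),
    Set.ncard_union_eq hd12 (Set.toFinite _) (Set.toFinite _), h1, h2, Set.ncard_singleton]
  omega

lemma glue_isTree {G₁ : SimpleGraph (ZMod a)} {G₂ : SimpleGraph (ZMod b)}
    (hT1 : G₁.IsTree) (hT2 : G₂.IsTree) : (glue a b n G₁ G₂).IsTree := by
  haveI := nz ha hb hn
  refine isTree_of_connected_of_ncard _ (glue_connected ha hb hn hT1.isConnected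
    hT2.isConnected) ?_
  rw [glue_edgeSet ha hb hn, glueSet_ncard ha hb hn hT1 hT2, ZMod.card]
  omega

lemma glue_nbhd (G₁ : SimpleGraph (ZMod a)) (G₂ : SimpleGraph (ZMod b)) :
    (glue a b n G₁ G₂).neighborSet 0 = {((a : ℕ) : ZMod n)} := by
  haveI := nz ha hb hn
  have h0 : (0 : ZMod n).val = 0 := ZMod.val_zero
  ext w
  simp only [SimpleGraph.mem_neighborSet, Set.mem_singleton_iff]
  constructor
  · intro h
    rcases glue_adj_cases h with ⟨x, y, hxy, hx, hy⟩ | ⟨x, y, hxy, hx, hy⟩ |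
      ⟨h1, h2⟩ | ⟨h1, h2⟩
    · have := congrArg ZMod.val hx
      rw [val_e1 ha hb hn, h0] at this
      omega
    · have := congrArg ZMod.val hx
      rw [val_e2 ha hb hn, h0] at this
      omega
    · exact h2
    · exact absurd h2.symm (Ne.symm (zero_ne_xa ha hb hn))
  · rintro rfl
    exact glue_adj_special ha hb hn G₁ G₂

lemma glue_nc {G₁ : SimpleGraph (ZMod a)} {G₂ : SimpleGraph (ZMod b)}
    (hN1 : Noncrossing G₁) (hN2 : Noncrossing G₂) : Noncrossing (glue a b n G₁ G₂) := by
  haveI := nz ha hb hn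
  haveI : NeZero a := ⟨by omega⟩
  haveI : NeZero b := ⟨by omega⟩
  have hxa := val_xa ha hb hn
  have h0 : (0 : ZMod n).val = 0 := ZMod.val_zero
  intro u w c d h1 h2 hc
  obtain ⟨o1, o2, o3⟩ := hc
  rcases glue_adj_cases h1 with ⟨x, y, hxy, hx, hy⟩ | ⟨x, y, hxy, hx, hy⟩ |
    ⟨hu0, hwx⟩ | ⟨hw0, hux⟩
  · -- first edge in left block
    have u1 : u.val = x.val + 1 := by rw [← hx, val_e1 ha hb hn]
    have w1 : w.val = y.val + 1 := by rw [← hy, val_e1 ha hb hn]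
    have bx : x.val < a := ZMod.val_lt x
    have by' : y.val < a := ZMod.val_lt y
    rcases glue_adj_cases h2 with ⟨x', y', hxy', hx', hy'⟩ | ⟨x', y', hxy', hx', hy'⟩ |
      ⟨hc0, hdx⟩ | ⟨hd0, hcx⟩
    · have c1 : c.val = x'.val + 1 := by rw [← hx', val_e1 ha hb hn]
      have d1 : d.val = y'.val + 1 := by rw [← hy', val_e1 ha hb hn]
      exact hN1 x y x' y' hxy hxy' ⟨by omega, by omega, by omega⟩
    · have c1 : c.val = x'.val + a := by rw [← hx', val_e2 ha hb hn]
      omega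
    · have c1 : c.val = 0 := by rw [hc0]; exact h0
      omega
    · have d1 : d.val = 0 := by rw [hd0]; exact h0
      omega
  · -- first edge in right block
    have u1 : u.val = x.val + a := by rw [← hx, val_e2 ha hb hn]
    have w1 : w.val = y.val + a := by rw [← hy, val_e2 ha hb hn]
    rcases glue_adj_cases h2 with ⟨x', y', hxy', hx', hy'⟩ | ⟨x', y', hxy', hx', hy'⟩ |
      ⟨hc0, hdx⟩ | ⟨hd0, hcx⟩
    · have c1 : c.val = x'.val + 1 := by rw [← hx', val_e1 ha hb hn]
      have d1 : d.val = y'.val + 1 := by rw [← hy', val_e1 ha hb hn]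
      have by' : y'.val < a := ZMod.val_lt y'
      omega
    · have c1 : c.val = x'.val + a := by rw [← hx', val_e2 ha hb hn]
      have d1 : d.val = y'.val + a := by rw [← hy', val_e2 ha hb hn]
      exact hN2 x y x' y' hxy hxy' ⟨by omega, by omega, by omega⟩
    · have c1 : c.val = 0 := by rw [hc0]; exact h0
      omega
    · have d1 : d.val = 0 := by rw [hd0]; exact h0
      omega
  · -- first edge is the special edge
    have u1 : u.val = 0 := by rw [hu0]; exact h0
    have w1 : w.val = a := by rw [hwx]; exact hxa
    rcases glue_adj_cases h2 with ⟨x', y', hxy', hx', hy'⟩ | ⟨x', y', hxy', hx', hy'⟩ |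
      ⟨hc0, hdx⟩ | ⟨hd0, hcx⟩
    · have d1 : d.val = y'.val + 1 := by rw [← hy', val_e1 ha hb hn]
      have by' : y'.val < a := ZMod.val_lt y'
      omega
    · have c1 : c.val = x'.val + a := by rw [← hx', val_e2 ha hb hn]
      omega
    · have c1 : c.val = 0 := by rw [hc0]; exact h0
      omega
    · have c1 : c.val = a := by rw [hcx]; exact hxa
      omega
  · -- first edge is the special edge, reversed
    have w1 : w.val = 0 := by rw [hw0]; exact h0
    omega
lemma glue_prop {G₁ : SimpleGraph (ZMod a)} {G₂ : SimpleGraph (ZMod b)}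
    (h1 : IsNCTree G₁) (h2 : IsNCTree G₂) :
    IsNCTree (glue a b n G₁ G₂) ∧ ((glue a b n G₁ G₂).neighborSet 0).ncard = 1 ∧
      (glue a b n G₁ G₂).Adj 0 ((a : ℕ) : ZMod n) := by
  refine ⟨⟨glue_isTree ha hb hn h1.1 h2.1, glue_nc ha hb hn h1.2 h2.2⟩, ?_,
    glue_adj_special ha hb hn G₁ G₂⟩
  rw [glue_nbhd ha hb hn]
  exact Set.ncard_singleton _

lemma main_count :
    Nat.card {G : SimpleGraph (ZMod n) //
        IsNCTree G ∧ (G.neighborSet 0).ncard = 1 ∧ G.Adj 0 ((a : ℕ) : ZMod n)} =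
      A a * A b := by
  simp only [A]
  rw [← Nat.card_prod]
  refine (Nat.card_eq_of_bijective
    (fun p : {G₁ : SimpleGraph (ZMod a) // IsNCTree G₁} × {G₂ : SimpleGraph (ZMod b) // IsNCTree G₂} =>
      (⟨glue a b n p.1.1 p.2.1, glue_prop ha hb hn p.1.2 p.2.2⟩ :
        {G : SimpleGraph (ZMod n) //
          IsNCTree G ∧ (G.neighborSet 0).ncard = 1 ∧ G.Adj 0 ((a : ℕ) : ZMod n)}))
    ⟨?_, ?_⟩).symm
  · intro p q h
    have hval : glue a b n p.1.1 p.2.1 = glue a b n q.1.1 q.2.1 := congrArg Subtype.val h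
    have h1 : p.1.1 = q.1.1 := by
      rw [← comap1_glue ha hb hn p.1.1 p.2.1, hval, comap1_glue ha hb hn]
    have h2 : p.2.1 = q.2.1 := by
      rw [← comap2_glue ha hb hn p.1.1 p.2.1, hval, comap2_glue ha hb hn]
    exact Prod.ext (Subtype.ext h1) (Subtype.ext h2)
  · rintro ⟨G, ⟨hT, hNC⟩, hdeg, hadj⟩
    have hdeg1 : ∀ w, G.Adj 0 w → w = ((a : ℕ) : ZMod n) := by
      obtain ⟨x0, hx0⟩ := Set.ncard_eq_one.mp hdeg
      intro w hw
      have hxaS : ((a : ℕ) : ZMod n) ∈ G.neighborSet 0 := hadj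
      have hwS : w ∈ G.neighborSet 0 := hw
      rw [hx0, Set.mem_singleton_iff] at hxaS hwS
      rw [hwS, hxaS]
    have hG : Good a n G := good_of_nc ha hb hn hNC hadj hdeg1
    refine ⟨(⟨G.comap (e1 a n), comap1_isNCTree ha hb hn hT hNC hG⟩,
      ⟨G.comap (e2 a b n), comap2_isNCTree ha hb hn hT hNC hG⟩), ?_⟩
    exact Subtype.ext (glue_eq ha hb hn hG hadj)


end WithHyps

end NCGlue

theorem card_ncTrees_deg_one_with_edge (n j : ℕ) (hn : 2 ≤ n) (hj2 : 2 ≤ j) (hjn : j ≤ n) :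
    Nat.card {G : SimpleGraph (ZMod n) //
        IsNCTree G ∧ (G.neighborSet 0).ncard = 1 ∧ G.Adj 0 ((j - 1 : ℕ) : ZMod n)} =
      A (j - 1) * A (n + 1 - j) := by
  exact NCGlue.main_count (by omega) (by omega) (by omega)
end

section
/- For every integer n ≥ 2, the number of n-noncrossing trees containing the edge {1, n} (an edge between the two cyclically adjacent vertices 1 and n) equals A_1(n), the number of n-noncrossing trees in which vertex 1 has degree 1. -/
open SimpleGraph

namespace NCAux

lemma connected_of_reachable_delete {V : Type*} {G : SimpleGraph V} {v w : V}
    (hr : (G \ fromEdgeSet {s(v, w)}).Reachable v w) {x y : V} (hxy : G.Reachable x y) :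
    (G \ fromEdgeSet {s(v, w)}).Reachable x y := by
  obtain ⟨p⟩ := hxy
  induction p with
  | nil => exact Reachable.refl _
  | @cons a b c hab p ih =>
    refine Reachable.trans ?_ ih
    by_cases he : s(a, b) = s(v, w)
    · rw [Sym2.eq_iff] at he
      rcases he with ⟨rfl, rfl⟩ | ⟨rfl, rfl⟩
      · exact hr
      · exact hr.symm
    · refine Adj.reachable ?_
      rw [sdiff_adj]
      refine ⟨hab, fun h => he ?_⟩
      exact ((fromEdgeSet_adj _).mp h).1

lemma isAcyclic_of_card {V : Type*} [Fintype V] (G : SimpleGraph V)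
    (hc : G.Connected) (hcard : G.edgeSet.ncard + 1 ≤ Fintype.card V) : G.IsAcyclic := by
  classical
  obtain ⟨m, hm⟩ : ∃ m, G.edgeSet.ncard = m := ⟨_, rfl⟩
  induction m generalizing G with
  | zero =>
    intro u p hp
    cases p with
    | nil => exact hp.ne_nil rfl
    | @cons _ b _ hadj q =>
      have he : s(u, b) ∈ G.edgeSet := hadj
      have : G.edgeSet = ∅ := (Set.ncard_eq_zero (Set.toFinite _)).mp hm
      rw [this] at he
      exact he
  | succ m ih =>
    intro u p hp
    cases p with
    | nil => exact hp.ne_nil rfl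
    | @cons _ b _ hadj q =>
      have hep : s(u, b) ∈ (Walk.cons hadj q).edges := by
        rw [Walk.edges_cons]; exact List.mem_cons_self
      have hreach : (G \ fromEdgeSet {s(u, b)}).Reachable u b :=
        (adj_and_reachable_delete_edges_iff_exists_cycle.mpr ⟨u, _, hp, hep⟩).2
      set G₂ := G \ fromEdgeSet {s(u, b)} with hG₂
      have hc₂ : G₂.Connected := by
        rw [connected_iff] at hc ⊢
        exact ⟨fun x y => connected_of_reachable_delete hreach (hc.1 x y), hc.2⟩
      have hes : G₂.edgeSet = G.edgeSet \ {s(u, b)} := by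
        rw [hG₂, edgeSet_sdiff, edgeSet_fromEdgeSet]
        congr 1
        ext e
        simp only [Set.mem_diff, Set.mem_singleton_iff, Set.mem_setOf_eq, and_iff_left_iff_imp]
        rintro rfl hd
        exact G.ne_of_adj hadj (by simpa using hd)
      have hcard₂ : G₂.edgeSet.ncard = m := by
        rw [hes, Set.ncard_diff_singleton_of_mem (G.mem_edgeSet.mpr hadj), hm]
        omega
      have hacyc₂ : G₂.IsAcyclic := ih G₂ hc₂ (by omega) hcard₂
      have htree : G₂.IsTree := ⟨hc₂, hacyc₂⟩
      have := htree.card_edgeFinset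
      rw [edgeFinset, ← Set.ncard_eq_toFinset_card', hcard₂] at this
      omega

/-! ### crossing lemmas -/

variable {n : ℕ} {G : SimpleGraph (ZMod n)}

lemma val_inj' [NeZero n] {a b : ZMod n} (h : a.val = b.val) : a = b :=
  ZMod.val_injective n h

/-- Lemma L: a walk avoiding both endpoints of an edge cannot escape the region
strictly inside the edge. -/
lemma walk_stays [NeZero n] (hnc : Noncrossing G) {a b : ZMod n} (hab : G.Adj a b) {u v : ZMod n}
    (W : G.Walk u v) (hW : ∀ w ∈ W.support, w ≠ a ∧ w ≠ b)
    (hu1 : a.val < u.val) (hu2 : u.val < b.val) :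
    a.val < v.val ∧ v.val < b.val := by
  induction W with
  | nil => exact ⟨hu1, hu2⟩
  | @cons x y z hxy W ih =>
    have hy : y ≠ a ∧ y ≠ b := hW y (by simp [Walk.support_cons])
    have h1 : ¬(a.val < x.val ∧ x.val < b.val ∧ b.val < y.val) := hnc a b x y hab hxy
    have h2 : ¬(y.val < a.val ∧ a.val < x.val ∧ x.val < b.val) := hnc y x a b hxy.symm hab
    have hya : y.val ≠ a.val := fun h => hy.1 (val_inj' h)
    have hyb : y.val ≠ b.val := fun h => hy.2 (val_inj' h)
    exact ih (fun w hw => hW w (by simp [Walk.support_cons, hw])) (by omega) (by omega)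

/-- Two vertex-disjoint walks cannot interleave. -/
lemma no_cross_walks [NeZero n] (hnc : Noncrossing G) : ∀ {x y : ZMod n} (Q : G.Walk x y) {u v : ZMod n}
    (P : G.Walk u v), (∀ p ∈ P.support, ∀ q ∈ Q.support, p ≠ q) →
    v.val < x.val → x.val < u.val → u.val < y.val → False := by
  intro x y Q
  induction Q with
  | nil => intro u v P _ h1 h2 h3; omega
  | @cons x x' y hxx' Q ih =>
    intro u v P hdisj h1 h2 h3
    have hx : ∀ p ∈ P.support, p ≠ x := fun p hp =>
      hdisj p hp x (by simp [Walk.support_cons])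
    have hx' : ∀ p ∈ P.support, p ≠ x' := fun p hp =>
      hdisj p hp x' (by simp [Walk.support_cons])
    have hux' : u.val ≠ x'.val := fun h => hx' u P.start_mem_support (val_inj' h)
    have hvx' : v.val ≠ x'.val := fun h => hx' v P.end_mem_support (val_inj' h)
    rcases lt_or_gt_of_ne (fun h : x.val = x'.val => G.ne_of_adj hxx' (val_inj' h)) with hc | hc
    · -- x.val < x'.val
      rcases lt_or_gt_of_ne hux' with hu' | hu'
      · -- u inside (x, x'), v outside (v < x): contradiction by walk_stays
        have := walk_stays hnc hxx' P
          (fun w hw => ⟨hx w hw, hx' w hw⟩) h2 hu'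
        omega
      · exact ih P (fun p hp q hq => hdisj p hp q (by simp [Walk.support_cons]; tauto))
          (by omega) (by omega) h3
    · -- x' < x
      rcases lt_or_gt_of_ne hvx' with hv' | hv'
      · exact ih P (fun p hp q hq => hdisj p hp q (by simp [Walk.support_cons]; tauto))
          (by omega) (by omega) h3
      · -- x' < v < x : v inside (x', x), u outside (u > x): use reversed walk
        have := walk_stays hnc hxx'.symm P.reverse
          (fun w hw => by
            rw [Walk.support_reverse, List.mem_reverse] at hw
            exact ⟨hx' w hw, hx w hw⟩) hv' (by omega)
        omega



/-! ### the component structure after deleting edge {0, -1} -/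

def Gdel (G : SimpleGraph (ZMod n)) : SimpleGraph (ZMod n) :=
  G \ fromEdgeSet {s(0, -1)}

lemma Gdel_le (G : SimpleGraph (ZMod n)) : Gdel G ≤ G := sdiff_le

lemma Gdel_adj {G : SimpleGraph (ZMod n)} {x y : ZMod n} :
    (Gdel G).Adj x y ↔ G.Adj x y ∧ s(x, y) ≠ s(0, -1) := by
  rw [Gdel, sdiff_adj, fromEdgeSet_adj]
  constructor
  · rintro ⟨h1, h2⟩
    exact ⟨h1, fun h => h2 ⟨h, G.ne_of_adj h1⟩⟩
  · rintro ⟨h1, h2⟩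
    exact ⟨h1, fun h => h2 h.1⟩

/-- membership in the component of `0` -/
def C0 (G : SimpleGraph (ZMod n)) (v : ZMod n) : Prop := (Gdel G).Reachable v 0

/-- membership in the component of `-1` -/
def C1 (G : SimpleGraph (ZMod n)) (v : ZMod n) : Prop := (Gdel G).Reachable v (-1)

section Phi

variable {G : SimpleGraph (ZMod n)}

lemma not_reach_del (hT : G.IsTree) (hadj : G.Adj 0 (-1 : ZMod n)) :
    ¬ (Gdel G).Reachable 0 (-1) := by
  have := (isAcyclic_iff_forall_adj_isBridge.mp hT.IsAcyclic) hadj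
  exact isBridge_iff.mp this

lemma cover_aux {a b : ZMod n} (p : G.Walk a b)
    (hb : C0 G b ∨ C1 G b) : C0 G a ∨ C1 G a := by
  induction p with
  | nil => exact hb
  | @cons a c b hab p ih =>
    by_cases he : s(a, c) = s(0, -1)
    · rw [Sym2.eq_iff] at he
      rcases he with ⟨rfl, rfl⟩ | ⟨rfl, rfl⟩
      · exact Or.inl (Reachable.refl _)
      · exact Or.inr (Reachable.refl _)
    · rcases ih hb with h | h
      · exact Or.inl ((Adj.reachable (Gdel_adj.mpr ⟨hab, he⟩)).trans h)
      · exact Or.inr ((Adj.reachable (Gdel_adj.mpr ⟨hab, he⟩)).trans h)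

lemma cover (hT : G.IsTree) : ∀ v : ZMod n, C0 G v ∨ C1 G v := by
  intro v
  obtain ⟨p⟩ := hT.isConnected.preconnected v 0
  exact cover_aux p (Or.inl (Reachable.refl _))

lemma disj (hT : G.IsTree) (hadj : G.Adj 0 (-1 : ZMod n)) {v : ZMod n} :
    ¬ (C0 G v ∧ C1 G v) := by
  rintro ⟨h0, h1⟩
  exact not_reach_del hT hadj (h0.symm.trans h1)

lemma support_C0 {v : ZMod n} (p : (Gdel G).Walk v 0) {w : ZMod n}
    (hw : w ∈ p.support) : C0 G w := by
  classical
  exact ⟨p.dropUntil w hw⟩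

lemma support_C1 {v : ZMod n} (p : (Gdel G).Walk v (-1)) {w : ZMod n}
    (hw : w ∈ p.support) : C1 G w := by
  classical
  exact ⟨p.dropUntil w hw⟩

lemma neg_one_eq (hn : 2 ≤ n) : ((n - 1 : ℕ) : ZMod n) = (-1 : ZMod n) := by
  have h1 : (1:ℕ) ≤ n := by omega
  rw [Nat.cast_sub h1, ZMod.natCast_self, Nat.cast_one, zero_sub]

lemma val_neg_one' [NeZero n] (hn : 2 ≤ n) : (-1 : ZMod n).val = n - 1 := by
  rw [← neg_one_eq hn, ZMod.val_cast_of_lt (by omega)]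

lemma mem_support_mapLe {H : SimpleGraph (ZMod n)} (hle : G ≤ H) {a b w : ZMod n}
    (p : G.Walk a b) : w ∈ (p.mapLe hle).support ↔ w ∈ p.support := by
  rw [Walk.mapLe, Walk.support_map]
  simp

lemma sep [NeZero n] (hn : 2 ≤ n) (hT : G.IsTree) (hnc : Noncrossing G)
    (hadj : G.Adj 0 (-1 : ZMod n)) {u x : ZMod n} (hu : C0 G u) (hx : C1 G x) :
    u.val < x.val := by
  by_contra hcon
  have hx0 : x ≠ 0 := fun h => disj hT hadj ⟨h ▸ (Reachable.refl _), hx⟩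
  have hu1 : u ≠ -1 := fun h => disj hT hadj ⟨hu, h ▸ (Reachable.refl _)⟩
  have hxu : x ≠ u := fun h => disj hT hadj ⟨hu, h ▸ hx⟩
  have h1 : x.val < u.val := by
    rcases lt_or_gt_of_ne (fun h => hxu (val_inj' h)) with h | h
    · exact h
    · omega
  have h2 : 0 < x.val := by
    have := (ZMod.val_eq_zero x).not.mpr hx0
    omega
  have h3 : u.val < n - 1 := by
    have h4 := ZMod.val_lt u
    have h5 : u.val ≠ n - 1 := fun h => hu1 (val_inj' (h.trans (val_neg_one' hn).symm))
    omega
  obtain ⟨Q⟩ := hx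
  obtain ⟨P⟩ := hu
  refine no_cross_walks hnc (Q.mapLe (Gdel_le G)) (P.mapLe (Gdel_le G)) ?_ ?_ ?_ ?_
  · intro p hp q hq
    rw [mem_support_mapLe] at hp hq
    intro h
    exact disj hT hadj ⟨support_C0 P hp, h ▸ support_C1 Q hq⟩
  · simpa [ZMod.val_zero] using h2
  · exact h1
  · rw [val_neg_one' hn]; exact h3

/-- the size of the component of `0`, i.e. the minimum value in the component of `-1`. -/
noncomputable def kOf (G : SimpleGraph (ZMod n)) : ℕ := sInf {i : ℕ | C1 G ((i : ℕ) : ZMod n)}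

lemma kOf_spec (hn : 2 ≤ n) : C1 G ((kOf G : ℕ) : ZMod n) ∧ kOf G ≤ n - 1 := by
  have hmem : (n - 1 : ℕ) ∈ {i : ℕ | C1 G ((i : ℕ) : ZMod n)} := by
    show C1 G _
    rw [neg_one_eq hn]
    exact Reachable.refl _
  exact ⟨Nat.sInf_mem ⟨_, hmem⟩, Nat.sInf_le hmem⟩

lemma kOf_lt (hn : 2 ≤ n) : kOf G < n := by
  have := (kOf_spec (G := G) hn).2
  omega

lemma kOf_val (hn : 2 ≤ n) [NeZero n] : ((kOf G : ℕ) : ZMod n).val = kOf G :=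
  ZMod.val_cast_of_lt (kOf_lt hn)

lemma kOf_pos [NeZero n] (hn : 2 ≤ n) (hT : G.IsTree) (hadj : G.Adj 0 (-1 : ZMod n)) :
    1 ≤ kOf G := by
  by_contra h
  have h0 : kOf G = 0 := by omega
  have := (kOf_spec (G := G) hn).1
  rw [h0] at this
  exact disj hT hadj ⟨Reachable.refl _, by simpa using this⟩

lemma mem_C1_iff [NeZero n] (hn : 2 ≤ n) (hT : G.IsTree) (hnc : Noncrossing G)
    (hadj : G.Adj 0 (-1 : ZMod n)) {v : ZMod n} : C1 G v ↔ kOf G ≤ v.val := by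
  constructor
  · intro h
    have hmem : v.val ∈ {i : ℕ | C1 G ((i : ℕ) : ZMod n)} := by
      show C1 G _
      rwa [ZMod.natCast_val, ZMod.cast_id]
    exact Nat.sInf_le hmem
  · intro h
    rcases cover hT v with hc | hc
    · have := sep hn hT hnc hadj hc (kOf_spec (G := G) hn).1
      rw [kOf_val hn] at this
      omega
    · exact hc

lemma mem_C0_iff [NeZero n] (hn : 2 ≤ n) (hT : G.IsTree) (hnc : Noncrossing G)
    (hadj : G.Adj 0 (-1 : ZMod n)) {v : ZMod n} : C0 G v ↔ v.val < kOf G := by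
  constructor
  · intro h
    have := sep hn hT hnc hadj h (kOf_spec (G := G) hn).1
    rwa [kOf_val hn] at this
  · intro h
    rcases cover hT v with hc | hc
    · exact hc
    · rw [mem_C1_iff hn hT hnc hadj] at hc
      omega

lemma edge_classify [NeZero n] (hn : 2 ≤ n) (hT : G.IsTree) (hnc : Noncrossing G)
    (hadj : G.Adj 0 (-1 : ZMod n)) {a b : ZMod n} (hab : G.Adj a b) :
    s(a, b) = s(0, -1) ∨ (a.val < kOf G ∧ b.val < kOf G) ∨
      (kOf G ≤ a.val ∧ kOf G ≤ b.val) := by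
  by_cases he : s(a, b) = s(0, -1)
  · exact Or.inl he
  · have hd : (Gdel G).Adj a b := Gdel_adj.mpr ⟨hab, he⟩
    rcases cover hT a with ha | ha <;> rcases cover hT b with hb | hb
    · exact Or.inr (Or.inl ⟨(mem_C0_iff hn hT hnc hadj).mp ha, (mem_C0_iff hn hT hnc hadj).mp hb⟩)
    · exact absurd ⟨ha, hd.reachable.trans hb⟩ (disj hT hadj)
    · exact absurd ⟨hd.reachable.trans hb, ha⟩ (disj hT hadj)
    · exact Or.inr (Or.inr ⟨(mem_C1_iff hn hT hnc hadj).mp ha, (mem_C1_iff hn hT hnc hadj).mp hb⟩)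

end Phi
/-! ### value arithmetic helpers -/

lemma val_add_one [NeZero n] (hn : 2 ≤ n) {a : ZMod n} (h : a.val + 1 < n) :
    (a + 1).val = a.val + 1 := by
  haveI : Fact (1 < n) := ⟨hn⟩
  have h1 : (1 : ZMod n).val = 1 := ZMod.val_one n
  have h2 := ZMod.val_add_of_lt (a := a) (b := 1) (by rw [h1]; omega)
  rw [h2, h1]

lemma val_sub_one [NeZero n] (hn : 2 ≤ n) {a : ZMod n} (h : 1 ≤ a.val) :
    (a - 1).val = a.val - 1 := by
  have hlt := ZMod.val_lt a
  have ha : a - 1 = ((a.val - 1 : ℕ) : ZMod n) := by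
    have h3 : a = ((a.val : ℕ) : ZMod n) := by rw [ZMod.natCast_val, ZMod.cast_id]
    rw [Nat.cast_sub h, ← h3, Nat.cast_one]
  rw [ha, ZMod.val_cast_of_lt (by omega)]

/-! ### the edge relabelling maps -/

/-- the forward relabelling on edges -/
def Fmap (n k : ℕ) : Sym2 (ZMod n) → Sym2 (ZMod n) :=
  Sym2.lift ⟨fun a b =>
    if s(a, b) = s((0 : ZMod n), -1) then s((0 : ZMod n), ((k : ℕ) : ZMod n))
    else if a.val < k ∧ b.val < k then s(a + 1, b + 1) else s(a, b), by
    intro a b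
    dsimp only
    by_cases h1 : s(a, b) = s((0 : ZMod n), -1)
    · rw [if_pos h1, if_pos (Sym2.eq_swap.trans h1)]
    · rw [if_neg h1, if_neg (fun h => h1 (Sym2.eq_swap.trans h))]
      by_cases h2 : a.val < k ∧ b.val < k
      · rw [if_pos h2, if_pos ⟨h2.2, h2.1⟩, Sym2.eq_swap]
      · rw [if_neg h2, if_neg (fun h => h2 ⟨h.2, h.1⟩), Sym2.eq_swap]⟩

/-- the backward relabelling on edges -/
def Fmap' (n k : ℕ) : Sym2 (ZMod n) → Sym2 (ZMod n) :=
  Sym2.lift ⟨fun a b =>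
    if a = 0 ∨ b = 0 then s((0 : ZMod n), -1)
    else if a.val ≤ k ∧ b.val ≤ k then s(a - 1, b - 1) else s(a, b), by
    intro a b
    dsimp only
    by_cases h1 : a = 0 ∨ b = 0
    · rw [if_pos h1, if_pos (Or.symm h1)]
    · rw [if_neg h1, if_neg (fun h => h1 (Or.symm h))]
      by_cases h2 : a.val ≤ k ∧ b.val ≤ k
      · rw [if_pos h2, if_pos ⟨h2.2, h2.1⟩, Sym2.eq_swap]
      · rw [if_neg h2, if_neg (fun h => h2 ⟨h.2, h.1⟩), Sym2.eq_swap]⟩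

variable {k : ℕ}

lemma Fmap_special : Fmap n k s((0 : ZMod n), -1) = s((0 : ZMod n), ((k : ℕ) : ZMod n)) := by
  rw [Fmap, Sym2.lift_mk]
  dsimp only
  rw [if_pos rfl]

lemma Fmap_low [NeZero n] (hn : 2 ≤ n) {a b : ZMod n} (ha : a.val < k) (hb : b.val < k)
    (hk : k ≤ n - 1) : Fmap n k s(a, b) = s(a + 1, b + 1) := by
  have hvn : (-1 : ZMod n).val = n - 1 := val_neg_one' hn
  have hne : s(a, b) ≠ s((0 : ZMod n), -1) := by
    intro hcon
    rw [Sym2.eq_iff] at hcon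
    rcases hcon with ⟨rfl, rfl⟩ | ⟨rfl, rfl⟩ <;> omega
  rw [Fmap, Sym2.lift_mk]
  dsimp only
  rw [if_neg hne, if_pos ⟨ha, hb⟩]

lemma Fmap_high [NeZero n] {a b : ZMod n} (ha : k ≤ a.val) (hb : k ≤ b.val)
    (hk : 1 ≤ k) : Fmap n k s(a, b) = s(a, b) := by
  have h0 : (0 : ZMod n).val = 0 := ZMod.val_zero
  have hne : s(a, b) ≠ s((0 : ZMod n), -1) := by
    intro hcon
    rw [Sym2.eq_iff] at hcon
    rcases hcon with ⟨rfl, rfl⟩ | ⟨rfl, rfl⟩ <;> omega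
  rw [Fmap, Sym2.lift_mk]
  dsimp only
  rw [if_neg hne, if_neg (by omega : ¬(a.val < k ∧ b.val < k))]

lemma Fmap'_special {b : ZMod n} : Fmap' n k s((0 : ZMod n), b) = s((0 : ZMod n), -1) := by
  rw [Fmap', Sym2.lift_mk]
  dsimp only
  rw [if_pos (Or.inl rfl)]

lemma Fmap'_low [NeZero n] {a b : ZMod n} (ha : 1 ≤ a.val) (ha' : a.val ≤ k)
    (hb : 1 ≤ b.val) (hb' : b.val ≤ k) : Fmap' n k s(a, b) = s(a - 1, b - 1) := by
  have h0 : (0 : ZMod n).val = 0 := ZMod.val_zero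
  have hne : ¬(a = 0 ∨ b = 0) := by
    rintro (rfl | rfl) <;> omega
  rw [Fmap', Sym2.lift_mk]
  dsimp only
  rw [if_neg hne, if_pos ⟨ha', hb'⟩]

lemma Fmap'_high [NeZero n] {a b : ZMod n} (ha : k ≤ a.val) (hb : k ≤ b.val)
    (hk : 1 ≤ k) (hab : a ≠ b) : Fmap' n k s(a, b) = s(a, b) := by
  have h0 : (0 : ZMod n).val = 0 := ZMod.val_zero
  have hvv : a.val ≠ b.val := fun h => hab (val_inj' h)
  have hne : ¬(a = 0 ∨ b = 0) := by
    rintro (rfl | rfl) <;> omega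
  rw [Fmap', Sym2.lift_mk]
  dsimp only
  rw [if_neg hne, if_neg (by omega : ¬(a.val ≤ k ∧ b.val ≤ k))]

/-! ### the forward construction -/

noncomputable def Phi (G : SimpleGraph (ZMod n)) : SimpleGraph (ZMod n) :=
  fromEdgeSet (Fmap n (kOf G) '' G.edgeSet)

section PhiProps

variable {G : SimpleGraph (ZMod n)} [NeZero n] (hn : 2 ≤ n) (hT : G.IsTree)
  (hnc : Noncrossing G) (hadj : G.Adj 0 (-1 : ZMod n))

include hn hT hnc hadj

lemma Phi_adj_cases {x y : ZMod n} (h : (Phi G).Adj x y) :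
    ((x = 0 ∧ y = ((kOf G : ℕ) : ZMod n)) ∨ (y = 0 ∧ x = ((kOf G : ℕ) : ZMod n))) ∨
    (1 ≤ x.val ∧ x.val ≤ kOf G ∧ 1 ≤ y.val ∧ y.val ≤ kOf G ∧ G.Adj (x - 1) (y - 1)) ∨
    (kOf G ≤ x.val ∧ kOf G ≤ y.val ∧ G.Adj x y) := by
  rw [Phi, fromEdgeSet_adj] at h
  obtain ⟨⟨e, he, hfe⟩, hxy⟩ := h
  induction e using Sym2.ind with
  | _ a b =>
  have hab : G.Adj a b := G.mem_edgeSet.mp he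
  have hk2 := (kOf_spec (G := G) hn).2
  rcases edge_classify hn hT hnc hadj hab with hsp | ⟨ha, hb⟩ | ⟨ha, hb⟩
  · rw [hsp, Fmap_special] at hfe
    rw [Sym2.eq_iff] at hfe
    rcases hfe with ⟨h1, h2⟩ | ⟨h1, h2⟩
    · exact Or.inl (Or.inl ⟨h1.symm, h2.symm⟩)
    · exact Or.inl (Or.inr ⟨h1.symm, h2.symm⟩)
  · rw [Fmap_low hn ha hb hk2] at hfe
    have hva : (a + 1).val = a.val + 1 := val_add_one hn (by omega)
    have hvb : (b + 1).val = b.val + 1 := val_add_one hn (by omega)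
    rw [Sym2.eq_iff] at hfe
    rcases hfe with ⟨h1, h2⟩ | ⟨h1, h2⟩
    · refine Or.inr (Or.inl ⟨?_, ?_, ?_, ?_, ?_⟩)
      · rw [← h1, hva]; omega
      · rw [← h1, hva]; omega
      · rw [← h2, hvb]; omega
      · rw [← h2, hvb]; omega
      · rw [← h1, ← h2, add_sub_cancel_right, add_sub_cancel_right]; exact hab
    · refine Or.inr (Or.inl ⟨?_, ?_, ?_, ?_, ?_⟩)
      · rw [← h2, hvb]; omega
      · rw [← h2, hvb]; omega
      · rw [← h1, hva]; omega
      · rw [← h1, hva]; omega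
      · rw [← h1, ← h2, add_sub_cancel_right, add_sub_cancel_right]; exact hab.symm
  · rw [Fmap_high ha hb (kOf_pos hn hT hadj)] at hfe
    rw [Sym2.eq_iff] at hfe
    rcases hfe with ⟨h1, h2⟩ | ⟨h1, h2⟩
    · subst h1; subst h2; exact Or.inr (Or.inr ⟨ha, hb, hab⟩)
    · subst h1; subst h2; exact Or.inr (Or.inr ⟨hb, ha, hab.symm⟩)

lemma Phi_noncrossing : Noncrossing (Phi G) := by
  intro a b c d hab hcd
  have h1 := Phi_adj_cases hn hT hnc hadj hab
  have h2 := Phi_adj_cases hn hT hnc hadj hcd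
  have hm : (((kOf G : ℕ)) : ZMod n).val = kOf G := kOf_val hn
  have h0 : (0 : ZMod n).val = 0 := ZMod.val_zero
  have hk1 : 1 ≤ kOf G := kOf_pos hn hT hadj
  rintro ⟨hac, hcb, hbd⟩
  rcases h1 with (⟨rfl, rfl⟩ | ⟨rfl, rfl⟩) | ⟨ha1, ha2, hb1, hb2, hGab⟩ | ⟨ha1, hb1, hGab⟩ <;>
    rcases h2 with (⟨rfl, rfl⟩ | ⟨rfl, rfl⟩) | ⟨hc1, hc2, hd1, hd2, hGcd⟩ | ⟨hc1, hd1, hGcd⟩ <;>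
      try omega
  · -- low, low
    have hx := hnc _ _ _ _ hGab hGcd
    rw [val_sub_one hn ha1, val_sub_one hn hc1, val_sub_one hn hb1, val_sub_one hn hd1] at hx
    omega
  · -- high, high
    exact hnc _ _ _ _ hGab hGcd ⟨hac, hcb, hbd⟩

lemma Phi_adj_zero : (Phi G).Adj 0 ((kOf G : ℕ) : ZMod n) := by
  rw [Phi, fromEdgeSet_adj]
  refine ⟨⟨s((0 : ZMod n), -1), G.mem_edgeSet.mpr hadj, Fmap_special⟩, ?_⟩
  intro h
  have h2 := congrArg ZMod.val h
  rw [ZMod.val_zero, kOf_val hn] at h2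
  have := kOf_pos hn hT hadj
  omega

lemma Phi_reach_low : ∀ {u v : ZMod n} (p : (Gdel G).Walk u v), C0 G v →
    (Phi G).Reachable (u + 1) (v + 1) := by
  intro u v p hv
  induction p with
  | nil => exact Reachable.refl _
  | @cons u w _ huw p ih =>
    refine Reachable.trans ?_ (ih hv)
    refine Adj.reachable ?_
    have hu : u.val < kOf G := (mem_C0_iff hn hT hnc hadj).mp
      ((Walk.cons huw p).reachable.trans hv)
    have hw : w.val < kOf G := (mem_C0_iff hn hT hnc hadj).mp (p.reachable.trans hv)
    rw [Phi, fromEdgeSet_adj]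
    refine ⟨⟨s(u, w), G.mem_edgeSet.mpr ((Gdel_adj.mp huw).1),
      Fmap_low hn hu hw (kOf_spec (G := G) hn).2⟩, ?_⟩
    intro h
    exact ((Gdel_adj.mp huw).1).ne (by
      have := congrArg (fun z => z - 1) h
      simpa using this)

lemma Phi_reach_high : ∀ {u v : ZMod n} (p : (Gdel G).Walk u v), C1 G v →
    (Phi G).Reachable u v := by
  intro u v p hv
  induction p with
  | nil => exact Reachable.refl _
  | @cons u w _ huw p ih =>
    refine Reachable.trans ?_ (ih hv)
    refine Adj.reachable ?_
    have hu : kOf G ≤ u.val := (mem_C1_iff hn hT hnc hadj).mp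
      ((Walk.cons huw p).reachable.trans hv)
    have hw : kOf G ≤ w.val := (mem_C1_iff hn hT hnc hadj).mp (p.reachable.trans hv)
    rw [Phi, fromEdgeSet_adj]
    exact ⟨⟨s(u, w), G.mem_edgeSet.mpr ((Gdel_adj.mp huw).1),
      Fmap_high hu hw (kOf_pos hn hT hadj)⟩, ((Gdel_adj.mp huw).1).ne⟩

lemma Phi_connected : (Phi G).Connected := by
  rw [connected_iff]
  refine ⟨fun v w => ?_, inferInstance⟩
  suffices h : ∀ v : ZMod n, (Phi G).Reachable v ((kOf G : ℕ) : ZMod n) by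
    exact (h v).trans (h w).symm
  intro v
  have hk1 : 1 ≤ kOf G := kOf_pos hn hT hadj
  have hk2 := (kOf_spec (G := G) hn).2
  have hmv : (((kOf G : ℕ)) : ZMod n).val = kOf G := kOf_val hn
  have hreach1 : (Phi G).Reachable ((kOf G : ℕ) : ZMod n) 1 := by
    have hmem : C0 G (((kOf G : ℕ) : ZMod n) - 1) := by
      rw [mem_C0_iff hn hT hnc hadj, val_sub_one hn (by omega)]
      omega
    obtain ⟨p⟩ := hmem
    have := Phi_reach_low hn hT hnc hadj p (Reachable.refl _)
    rwa [sub_add_cancel, zero_add] at this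
  by_cases hv : v.val < kOf G
  · by_cases hv0 : v = 0
    · subst hv0
      exact (Phi_adj_zero hn hT hnc hadj).reachable
    · have hv1 : 1 ≤ v.val := by
        have := (ZMod.val_eq_zero v).not.mpr hv0
        omega
      have hmem : C0 G (v - 1) := by
        rw [mem_C0_iff hn hT hnc hadj, val_sub_one hn hv1]
        omega
      obtain ⟨p⟩ := hmem
      have h2 := Phi_reach_low hn hT hnc hadj p (Reachable.refl _)
      rw [sub_add_cancel, zero_add] at h2
      exact h2.trans hreach1.symm
  · have hmem : C1 G v := by
      rw [mem_C1_iff hn hT hnc hadj]; omega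
    obtain ⟨p⟩ := hmem
    have h2 := Phi_reach_high hn hT hnc hadj p (Reachable.refl _)
    obtain ⟨q⟩ := (kOf_spec (G := G) hn).1
    have h3 := Phi_reach_high hn hT hnc hadj q (Reachable.refl _)
    exact h2.trans h3.symm

lemma Phi_nbhd : (Phi G).neighborSet 0 = {((kOf G : ℕ) : ZMod n)} := by
  ext x
  simp only [mem_neighborSet, Set.mem_singleton_iff]
  constructor
  · intro h
    have h0 : (0 : ZMod n).val = 0 := ZMod.val_zero
    have hk1 : 1 ≤ kOf G := kOf_pos hn hT hadj
    rcases Phi_adj_cases hn hT hnc hadj h with (⟨_, h2⟩ | ⟨h1, h2⟩) | ⟨h1, _, _, _, _⟩ | ⟨h1, _, _⟩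
    · exact h2
    · exfalso
      have := congrArg ZMod.val h2
      rw [ZMod.val_zero, kOf_val hn] at this
      omega
    · omega
    · omega
  · rintro rfl
    exact Phi_adj_zero hn hT hnc hadj

lemma Phi_edgeSet : (Phi G).edgeSet = Fmap n (kOf G) '' G.edgeSet := by
  rw [Phi, edgeSet_fromEdgeSet]
  ext e
  simp only [Set.mem_diff, Set.mem_setOf_eq, and_iff_left_iff_imp]
  rintro ⟨e₀, he₀, rfl⟩
  induction e₀ using Sym2.ind with
  | _ a b =>
  have hab : G.Adj a b := G.mem_edgeSet.mp he₀
  have hk1 : 1 ≤ kOf G := kOf_pos hn hT hadj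
  have hk2 := (kOf_spec (G := G) hn).2
  rcases edge_classify hn hT hnc hadj hab with hsp | ⟨ha, hb⟩ | ⟨ha, hb⟩
  · rw [hsp, Fmap_special, Sym2.mem_diagSet, Sym2.isDiag_iff_proj_eq]
    intro h
    have h2 := congrArg ZMod.val h
    rw [ZMod.val_zero, kOf_val hn] at h2
    omega
  · rw [Fmap_low hn ha hb hk2, Sym2.mem_diagSet, Sym2.isDiag_iff_proj_eq]
    intro h
    exact hab.ne (add_right_cancel h)
  · rw [Fmap_high ha hb hk1, Sym2.mem_diagSet, Sym2.isDiag_iff_proj_eq]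
    exact hab.ne

lemma Fmap_injOn : Set.InjOn (Fmap n (kOf G)) G.edgeSet := by
  have hk1 : 1 ≤ kOf G := kOf_pos hn hT hadj
  have hk2 := (kOf_spec (G := G) hn).2
  have hmv : (((kOf G : ℕ)) : ZMod n).val = kOf G := kOf_val hn
  have h0 : (0 : ZMod n).val = 0 := ZMod.val_zero
  have hn1 : (-1 : ZMod n).val = n - 1 := val_neg_one' hn
  intro e₁ h₁ e₂ h₂ heq
  induction e₁ using Sym2.ind with
  | _ a b =>
  induction e₂ using Sym2.ind with
  | _ c d =>
  have hab : G.Adj a b := G.mem_edgeSet.mp h₁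
  have hcd : G.Adj c d := G.mem_edgeSet.mp h₂
  have hvab : a.val ≠ b.val := fun h => hab.ne (val_inj' h)
  have hvcd : c.val ≠ d.val := fun h => hcd.ne (val_inj' h)
  rcases edge_classify hn hT hnc hadj hab with hsp1 | ⟨ha, hb⟩ | ⟨ha, hb⟩ <;>
    rcases edge_classify hn hT hnc hadj hcd with hsp2 | ⟨hc, hd⟩ | ⟨hc, hd⟩
  · rw [hsp1, hsp2]
  · rw [hsp1, Fmap_special, Fmap_low hn hc hd hk2, Sym2.eq_iff] at heq
    have hvc : (c + 1).val = c.val + 1 := val_add_one hn (by omega)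
    have hvd : (d + 1).val = d.val + 1 := val_add_one hn (by omega)
    exfalso
    rcases heq with ⟨h1, _⟩ | ⟨h1, _⟩
    · have := congrArg ZMod.val h1; omega
    · have := congrArg ZMod.val h1; omega
  · rw [hsp1, Fmap_special, Fmap_high hc hd hk1, Sym2.eq_iff] at heq
    exfalso
    rcases heq with ⟨h1, _⟩ | ⟨h1, _⟩
    · have := congrArg ZMod.val h1; omega
    · have := congrArg ZMod.val h1; omega
  · rw [Fmap_low hn ha hb hk2, hsp2, Fmap_special, Sym2.eq_iff] at heq
    have hva : (a + 1).val = a.val + 1 := val_add_one hn (by omega)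
    have hvb : (b + 1).val = b.val + 1 := val_add_one hn (by omega)
    exfalso
    rcases heq with ⟨h1, _⟩ | ⟨_, h1⟩
    · have := congrArg ZMod.val h1; omega
    · have := congrArg ZMod.val h1; omega
  · rw [Fmap_low hn ha hb hk2, Fmap_low hn hc hd hk2, Sym2.eq_iff] at heq
    rw [Sym2.eq_iff]
    rcases heq with ⟨h1, h2⟩ | ⟨h1, h2⟩
    · exact Or.inl ⟨add_right_cancel h1, add_right_cancel h2⟩
    · exact Or.inr ⟨add_right_cancel h1, add_right_cancel h2⟩
  · rw [Fmap_low hn ha hb hk2, Fmap_high hc hd hk1, Sym2.eq_iff] at heq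
    have hva : (a + 1).val = a.val + 1 := val_add_one hn (by omega)
    have hvb : (b + 1).val = b.val + 1 := val_add_one hn (by omega)
    exfalso
    rcases heq with ⟨h1, h2⟩ | ⟨h1, h2⟩ <;>
    · have e1 := congrArg ZMod.val h1
      have e2 := congrArg ZMod.val h2
      omega
  · rw [Fmap_high ha hb hk1, hsp2, Fmap_special, Sym2.eq_iff] at heq
    exfalso
    rcases heq with ⟨h1, _⟩ | ⟨_, h1⟩
    · have := congrArg ZMod.val h1; omega
    · have := congrArg ZMod.val h1; omega
  · rw [Fmap_high ha hb hk1, Fmap_low hn hc hd hk2, Sym2.eq_iff] at heq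
    have hvc : (c + 1).val = c.val + 1 := val_add_one hn (by omega)
    have hvd : (d + 1).val = d.val + 1 := val_add_one hn (by omega)
    exfalso
    rcases heq with ⟨h1, h2⟩ | ⟨h1, h2⟩ <;>
    · have e1 := congrArg ZMod.val h1
      have e2 := congrArg ZMod.val h2
      omega
  · rw [Fmap_high ha hb hk1, Fmap_high hc hd hk1] at heq
    exact heq

lemma Phi_isTree : (Phi G).IsTree := by
  classical
  refine ⟨Phi_connected hn hT hnc hadj, ?_⟩
  apply isAcyclic_of_card _ (Phi_connected hn hT hnc hadj)
  have hcount : (Phi G).edgeSet.ncard = G.edgeSet.ncard := by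
    rw [Phi_edgeSet hn hT hnc hadj,
      Set.ncard_image_of_injOn (Fmap_injOn hn hT hnc hadj)]
  have hGcard := hT.card_edgeFinset
  rw [edgeFinset, ← Set.ncard_eq_toFinset_card'] at hGcard
  rw [hcount]
  omega

end PhiProps

/-! ### the backward construction -/

open Classical in
noncomputable def mOf (G : SimpleGraph (ZMod n)) : ZMod n :=
  if h : ∃ a, G.neighborSet 0 = {a} then h.choose else 0

noncomputable def Psi (G : SimpleGraph (ZMod n)) : SimpleGraph (ZMod n) :=
  fromEdgeSet (Fmap' n (mOf G).val '' G.edgeSet)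

lemma mOf_eq {G : SimpleGraph (ZMod n)} {m : ZMod n} (hm : G.neighborSet 0 = {m}) :
    mOf G = m := by
  rw [mOf, dif_pos ⟨m, hm⟩]
  have hspec := (⟨m, hm⟩ : ∃ a, G.neighborSet 0 = {a}).choose_spec
  exact (Set.singleton_eq_singleton_iff.mp (hm.symm.trans hspec)).symm

section PsiProps

variable {G : SimpleGraph (ZMod n)} [NeZero n] (hn : 2 ≤ n) (hT : G.IsTree)
  (hnc : Noncrossing G) {m : ZMod n} (hm : G.neighborSet 0 = {m})

include hn hT hnc hm

lemma Psi_eq : Psi G = fromEdgeSet (Fmap' n m.val '' G.edgeSet) := by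
  rw [Psi, mOf_eq hm]

lemma adj_zero_m : G.Adj 0 m := by
  have : m ∈ G.neighborSet 0 := by rw [hm]; rfl
  exact this

lemma m_val_pos : 1 ≤ m.val := by
  have h1 := (adj_zero_m hn hT hnc hm).ne'
  have := (ZMod.val_eq_zero m).not.mpr h1
  omega

lemma m_val_le : m.val ≤ n - 1 := by
  have := ZMod.val_lt m
  omega

lemma edge_classify' {a b : ZMod n} (hab : G.Adj a b) :
    s(a, b) = s(0, m) ∨
    (1 ≤ a.val ∧ a.val ≤ m.val ∧ 1 ≤ b.val ∧ b.val ≤ m.val) ∨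
    (m.val ≤ a.val ∧ m.val ≤ b.val) := by
  have h0 : (0 : ZMod n).val = 0 := ZMod.val_zero
  by_cases ha0 : a = 0
  · subst ha0
    have : b ∈ G.neighborSet 0 := hab
    rw [hm, Set.mem_singleton_iff] at this
    subst this
    exact Or.inl rfl
  by_cases hb0 : b = 0
  · subst hb0
    have : a ∈ G.neighborSet 0 := hab.symm
    rw [hm, Set.mem_singleton_iff] at this
    subst this
    exact Or.inl Sym2.eq_swap
  have ha1 : 1 ≤ a.val := by
    have := (ZMod.val_eq_zero a).not.mpr ha0
    omega
  have hb1 : 1 ≤ b.val := by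
    have := (ZMod.val_eq_zero b).not.mpr hb0
    omega
  have hvab : a.val ≠ b.val := fun h => hab.ne (val_inj' h)
  have hx1 := hnc 0 m a b (adj_zero_m hn hT hnc hm) hab
  have hx2 := hnc 0 m b a (adj_zero_m hn hT hnc hm) hab.symm
  rw [h0] at hx1 hx2
  right
  omega

lemma Psi_adj_cases {x y : ZMod n} (h : (Psi G).Adj x y) :
    ((x = 0 ∧ y = -1) ∨ (y = 0 ∧ x = -1)) ∨
    (x.val < m.val ∧ y.val < m.val ∧ G.Adj (x + 1) (y + 1)) ∨
    (m.val ≤ x.val ∧ m.val ≤ y.val ∧ G.Adj x y) := by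
  rw [Psi_eq hn hT hnc hm, fromEdgeSet_adj] at h
  obtain ⟨⟨e, he, hfe⟩, hxy⟩ := h
  induction e using Sym2.ind with
  | _ a b =>
  have hab : G.Adj a b := G.mem_edgeSet.mp he
  have hk1 : 1 ≤ m.val := m_val_pos hn hT hnc hm
  rcases edge_classify' hn hT hnc hm hab with hsp | ⟨ha1, ha2, hb1, hb2⟩ | ⟨ha, hb⟩
  · rw [hsp, Fmap'_special] at hfe
    rw [Sym2.eq_iff] at hfe
    rcases hfe with ⟨h1, h2⟩ | ⟨h1, h2⟩
    · exact Or.inl (Or.inl ⟨h1.symm, h2.symm⟩)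
    · exact Or.inl (Or.inr ⟨h1.symm, h2.symm⟩)
  · rw [Fmap'_low ha1 ha2 hb1 hb2] at hfe
    have hva : (a - 1).val = a.val - 1 := val_sub_one hn ha1
    have hvb : (b - 1).val = b.val - 1 := val_sub_one hn hb1
    rw [Sym2.eq_iff] at hfe
    rcases hfe with ⟨h1, h2⟩ | ⟨h1, h2⟩
    · refine Or.inr (Or.inl ⟨?_, ?_, ?_⟩)
      · rw [← h1, hva]; omega
      · rw [← h2, hvb]; omega
      · rw [← h1, ← h2, sub_add_cancel, sub_add_cancel]; exact hab
    · refine Or.inr (Or.inl ⟨?_, ?_, ?_⟩)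
      · rw [← h2, hvb]; omega
      · rw [← h1, hva]; omega
      · rw [← h1, ← h2, sub_add_cancel, sub_add_cancel]; exact hab.symm
  · rw [Fmap'_high ha hb hk1 hab.ne] at hfe
    rw [Sym2.eq_iff] at hfe
    rcases hfe with ⟨h1, h2⟩ | ⟨h1, h2⟩
    · subst h1; subst h2; exact Or.inr (Or.inr ⟨ha, hb, hab⟩)
    · subst h1; subst h2; exact Or.inr (Or.inr ⟨hb, ha, hab.symm⟩)

lemma Psi_noncrossing : Noncrossing (Psi G) := by
  intro a b c d hab hcd
  have h1 := Psi_adj_cases hn hT hnc hm hab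
  have h2 := Psi_adj_cases hn hT hnc hm hcd
  have h0 : (0 : ZMod n).val = 0 := ZMod.val_zero
  have hn1 : (-1 : ZMod n).val = n - 1 := val_neg_one' hn
  have hk1 : 1 ≤ m.val := m_val_pos hn hT hnc hm
  have hk2 : m.val ≤ n - 1 := m_val_le hn hT hnc hm
  have hva := ZMod.val_lt a
  have hvb := ZMod.val_lt b
  have hvc := ZMod.val_lt c
  have hvd := ZMod.val_lt d
  rintro ⟨hac, hcb, hbd⟩
  rcases h1 with (⟨rfl, rfl⟩ | ⟨rfl, rfl⟩) | ⟨ha1, hb1, hGab⟩ | ⟨ha1, hb1, hGab⟩ <;>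
    rcases h2 with (⟨rfl, rfl⟩ | ⟨rfl, rfl⟩) | ⟨hc1, hd1, hGcd⟩ | ⟨hc1, hd1, hGcd⟩ <;>
      try omega
  · -- low, low
    have hx := hnc _ _ _ _ hGab hGcd
    rw [val_add_one hn (by omega), val_add_one hn (by omega), val_add_one hn (by omega),
      val_add_one hn (by omega)] at hx
    omega
  · -- high, high
    exact hnc _ _ _ _ hGab hGcd ⟨hac, hcb, hbd⟩

lemma Psi_adj_zero : (Psi G).Adj 0 (-1 : ZMod n) := by
  rw [Psi_eq hn hT hnc hm, fromEdgeSet_adj]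
  refine ⟨⟨s((0 : ZMod n), m), G.mem_edgeSet.mpr (adj_zero_m hn hT hnc hm), Fmap'_special⟩, ?_⟩
  intro h
  have h2 := congrArg ZMod.val h
  rw [ZMod.val_zero, val_neg_one' hn] at h2
  omega

lemma Psi_reach_low : ∀ {u v : ZMod n} (_ : G.Walk u v), v = m → 1 ≤ u.val → u.val ≤ m.val →
    (Gdel (Psi G)).Reachable (u - 1) (m - 1) := by
  intro u v p
  induction p with
  | nil => intro hveq _ _; rw [hveq]
  | @cons u w _ huw p ih =>
    intro hveq hu1 hu2
    by_cases hum : u = m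
    · subst hum; exact Reachable.refl _
    have hu3 : u.val < m.val := by
      rcases lt_or_eq_of_le hu2 with h | h
      · exact h
      · exact absurd (val_inj' h) hum
    rcases edge_classify' hn hT hnc hm huw with hsp | ⟨_, _, hw1, hw2⟩ | ⟨hx, _⟩
    · exfalso
      rw [Sym2.eq_iff] at hsp
      rcases hsp with ⟨rfl, _⟩ | ⟨rfl, _⟩
      · rw [ZMod.val_zero] at hu1; omega
      · exact hum rfl
    · refine Reachable.trans ?_ (ih hveq hw1 hw2)
      refine Adj.reachable ?_
      rw [Gdel_adj]
      constructor
      · rw [Psi_eq hn hT hnc hm, fromEdgeSet_adj]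
        refine ⟨⟨s(u, w), G.mem_edgeSet.mpr huw, Fmap'_low hu1 hu2 hw1 hw2⟩, ?_⟩
        intro h
        exact huw.ne (by
          have := congrArg (fun z => z + 1) h
          simpa [sub_add_cancel] using this)
      · intro h
        have hvu : (u - 1).val = u.val - 1 := val_sub_one hn hu1
        have hvw : (w - 1).val = w.val - 1 := val_sub_one hn hw1
        have hn1 : (-1 : ZMod n).val = n - 1 := val_neg_one' hn
        have hk2 : m.val ≤ n - 1 := m_val_le hn hT hnc hm
        rw [Sym2.eq_iff] at h
        rcases h with ⟨_, h2⟩ | ⟨h2, _⟩ <;>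
        · have := congrArg ZMod.val h2
          omega
    · exfalso; omega

lemma Psi_reach_high : ∀ {u v : ZMod n} (_ : G.Walk u v), v = m → m.val ≤ u.val →
    (Gdel (Psi G)).Reachable u m := by
  intro u v p
  induction p with
  | nil => intro hveq _; rw [hveq]
  | @cons u w _ huw p ih =>
    intro hveq hu1
    by_cases hum : u = m
    · subst hum; exact Reachable.refl _
    have hu3 : m.val < u.val := by
      rcases lt_or_eq_of_le hu1 with h | h
      · exact h
      · exact absurd (val_inj' h.symm) hum
    have hk1 : 1 ≤ m.val := m_val_pos hn hT hnc hm
    rcases edge_classify' hn hT hnc hm huw with hsp | ⟨_, hx, _, _⟩ | ⟨_, hw1⟩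
    · exfalso
      rw [Sym2.eq_iff] at hsp
      rcases hsp with ⟨rfl, _⟩ | ⟨rfl, _⟩
      · rw [ZMod.val_zero] at hu3; omega
      · exact hum rfl
    · exfalso; omega
    · refine Reachable.trans ?_ (ih hveq hw1)
      refine Adj.reachable ?_
      rw [Gdel_adj]
      have hw0 : 1 ≤ w.val := by omega
      have hu0 : 1 ≤ u.val := by omega
      constructor
      · rw [Psi_eq hn hT hnc hm, fromEdgeSet_adj]
        exact ⟨⟨s(u, w), G.mem_edgeSet.mpr huw, Fmap'_high (by omega) hw1 hk1 huw.ne⟩, huw.ne⟩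
      · intro h
        have h0 : (0 : ZMod n).val = 0 := ZMod.val_zero
        rw [Sym2.eq_iff] at h
        rcases h with ⟨h2, _⟩ | ⟨_, h2⟩ <;>
        · have := congrArg ZMod.val h2
          omega

lemma Psi_connected : (Psi G).Connected := by
  rw [connected_iff]
  refine ⟨fun v w => ?_, inferInstance⟩
  suffices h : ∀ v : ZMod n, (Psi G).Reachable v (m - 1) by
    exact (h v).trans (h w).symm
  intro v
  have hk1 : 1 ≤ m.val := m_val_pos hn hT hnc hm
  have hk2 : m.val ≤ n - 1 := m_val_le hn hT hnc hm
  haveI : Fact (1 < n) := ⟨hn⟩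
  have hone : (1 : ZMod n).val = 1 := ZMod.val_one n
  have hreach0 : (Psi G).Reachable 0 (m - 1) := by
    obtain ⟨p⟩ := hT.isConnected.preconnected 1 m
    have := Psi_reach_low hn hT hnc hm p rfl (by omega) (by omega)
    rw [show (1 : ZMod n) - 1 = 0 by ring] at this
    exact this.mono (Gdel_le _)
  by_cases hv : v.val < m.val
  · by_cases hv0 : v = 0
    · subst hv0; exact hreach0
    · have hv1 : 1 ≤ v.val := by
        have := (ZMod.val_eq_zero v).not.mpr hv0
        omega
      obtain ⟨p⟩ := hT.isConnected.preconnected (v + 1) m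
      have hvv : (v + 1).val = v.val + 1 := val_add_one hn (by omega)
      have := Psi_reach_low hn hT hnc hm p rfl (by omega) (by omega)
      rw [add_sub_cancel_right] at this
      exact this.mono (Gdel_le _)
  · obtain ⟨p⟩ := hT.isConnected.preconnected v m
    have h1 := (Psi_reach_high hn hT hnc hm p rfl (by omega)).mono (Gdel_le _)
    obtain ⟨q⟩ := hT.isConnected.preconnected (-1 : ZMod n) m
    have h2 := (Psi_reach_high hn hT hnc hm q rfl (by
      rw [val_neg_one' hn]; omega)).mono (Gdel_le _)
    exact h1.trans (h2.symm.trans (((Psi_adj_zero hn hT hnc hm).symm.reachable).trans hreach0))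

lemma Psi_edgeSet : (Psi G).edgeSet = Fmap' n m.val '' G.edgeSet := by
  rw [Psi_eq hn hT hnc hm, edgeSet_fromEdgeSet]
  ext e
  simp only [Set.mem_diff, Set.mem_setOf_eq, and_iff_left_iff_imp]
  rintro ⟨e₀, he₀, rfl⟩
  induction e₀ using Sym2.ind with
  | _ a b =>
  have hab : G.Adj a b := G.mem_edgeSet.mp he₀
  have hk1 : 1 ≤ m.val := m_val_pos hn hT hnc hm
  have hn1 : (-1 : ZMod n).val = n - 1 := val_neg_one' hn
  rcases edge_classify' hn hT hnc hm hab with hsp | ⟨ha1, ha2, hb1, hb2⟩ | ⟨ha, hb⟩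
  · rw [hsp, Fmap'_special, Sym2.mem_diagSet, Sym2.isDiag_iff_proj_eq]
    intro h
    have h2 := congrArg ZMod.val h
    rw [ZMod.val_zero, hn1] at h2
    omega
  · rw [Fmap'_low ha1 ha2 hb1 hb2, Sym2.mem_diagSet, Sym2.isDiag_iff_proj_eq]
    intro h
    exact hab.ne (by
      have := congrArg (fun z => z + 1) h
      simpa [sub_add_cancel] using this)
  · rw [Fmap'_high ha hb hk1 hab.ne, Sym2.mem_diagSet, Sym2.isDiag_iff_proj_eq]
    exact hab.ne

lemma Fmap'_injOn : Set.InjOn (Fmap' n m.val) G.edgeSet := by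
  have hk1 : 1 ≤ m.val := m_val_pos hn hT hnc hm
  have hk2 : m.val ≤ n - 1 := m_val_le hn hT hnc hm
  have h0 : (0 : ZMod n).val = 0 := ZMod.val_zero
  have hn1 : (-1 : ZMod n).val = n - 1 := val_neg_one' hn
  intro e₁ h₁ e₂ h₂ heq
  induction e₁ using Sym2.ind with
  | _ a b =>
  induction e₂ using Sym2.ind with
  | _ c d =>
  have hab : G.Adj a b := G.mem_edgeSet.mp h₁
  have hcd : G.Adj c d := G.mem_edgeSet.mp h₂
  have hvab : a.val ≠ b.val := fun h => hab.ne (val_inj' h)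
  have hvcd : c.val ≠ d.val := fun h => hcd.ne (val_inj' h)
  rcases edge_classify' hn hT hnc hm hab with hsp1 | ⟨ha1, ha2, hb1, hb2⟩ | ⟨ha, hb⟩ <;>
    rcases edge_classify' hn hT hnc hm hcd with hsp2 | ⟨hc1, hc2, hd1, hd2⟩ | ⟨hc, hd⟩
  · rw [hsp1, hsp2]
  · rw [hsp1, Fmap'_special, Fmap'_low hc1 hc2 hd1 hd2, Sym2.eq_iff] at heq
    have hvc : (c - 1).val = c.val - 1 := val_sub_one hn hc1
    have hvd : (d - 1).val = d.val - 1 := val_sub_one hn hd1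
    exfalso
    rcases heq with ⟨_, h1⟩ | ⟨_, h1⟩
    · have := congrArg ZMod.val h1; omega
    · have := congrArg ZMod.val h1; omega
  · rw [hsp1, Fmap'_special, Fmap'_high hc hd hk1 hcd.ne, Sym2.eq_iff] at heq
    exfalso
    rcases heq with ⟨h1, _⟩ | ⟨h1, _⟩
    · have := congrArg ZMod.val h1; omega
    · have := congrArg ZMod.val h1; omega
  · rw [Fmap'_low ha1 ha2 hb1 hb2, hsp2, Fmap'_special, Sym2.eq_iff] at heq
    have hva : (a - 1).val = a.val - 1 := val_sub_one hn ha1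
    have hvb : (b - 1).val = b.val - 1 := val_sub_one hn hb1
    exfalso
    rcases heq with ⟨_, h1⟩ | ⟨h1, _⟩
    · have := congrArg ZMod.val h1; omega
    · have := congrArg ZMod.val h1; omega
  · rw [Fmap'_low ha1 ha2 hb1 hb2, Fmap'_low hc1 hc2 hd1 hd2, Sym2.eq_iff] at heq
    rw [Sym2.eq_iff]
    rcases heq with ⟨h1, h2⟩ | ⟨h1, h2⟩
    · refine Or.inl ⟨?_, ?_⟩
      · have := congrArg (fun z => z + 1) h1; simpa [sub_add_cancel] using this
      · have := congrArg (fun z => z + 1) h2; simpa [sub_add_cancel] using this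
    · refine Or.inr ⟨?_, ?_⟩
      · have := congrArg (fun z => z + 1) h1; simpa [sub_add_cancel] using this
      · have := congrArg (fun z => z + 1) h2; simpa [sub_add_cancel] using this
  · rw [Fmap'_low ha1 ha2 hb1 hb2, Fmap'_high hc hd hk1 hcd.ne, Sym2.eq_iff] at heq
    have hva : (a - 1).val = a.val - 1 := val_sub_one hn ha1
    have hvb : (b - 1).val = b.val - 1 := val_sub_one hn hb1
    exfalso
    rcases heq with ⟨h1, h2⟩ | ⟨h1, h2⟩ <;>
    · have e1 := congrArg ZMod.val h1
      have e2 := congrArg ZMod.val h2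
      omega
  · rw [Fmap'_high ha hb hk1 hab.ne, hsp2, Fmap'_special, Sym2.eq_iff] at heq
    exfalso
    rcases heq with ⟨h1, _⟩ | ⟨_, h1⟩
    · have := congrArg ZMod.val h1; omega
    · have := congrArg ZMod.val h1; omega
  · rw [Fmap'_high ha hb hk1 hab.ne, Fmap'_low hc1 hc2 hd1 hd2, Sym2.eq_iff] at heq
    have hvc : (c - 1).val = c.val - 1 := val_sub_one hn hc1
    have hvd : (d - 1).val = d.val - 1 := val_sub_one hn hd1
    exfalso
    rcases heq with ⟨h1, h2⟩ | ⟨h1, h2⟩ <;>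
    · have e1 := congrArg ZMod.val h1
      have e2 := congrArg ZMod.val h2
      omega
  · rw [Fmap'_high ha hb hk1 hab.ne, Fmap'_high hc hd hk1 hcd.ne] at heq
    exact heq

lemma Psi_isTree : (Psi G).IsTree := by
  classical
  refine ⟨Psi_connected hn hT hnc hm, ?_⟩
  apply isAcyclic_of_card _ (Psi_connected hn hT hnc hm)
  have hcount : (Psi G).edgeSet.ncard = G.edgeSet.ncard := by
    rw [Psi_edgeSet hn hT hnc hm,
      Set.ncard_image_of_injOn (Fmap'_injOn hn hT hnc hm)]
  have hGcard := hT.card_edgeFinset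
  rw [edgeFinset, ← Set.ncard_eq_toFinset_card'] at hGcard
  rw [hcount]
  omega

lemma kOf_Psi : kOf (Psi G) = m.val := by
  have hk1 : 1 ≤ m.val := m_val_pos hn hT hnc hm
  have hk2 : m.val ≤ n - 1 := m_val_le hn hT hnc hm
  haveI : Fact (1 < n) := ⟨hn⟩
  have hone : (1 : ZMod n).val = 1 := ZMod.val_one n
  have hT' : (Psi G).IsTree := Psi_isTree hn hT hnc hm
  have hnc' : Noncrossing (Psi G) := Psi_noncrossing hn hT hnc hm
  have hadj' : (Psi G).Adj 0 (-1) := Psi_adj_zero hn hT hnc hm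
  -- m is in the component of -1
  have hmC1 : C1 (Psi G) m := by
    obtain ⟨q⟩ := hT.isConnected.preconnected (-1 : ZMod n) m
    exact (Psi_reach_high hn hT hnc hm q rfl (by rw [val_neg_one' hn]; omega)).symm
  -- m - 1 is in the component of 0
  have hmC0 : C0 (Psi G) (m - 1) := by
    obtain ⟨p⟩ := hT.isConnected.preconnected 1 m
    have := Psi_reach_low hn hT hnc hm p rfl (by omega) (by omega)
    rw [show (1 : ZMod n) - 1 = 0 by ring] at this
    exact this.symm
  have h1 := (mem_C1_iff hn hT' hnc' hadj').mp hmC1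
  have h2 := (mem_C0_iff hn hT' hnc' hadj').mp hmC0
  rw [val_sub_one hn (by omega)] at h2
  omega

end PsiProps


/-! ### round trips -/

section RoundTrips

variable {G : SimpleGraph (ZMod n)} [NeZero n]

lemma roundtrip1 (hn : 2 ≤ n) (hT : G.IsTree) (hnc : Noncrossing G)
    (hadj : G.Adj 0 (-1 : ZMod n)) : Psi (Phi G) = G := by
  have hm1 : (Phi G).neighborSet 0 = {((kOf G : ℕ) : ZMod n)} := Phi_nbhd hn hT hnc hadj
  have hval : (((kOf G : ℕ)) : ZMod n).val = kOf G := kOf_val hn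
  have hk1 : 1 ≤ kOf G := kOf_pos hn hT hadj
  have hk2 : kOf G ≤ n - 1 := (kOf_spec (G := G) hn).2
  have himg : (Fmap' n (kOf G)) '' ((Fmap n (kOf G)) '' G.edgeSet) = G.edgeSet := by
    rw [← Set.image_comp]
    have hcong : ∀ e ∈ G.edgeSet, (Fmap' n (kOf G) ∘ Fmap n (kOf G)) e = id e := by
      intro e he
      induction e using Sym2.ind with
      | _ a b =>
      have hab : G.Adj a b := G.mem_edgeSet.mp he
      simp only [Function.comp_apply, id_eq]
      rcases edge_classify hn hT hnc hadj hab with hsp | ⟨ha, hb⟩ | ⟨ha, hb⟩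
      · rw [hsp, Fmap_special, Fmap'_special]
      · rw [Fmap_low hn ha hb hk2]
        have hva : (a + 1).val = a.val + 1 := val_add_one hn (by omega)
        have hvb : (b + 1).val = b.val + 1 := val_add_one hn (by omega)
        rw [Fmap'_low (by omega) (by omega) (by omega) (by omega),
          add_sub_cancel_right, add_sub_cancel_right]
      · rw [Fmap_high ha hb hk1, Fmap'_high ha hb hk1 hab.ne]
    rw [Set.image_congr hcong, Set.image_id]
  rw [Psi, mOf_eq hm1, hval, Phi_edgeSet hn hT hnc hadj, himg, fromEdgeSet_edgeSet]

lemma roundtrip2 (hn : 2 ≤ n) (hT : G.IsTree) (hnc : Noncrossing G)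
    {m : ZMod n} (hm : G.neighborSet 0 = {m}) : Phi (Psi G) = G := by
  have hk1 : 1 ≤ m.val := m_val_pos hn hT hnc hm
  have hk2 : m.val ≤ n - 1 := m_val_le hn hT hnc hm
  have hmm : ((m.val : ℕ) : ZMod n) = m := by rw [ZMod.natCast_val, ZMod.cast_id]
  have himg : (Fmap n m.val) '' ((Fmap' n m.val) '' G.edgeSet) = G.edgeSet := by
    rw [← Set.image_comp]
    have hcong : ∀ e ∈ G.edgeSet, (Fmap n m.val ∘ Fmap' n m.val) e = id e := by
      intro e he
      induction e using Sym2.ind with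
      | _ a b =>
      have hab : G.Adj a b := G.mem_edgeSet.mp he
      simp only [Function.comp_apply, id_eq]
      rcases edge_classify' hn hT hnc hm hab with hsp | ⟨ha1, ha2, hb1, hb2⟩ | ⟨ha, hb⟩
      · rw [hsp, Fmap'_special, Fmap_special, hmm]
      · rw [Fmap'_low ha1 ha2 hb1 hb2]
        have hva : (a - 1).val = a.val - 1 := val_sub_one hn ha1
        have hvb : (b - 1).val = b.val - 1 := val_sub_one hn hb1
        rw [Fmap_low hn (by omega) (by omega) hk2, sub_add_cancel, sub_add_cancel]
      · rw [Fmap'_high ha hb hk1 hab.ne, Fmap_high ha hb hk1]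
    rw [Set.image_congr hcong, Set.image_id]
  rw [Phi, kOf_Psi hn hT hnc hm, Psi_edgeSet hn hT hnc hm, himg, fromEdgeSet_edgeSet]

end RoundTrips

/-! ### the equivalence -/

noncomputable def theEquiv (n : ℕ) (hn : 2 ≤ n) [NeZero n] :
    {G : SimpleGraph (ZMod n) // IsNCTree G ∧ G.Adj 0 ((n - 1 : ℕ) : ZMod n)} ≃
    {G : SimpleGraph (ZMod n) // IsNCTree G ∧ (G.neighborSet 0).ncard = 1} where
  toFun g := ⟨Phi g.1, by
    obtain ⟨G0, ⟨hT, hnc⟩, hadj⟩ := g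
    rw [neg_one_eq hn] at hadj
    exact ⟨⟨Phi_isTree hn hT hnc hadj, Phi_noncrossing hn hT hnc hadj⟩, by
      rw [Phi_nbhd hn hT hnc hadj]; exact Set.ncard_singleton _⟩⟩
  invFun g := ⟨Psi g.1, by
    obtain ⟨G0, ⟨hT, hnc⟩, hcard⟩ := g
    obtain ⟨m, hm⟩ := Set.ncard_eq_one.mp hcard
    refine ⟨⟨Psi_isTree hn hT hnc hm, Psi_noncrossing hn hT hnc hm⟩, ?_⟩
    rw [neg_one_eq hn]
    exact Psi_adj_zero hn hT hnc hm⟩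
  left_inv g := by
    obtain ⟨G0, ⟨hT, hnc⟩, hadj⟩ := g
    apply Subtype.ext
    rw [neg_one_eq hn] at hadj
    exact roundtrip1 hn hT hnc hadj
  right_inv g := by
    obtain ⟨G0, ⟨hT, hnc⟩, hcard⟩ := g
    apply Subtype.ext
    obtain ⟨m, hm⟩ := Set.ncard_eq_one.mp hcard
    exact roundtrip2 hn hT hnc hm

end NCAux

theorem card_ncTrees_with_edge_one_n (n : ℕ) (hn : 2 ≤ n) :
    Nat.card {G : SimpleGraph (ZMod n) //
        IsNCTree G ∧ G.Adj 0 ((n - 1 : ℕ) : ZMod n)} = A₁ n := by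
  haveI : NeZero n := ⟨by omega⟩
  unfold A₁
  exact Nat.card_congr (NCAux.theEquiv n hn)
end
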